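/- arXiv:1912.08972 — 13 statements merged into one kernel-verified Lean document; each statement's English description precedes it below -/
import Mathlib

section
/- If there exists a Hadamard matrix of order n, then there exists a complete set of (n-1)^2 mutually orthogonal binary frequency squares of type F(n; n/2). -/
/-- A binary frequency square of type F(n; n/2): an n×n {0,1}-matrix with
exactly n/2 ones in every row and every column. -/
def IsFreqSquare (n : ℕ) (F : Fin n → Fin n → Fin 2) : Prop :=
  (∀ r : Fin n, (Finset.univ.filter fun c => F r c = 1).card = n / 2) ∧
  (∀ c : Fin n, (Finset.univ.filter fun r => F r c = 1).card = n / 2)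

/-- Two binary frequency squares are orthogonal if each ordered pair of symbols
occurs exactly n^2/4 times when the squares are superimposed. -/
def OrthFS (n : ℕ) (F G : Fin n → Fin n → Fin 2) : Prop :=
  ∀ a b : Fin 2,
    (Finset.univ.filter fun p : Fin n × Fin n =>
      F p.1 p.2 = a ∧ G p.1 p.2 = b).card = n ^ 2 / 4

/-- A set of k mutually orthogonal binary frequency squares of order n. -/
def IsMOFS (n k : ℕ) (F : Fin k → Fin n → Fin n → Fin 2) : Prop :=
  (∀ i, IsFreqSquare n (F i)) ∧ ∀ i j, i ≠ j → OrthFS n (F i) (F j)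



lemma two_mul_card {n : ℕ} (s : ℤ) (hs : s = 1 ∨ s = -1) (x : Fin n → ℤ)
    (hx : ∀ c, x c = 1 ∨ x c = -1) :
    2 * ((Finset.univ.filter fun c => x c = s).card : ℤ) = n + s * ∑ c, x c := by
  have h1 : ((Finset.univ.filter fun c => x c = s).card : ℤ)
      = ∑ c, (if x c = s then (1:ℤ) else 0) := by
    rw [Finset.card_filter]; push_cast; rfl
  rw [h1, Finset.mul_sum]
  have h2 : ∀ c : Fin n, 2 * (if x c = s then (1:ℤ) else 0) = 1 + s * x c := by
    intro c; rcases hx c with h | h <;> rcases hs with h' | h' <;>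
      simp [h, h']
  rw [Finset.sum_congr rfl fun c _ => h2 c, Finset.sum_add_distrib,
    Finset.sum_const, ← Finset.mul_sum]
  simp [mul_comm]

lemma prod_sum_aux {n : ℕ} (f g : Fin n → ℤ) :
    ∑ p : Fin n × Fin n, f p.1 * g p.2 = (∑ c, f c) * (∑ c, g c) := by
  rw [Finset.sum_mul_sum, ← Finset.univ_product_univ, Finset.sum_product]

lemma four_mul_card_pair {n : ℕ} (e d : ℤ) (he : e = 1 ∨ e = -1) (hd : d = 1 ∨ d = -1)
    (x y u v : Fin n → ℤ)
    (hx : ∀ c, x c = 1 ∨ x c = -1) (hy : ∀ c, y c = 1 ∨ y c = -1)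
    (hu : ∀ c, u c = 1 ∨ u c = -1) (hv : ∀ c, v c = 1 ∨ v c = -1) :
    4 * ((Finset.univ.filter fun p : Fin n × Fin n =>
        x p.1 * y p.2 = e ∧ u p.1 * v p.2 = d).card : ℤ)
      = (n:ℤ)^2 + e * ((∑ c, x c) * (∑ c, y c)) + d * ((∑ c, u c) * (∑ c, v c))
        + e * d * ((∑ c, x c * u c) * (∑ c, y c * v c)) := by
  have h1 : ((Finset.univ.filter fun p : Fin n × Fin n =>
      x p.1 * y p.2 = e ∧ u p.1 * v p.2 = d).card : ℤ)
      = ∑ p : Fin n × Fin n, (if x p.1 * y p.2 = e ∧ u p.1 * v p.2 = d then (1:ℤ) else 0) := by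
    rw [Finset.card_filter]; push_cast; rfl
  rw [h1, Finset.mul_sum]
  have h2 : ∀ p : Fin n × Fin n,
      4 * (if x p.1 * y p.2 = e ∧ u p.1 * v p.2 = d then (1:ℤ) else 0)
      = 1 + e * (x p.1 * y p.2) + d * (u p.1 * v p.2)
        + e * d * ((x p.1 * u p.1) * (y p.2 * v p.2)) := by
    intro p
    rcases hx p.1 with h1 | h1 <;> rcases hy p.2 with h2 | h2 <;>
      rcases hu p.1 with h3 | h3 <;> rcases hv p.2 with h4 | h4 <;>
      rcases he with h5 | h5 <;> rcases hd with h6 | h6 <;>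
      simp [h1, h2, h3, h4, h5, h6]
  rw [Finset.sum_congr rfl fun p _ => h2 p]
  rw [Finset.sum_add_distrib, Finset.sum_add_distrib, Finset.sum_add_distrib]
  rw [← Finset.mul_sum, ← Finset.mul_sum, ← Finset.mul_sum]
  rw [prod_sum_aux x y, prod_sum_aux u v, prod_sum_aux (fun c => x c * u c) (fun c => y c * v c)]
  simp [Finset.card_univ, sq]

/-- embed `Fin (n-1)` into `Fin n` avoiding `0`. -/
def femb (n : ℕ) (i : Fin (n - 1)) : Fin n := ⟨i.1 + 1, by omega⟩

lemma femb_inj (n : ℕ) : Function.Injective (femb n) := by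
  intro i j h
  have := congrArg Fin.val h
  simp only [femb] at this
  exact Fin.ext (by omega)

/-- decode an index into a pair. -/
def fdec (n : ℕ) (e : Fin ((n - 1) ^ 2)) : Fin (n - 1) × Fin (n - 1) :=
  finProdFinEquiv.symm (Fin.cast (by ring) e)

lemma fdec_inj (n : ℕ) : Function.Injective (fdec n) := by
  intro a b h
  have := finProdFinEquiv.symm.injective h
  exact Fin.cast_injective _ this

/-- the symbol value of `a : Fin 2` as a sign. -/
def sgn (a : Fin 2) : ℤ := if a = 1 then 1 else -1

lemma sgn_pm (a : Fin 2) : sgn a = 1 ∨ sgn a = -1 := by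
  unfold sgn; split <;> simp


/-- If there exists a Hadamard matrix of order n, then there exists a complete
set of (n-1)^2 mutually orthogonal binary frequency squares of type F(n; n/2). -/
theorem stmt_0 (n : ℕ) (H : Fin n → Fin n → ℤ)
    (hent : ∀ i j, H i j = 1 ∨ H i j = -1)
    (horth : ∀ i j : Fin n, i ≠ j → ∑ c, H i c * H j c = 0) :
    ∃ F : Fin ((n - 1) ^ 2) → Fin n → Fin n → Fin 2,
      IsMOFS n ((n - 1) ^ 2) F := by
  rcases Nat.eq_zero_or_pos n with hn | hn
  · subst hn
    exact ⟨fun i => (by simpa using i.2 : False).elim,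
      fun i => (by simpa using i.2 : False).elim,
      fun i => (by simpa using i.2 : False).elim⟩
  set z : Fin n := ⟨0, hn⟩ with hz
  set K : Fin n → Fin n → ℤ := fun i j => H i j * H z j with hK
  have hKent : ∀ i j, K i j = 1 ∨ K i j = -1 := by
    intro i j; rcases hent i j with h | h <;> rcases hent z j with h' | h' <;>
      simp [hK, h, h']
  have hKorth : ∀ i j, i ≠ j → ∑ c, K i c * K j c = 0 := by
    intro i j hij
    have hc : ∀ c, K i c * K j c = H i c * H j c := by
      intro c; rcases hent z c with h | h <;> simp [hK, h] <;> ring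
    rw [Finset.sum_congr rfl fun c _ => hc c]; exact horth i j hij
  have hKz : ∀ c, K z c = 1 := by
    intro c; rcases hent z c with h | h <;> simp [hK, h]
  have hKsum : ∀ i, i ≠ z → ∑ c, K i c = 0 := by
    intro i hi
    have := hKorth i z hi
    simpa [hKz] using this
  have hembz : ∀ i : Fin (n - 1), femb n i ≠ z := by
    intro i h
    have := congrArg Fin.val h
    simp [femb, hz] at this
  -- the construction
  refine ⟨fun e r c =>
    if K (femb n (fdec n e).1) r * K (femb n (fdec n e).2) c = 1 then 1 else 0, ?_, ?_⟩
  · -- frequency squares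
    intro e
    set i := (fdec n e).1
    set j := (fdec n e).2
    constructor
    · intro r
      have hfe : (Finset.univ.filter fun c =>
          (if K (femb n i) r * K (femb n j) c = 1 then (1 : Fin 2) else 0) = 1)
          = Finset.univ.filter fun c => K (femb n j) c = K (femb n i) r := by
        apply Finset.filter_congr
        intro c _
        rcases hKent (femb n i) r with h | h <;> rcases hKent (femb n j) c with h' | h' <;>
          simp [h, h']
      rw [hfe]
      have := two_mul_card (K (femb n i) r) (hKent _ _) (K (femb n j))
        (fun c => hKent _ _)
      rw [hKsum _ (hembz j)] at this
      have hN : 2 * (Finset.univ.filter fun c => K (femb n j) c = K (femb n i) r).card = n := by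
        exact_mod_cast by linarith [this]
      omega
    · intro c
      have hfe : (Finset.univ.filter fun r =>
          (if K (femb n i) r * K (femb n j) c = 1 then (1 : Fin 2) else 0) = 1)
          = Finset.univ.filter fun r => K (femb n i) r = K (femb n j) c := by
        apply Finset.filter_congr
        intro r _
        rcases hKent (femb n i) r with h | h <;> rcases hKent (femb n j) c with h' | h' <;>
          simp [h, h']
      rw [hfe]
      have := two_mul_card (K (femb n j) c) (hKent _ _) (K (femb n i))
        (fun r => hKent _ _)
      rw [hKsum _ (hembz i)] at this
      have hN : 2 * (Finset.univ.filter fun r => K (femb n i) r = K (femb n j) c).card = n := by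
        exact_mod_cast by linarith [this]
      omega
  · -- orthogonality
    intro e e' hee a b
    set i := (fdec n e).1 with hi
    set j := (fdec n e).2 with hj
    set i' := (fdec n e').1 with hi'
    set j' := (fdec n e').2 with hj'
    have hfe : (Finset.univ.filter fun p : Fin n × Fin n =>
        (if K (femb n i) p.1 * K (femb n j) p.2 = 1 then (1 : Fin 2) else 0) = a ∧
        (if K (femb n i') p.1 * K (femb n j') p.2 = 1 then (1 : Fin 2) else 0) = b)
        = Finset.univ.filter fun p : Fin n × Fin n =>
          K (femb n i) p.1 * K (femb n j) p.2 = sgn a ∧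
          K (femb n i') p.1 * K (femb n j') p.2 = sgn b := by
      apply Finset.filter_congr
      intro p _
      have e1 : K (femb n i) p.1 * K (femb n j) p.2 = 1 ∨
          K (femb n i) p.1 * K (femb n j) p.2 = -1 := by
        rcases hKent (femb n i) p.1 with h | h <;> rcases hKent (femb n j) p.2 with h' | h' <;>
          simp [h, h']
      have e2 : K (femb n i') p.1 * K (femb n j') p.2 = 1 ∨
          K (femb n i') p.1 * K (femb n j') p.2 = -1 := by
        rcases hKent (femb n i') p.1 with h | h <;> rcases hKent (femb n j') p.2 with h' | h' <;>
          simp [h, h']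
      fin_cases a <;> fin_cases b <;>
        rcases e1 with h1 | h1 <;> rcases e2 with h2 | h2 <;>
        simp [h1, h2, sgn]
    rw [hfe]
    have key := four_mul_card_pair (sgn a) (sgn b) (sgn_pm a) (sgn_pm b)
      (K (femb n i)) (K (femb n j)) (K (femb n i')) (K (femb n j'))
      (fun c => hKent _ _) (fun c => hKent _ _) (fun c => hKent _ _) (fun c => hKent _ _)
    rw [hKsum _ (hembz i), hKsum _ (hembz j), hKsum _ (hembz i'), hKsum _ (hembz j')] at key
    have hcross : (∑ c, K (femb n i) c * K (femb n i') c) *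
        (∑ c, K (femb n j) c * K (femb n j') c) = 0 := by
      have hpair : i ≠ i' ∨ j ≠ j' := by
        by_contra h
        push_neg at h
        apply hee
        apply fdec_inj n
        rw [← hi, ← hj] at *
        exact Prod.ext h.1 h.2
      rcases hpair with h | h
      · rw [hKorth _ _ (fun hh => h (femb_inj n hh))]; ring
      · rw [hKorth _ _ (fun hh => h (femb_inj n hh))]; ring
    rw [hcross] at key
    have hN : 4 * (Finset.univ.filter fun p : Fin n × Fin n =>
        K (femb n i) p.1 * K (femb n j) p.2 = sgn a ∧
        K (femb n i') p.1 * K (femb n j') p.2 = sgn b).card = n ^ 2 := by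
      exact_mod_cast by linarith [key]
    generalize hm : n ^ 2 = m at hN ⊢
    omega
end

section
/- A set of k mutually orthogonal binary frequency squares of order n satisfies a non-trivial relation if and only if some non-empty subset of the squares has a Z_2-sum (entrywise sum mod 2) that, up to permutation of rows and columns, consists of four constant blocks [[0,1],[1,0]] (blocks possibly degenerate). -/
lemma even_iff_zmod2 (m : ℕ) : Even m ↔ ((m : ZMod 2) = 0) := by
  rw [ZMod.natCast_eq_zero_iff, Nat.even_iff, Nat.dvd_iff_mod_eq_zero]

lemma zmod2_cases (x : ZMod 2) : x = 0 ∨ x = 1 := by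
  have : ∀ y : ZMod 2, y = 0 ∨ y = 1 := by decide
  exact this x

lemma ind_eq (x : Fin 2) (Y : Finset (Fin 2)) :
    (if x ∈ Y then (1:ZMod 2) else 0) =
      (if (0:Fin 2) ∈ Y then 1 else 0) +
      ((if (0:Fin 2) ∈ Y then 1 else 0) + (if (1:Fin 2) ∈ Y then (1:ZMod 2) else 0)) * (x.val : ZMod 2) := by
  fin_cases x <;>
    by_cases h0 : (0:Fin 2) ∈ Y <;> by_cases h1 : (1:Fin 2) ∈ Y <;>
      simp [h0, h1] <;> decide

lemma nontriv_fin2 (Y : Finset (Fin 2)) (h1 : Y ≠ ∅) (h2 : Y ≠ Finset.univ) :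
    ¬(((0:Fin 2) ∈ Y) ↔ ((1:Fin 2) ∈ Y)) := by
  revert h1 h2; revert Y; decide

lemma ind_single (x : Fin 2) :
    (if x ∈ ({1} : Finset (Fin 2)) then (1:ZMod 2) else 0) = (x.val : ZMod 2) := by
  fin_cases x <;> decide


/-- A k-MOFS(n) satisfies a non-trivial relation iff some non-empty subset of
the squares has a Z₂-sum which, up to permutation of rows and columns, has the
block structure [[0,1],[1,0]] (with possibly degenerate blocks); the latter is
expressed by the existence of a set R of rows and a set C of columns such that
the Z₂-sum is 0 exactly on cells (r,c) with r ∈ R ↔ c ∈ C. -/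
theorem stmt_2 (n k : ℕ) (F : Fin k → Fin n → Fin n → Fin 2)
    (h : IsMOFS n k F) :
    (∃ (X1 X2 : Finset (Fin n)) (X : Fin k → Finset (Fin 2)),
      (∀ r c : Fin n,
        Even ((if r ∈ X1 then 1 else 0) + (if c ∈ X2 then 1 else 0) +
          ∑ i, if F i r c ∈ X i then 1 else 0)) ∧
      ((X1 ≠ ∅ ∧ X1 ≠ Finset.univ) ∨ (X2 ≠ ∅ ∧ X2 ≠ Finset.univ) ∨
        ∃ i, X i ≠ ∅ ∧ X i ≠ Finset.univ))
    ↔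
    (∃ S : Finset (Fin k), S.Nonempty ∧ ∃ R C : Finset (Fin n),
      ∀ r c : Fin n,
        (∑ i ∈ S, ((F i r c).val : ZMod 2)) =
          if (r ∈ R ↔ c ∈ C) then 0 else 1) := by
  classical
  constructor
  · rintro ⟨X1, X2, X, heven, hnt⟩
    set S : Finset (Fin k) :=
      Finset.univ.filter (fun i => ¬(((0:Fin 2) ∈ X i) ↔ ((1:Fin 2) ∈ X i))) with hSdef
    set A : ZMod 2 := ∑ i, (if (0:Fin 2) ∈ X i then 1 else 0) with hAdef
    have key : ∀ r c : Fin n,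
        ((if r ∈ X1 then (1:ZMod 2) else 0) + (if c ∈ X2 then 1 else 0) + A)
          + ∑ i ∈ S, ((F i r c).val : ZMod 2) = 0 := by
      intro r c
      have h1 := (even_iff_zmod2 _).mp (heven r c)
      push_cast at h1
      have hrw : (∑ i, (if F i r c ∈ X i then (1:ZMod 2) else 0)) =
          ∑ i, ((if (0:Fin 2) ∈ X i then (1:ZMod 2) else 0) +
            ((if (0:Fin 2) ∈ X i then (1:ZMod 2) else 0) +
             (if (1:Fin 2) ∈ X i then (1:ZMod 2) else 0)) * ((F i r c).val : ZMod 2)) :=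
        Finset.sum_congr rfl (fun i _ => ind_eq (F i r c) (X i))
      rw [hrw, Finset.sum_add_distrib] at h1
      have hsplit : ∑ i, ((if (0:Fin 2) ∈ X i then (1:ZMod 2) else 0) +
             (if (1:Fin 2) ∈ X i then (1:ZMod 2) else 0)) * ((F i r c).val : ZMod 2)
          = ∑ i ∈ S, ((F i r c).val : ZMod 2) := by
        rw [hSdef, Finset.sum_filter]
        refine Finset.sum_congr rfl (fun i _ => ?_)
        by_cases h0 : (0:Fin 2) ∈ X i <;> by_cases h1 : (1:Fin 2) ∈ X i <;>
          simp [h0, h1, show ((1:ZMod 2)+1) = 0 by decide]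
      rw [hsplit, ← hAdef] at h1
      linear_combination h1
    have hSne : S.Nonempty := by
      rw [Finset.nonempty_iff_ne_empty]
      intro hSe
      have key0 : ∀ r c : Fin n,
          (if r ∈ X1 then (1:ZMod 2) else 0) + (if c ∈ X2 then 1 else 0) + A = 0 := by
        intro r c
        have hk := key r c
        rw [hSe] at hk
        simpa using hk
      rcases hnt with ⟨h1, h2⟩ | ⟨h1, h2⟩ | ⟨i, h1, h2⟩
      · obtain ⟨r, hr⟩ := Finset.nonempty_iff_ne_empty.mpr h1
        obtain ⟨r', hr'⟩ : ∃ r', r' ∉ X1 := by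
          by_contra hall
          push_neg at hall
          exact h2 (Finset.eq_univ_iff_forall.mpr hall)
        have e1 := key0 r r
        have e2 := key0 r' r
        rw [if_pos hr] at e1
        rw [if_neg hr'] at e2
        have : (1:ZMod 2) = 0 := by linear_combination e1 - e2
        exact one_ne_zero this
      · obtain ⟨c, hc⟩ := Finset.nonempty_iff_ne_empty.mpr h1
        obtain ⟨c', hc'⟩ : ∃ c', c' ∉ X2 := by
          by_contra hall
          push_neg at hall
          exact h2 (Finset.eq_univ_iff_forall.mpr hall)
        have e1 := key0 c c
        have e2 := key0 c c'
        rw [if_pos hc] at e1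
        rw [if_neg hc'] at e2
        have : (1:ZMod 2) = 0 := by linear_combination e1 - e2
        exact one_ne_zero this
      · have hi : i ∈ S := Finset.mem_filter.mpr ⟨Finset.mem_univ i, nontriv_fin2 _ h1 h2⟩
        rw [hSe] at hi
        exact absurd hi (Finset.notMem_empty i)
    refine ⟨S, hSne, X1, if A = 0 then X2 else X2ᶜ, fun r c => ?_⟩
    have hs := eq_neg_of_add_eq_zero_right (key r c)
    rw [hs]
    rcases zmod2_cases A with hA | hA <;>
      by_cases hr : r ∈ X1 <;> by_cases hc : c ∈ X2 <;>
        simp [hA, hr, hc] <;> decide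
  · rintro ⟨S, ⟨i0, hi0⟩, R, C, hsum⟩
    refine ⟨R, C, fun i => if i ∈ S then {1} else ∅, fun r c => ?_, ?_⟩
    · rw [even_iff_zmod2]
      push_cast
      have hst : ∑ i : Fin k,
          (if F i r c ∈ (if i ∈ S then ({1}:Finset (Fin 2)) else ∅) then (1:ZMod 2) else 0)
          = ∑ i ∈ S, ((F i r c).val : ZMod 2) := by
        have h1 : ∑ i : Fin k,
            (if F i r c ∈ (if i ∈ S then ({1}:Finset (Fin 2)) else ∅) then (1:ZMod 2) else 0)
            = ∑ i : Fin k, (if i ∈ S then ((F i r c).val : ZMod 2) else 0) := by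
          refine Finset.sum_congr rfl (fun i _ => ?_)
          by_cases hi : i ∈ S
          · rw [if_pos hi, if_pos hi]; exact ind_single _
          · rw [if_neg hi, if_neg hi]; simp
        rw [h1, Finset.sum_ite_mem, Finset.univ_inter]
      rw [hst, hsum r c]
      by_cases hr : r ∈ R <;> by_cases hc : c ∈ C <;> simp [hr, hc] <;> decide
    · right; right
      exact ⟨i0, by simp [hi0], by simp [hi0]⟩
end

section
/- Let F be a set of k mutually orthogonal binary frequency squares of order 2λ admitting a full relation (X_1,...,X_{k+2}) with X_c = {1} for c ≥ 3. Then |X_1| ≡ |X_2| ≡ λk (mod 2). -/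
/-- A full relation on a set of k binary frequency squares of order n:
a set X1 of rows and a set X2 of columns (with X_c = {1} for the symbol
columns) such that for every cell (r,c) the quantity
[r ∈ X1] + [c ∈ X2] + Σ_i F_i[r,c] is even. -/
def FullRelation (n k : ℕ) (F : Fin k → Fin n → Fin n → Fin 2)
    (X1 X2 : Finset (Fin n)) : Prop :=
  ∀ r c : Fin n,
    Even ((if r ∈ X1 then 1 else 0) + (if c ∈ X2 then 1 else 0) +
      ∑ i, (F i r c).val)

/-- If a k-MOFS(2λ) admits a full relation (X1, X2), then
|X1| ≡ |X2| ≡ λk (mod 2). -/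
theorem stmt_3 (lam k : ℕ)
    (F : Fin k → Fin (2 * lam) → Fin (2 * lam) → Fin 2)
    (hmofs : IsMOFS (2 * lam) k F)
    (X1 X2 : Finset (Fin (2 * lam)))
    (hrel : FullRelation (2 * lam) k F X1 X2) :
    X1.card % 2 = (lam * k) % 2 ∧ X2.card % 2 = (lam * k) % 2 := by
  rcases Nat.eq_zero_or_pos lam with h0 | hpos
  · subst h0
    have h1 : X1 = ∅ := Finset.eq_empty_of_forall_notMem fun x _ => absurd x.2 (by omega)
    have h2 : X2 = ∅ := Finset.eq_empty_of_forall_notMem fun x _ => absurd x.2 (by omega)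
    simp [h1, h2]
  obtain ⟨hfs, -⟩ := hmofs
  have hval : ∀ x : Fin 2, (x : ℕ) = if x = 1 then 1 else 0 := by decide
  have hrow : ∀ i r, ∑ c, (F i r c).val = lam := by
    intro i r
    have h := (hfs i).1 r
    calc ∑ c, (F i r c).val = ∑ c, (if F i r c = 1 then 1 else 0) :=
          Finset.sum_congr rfl fun c _ => hval _
      _ = (Finset.univ.filter fun c => F i r c = 1).card := by
          rw [Finset.sum_boole]; simp
      _ = lam := by rw [h]; omega
  have hcol : ∀ i c, ∑ r, (F i r c).val = lam := by
    intro i c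
    have h := (hfs i).2 c
    calc ∑ r, (F i r c).val = ∑ r, (if F i r c = 1 then 1 else 0) :=
          Finset.sum_congr rfl fun r _ => hval _
      _ = (Finset.univ.filter fun r => F i r c = 1).card := by
          rw [Finset.sum_boole]; simp
      _ = lam := by rw [h]; omega
  have hcardi : ∀ (X : Finset (Fin (2 * lam))),
      ∑ r : Fin (2 * lam), (if r ∈ X then 1 else 0) = X.card := by
    intro X
    rw [Finset.sum_boole]; simp [Finset.filter_univ_mem]
  constructor
  · -- sum relation over all rows, fixed column c0
    set c0 : Fin (2 * lam) := ⟨0, by omega⟩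
    have hsum : Even (∑ r : Fin (2 * lam),
        ((if r ∈ X1 then 1 else 0) + (if c0 ∈ X2 then 1 else 0) +
          ∑ i, (F i r c0).val)) := by
      apply Finset.even_sum; intro r _; exact hrel r c0
    have e1 : ∑ r : Fin (2 * lam),
        ((if r ∈ X1 then 1 else 0) + (if c0 ∈ X2 then 1 else 0) +
          ∑ i, (F i r c0).val)
        = X1.card + 2 * lam * (if c0 ∈ X2 then 1 else 0) + lam * k := by
      rw [Finset.sum_add_distrib, Finset.sum_add_distrib, hcardi,
        Finset.sum_const, Finset.sum_comm]
      simp [hcol, mul_comm, Finset.sum_const]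
    rw [e1] at hsum
    have h2 : Even (2 * lam * (if c0 ∈ X2 then 1 else 0)) :=
      ⟨lam * (if c0 ∈ X2 then 1 else 0), by ring⟩
    rcases hsum with ⟨m, hm⟩
    rcases h2 with ⟨p, hp⟩
    omega
  · set r0 : Fin (2 * lam) := ⟨0, by omega⟩
    have hsum : Even (∑ c : Fin (2 * lam),
        ((if r0 ∈ X1 then 1 else 0) + (if c ∈ X2 then 1 else 0) +
          ∑ i, (F i r0 c).val)) := by
      apply Finset.even_sum; intro c _; exact hrel r0 c
    have e1 : ∑ c : Fin (2 * lam),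
        ((if r0 ∈ X1 then 1 else 0) + (if c ∈ X2 then 1 else 0) +
          ∑ i, (F i r0 c).val)
        = 2 * lam * (if r0 ∈ X1 then 1 else 0) + X2.card + lam * k := by
      rw [Finset.sum_add_distrib, Finset.sum_add_distrib, hcardi,
        Finset.sum_const, Finset.sum_comm]
      simp [hrow, mul_comm, Finset.sum_const]
    rw [e1] at hsum
    have h2 : Even (2 * lam * (if r0 ∈ X1 then 1 else 0)) :=
      ⟨lam * (if r0 ∈ X1 then 1 else 0), by ring⟩
    rcases hsum with ⟨m, hm⟩
    rcases h2 with ⟨p, hp⟩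
    omega
end

section
/- Suppose k and λ are both odd, and F is a set of k mutually orthogonal binary frequency squares of order 2λ satisfying a full relation. Then F is maximal: there is no binary frequency square of type F(2λ; λ) orthogonal to every square in F. -/
/-- If k and λ are both odd and a k-MOFS(2λ) satisfies a full relation,
then it is maximal: no frequency square of type F(2λ;λ) is orthogonal to
every square in the set. -/
theorem stmt_4 (lam k : ℕ) (hlam : Odd lam) (hk : Odd k)
    (F : Fin k → Fin (2 * lam) → Fin (2 * lam) → Fin 2)
    (hmofs : IsMOFS (2 * lam) k F)
    (X1 X2 : Finset (Fin (2 * lam)))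
    (hrel : FullRelation (2 * lam) k F X1 X2) :
    ¬ ∃ G : Fin (2 * lam) → Fin (2 * lam) → Fin 2,
        IsFreqSquare (2 * lam) G ∧ ∀ i, OrthFS (2 * lam) (F i) G := by
  rintro ⟨G, hG, horth⟩
  have hk1 : 0 < k := hk.pos
  set i0 : Fin k := ⟨0, hk1⟩ with hi0
  -- basic cast facts
  have ecast : ∀ m : ℕ, Even m → ((m : ℕ) : ZMod 2) = 0 := by
    intro m hm
    have : (2 : ℕ) ∣ m := even_iff_two_dvd.mp hm
    exact (ZMod.natCast_eq_zero_iff m 2).mpr this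
  have lcast : ((lam : ℕ) : ZMod 2) = 1 := by
    have h1 : lam % 2 = 1 := Nat.odd_iff.mp hlam
    rw [← ZMod.natCast_mod, h1]; rfl
  have kcast : ((k : ℕ) : ZMod 2) = 1 := by
    have h1 : k % 2 = 1 := Nat.odd_iff.mp hk
    rw [← ZMod.natCast_mod, h1]; rfl
  have hdiv : (2 * lam) ^ 2 / 4 = lam ^ 2 := by
    have : (2 * lam) ^ 2 = 4 * lam ^ 2 := by ring
    omega
  have hhalf : (2 * lam) / 2 = lam := by omega
  have val_ite : ∀ v : Fin 2, v.val = if v = 1 then 1 else 0 := by decide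
  have mul_ite2 : ∀ v w : Fin 2, v.val * w.val = if v = 1 ∧ w = 1 then 1 else 0 := by decide
  -- orthogonality as a sum
  have pair_sum : ∀ H K : Fin (2 * lam) → Fin (2 * lam) → Fin 2, OrthFS (2 * lam) H K →
      ∑ r, ∑ c, (H r c).val * (K r c).val = lam ^ 2 := by
    intro H K h
    have h11 := h 1 1
    rw [hdiv, Finset.card_filter, Fintype.sum_prod_type] at h11
    rw [← h11]
    exact Finset.sum_congr rfl fun r _ => Finset.sum_congr rfl fun c _ => mul_ite2 _ _
  -- row/column sums of a frequency square
  have row_sum : ∀ H : Fin (2 * lam) → Fin (2 * lam) → Fin 2, IsFreqSquare (2 * lam) H →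
      ∀ r, ∑ c, (H r c).val = lam := by
    intro H hH r
    have h := hH.1 r
    rw [hhalf, Finset.card_filter] at h
    exact (Finset.sum_congr rfl fun c _ => val_ite _).trans h
  have col_sum : ∀ H : Fin (2 * lam) → Fin (2 * lam) → Fin 2, IsFreqSquare (2 * lam) H →
      ∀ c, ∑ r, (H r c).val = lam := by
    intro H hH c
    have h := hH.2 c
    rw [hhalf, Finset.card_filter] at h
    exact (Finset.sum_congr rfl fun r _ => val_ite _).trans h
  -- the full relation in ZMod 2
  have hin : ∀ r c, ((∑ i, (F i r c).val : ℕ) : ZMod 2) =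
      (if r ∈ X1 then 1 else 0) + (if c ∈ X2 then 1 else 0) := by
    intro r c
    have h := ecast _ (hrel r c)
    push_cast at h
    have hs : ((∑ i, (F i r c).val : ℕ) : ZMod 2) = ∑ i, ((F i r c).val : ZMod 2) := by
      push_cast; ring
    rw [hs]
    have hne : (∑ i, ((F i r c).val : ZMod 2)) =
        -(((if r ∈ X1 then 1 else 0) : ZMod 2) + (if c ∈ X2 then 1 else 0)) :=
      eq_neg_of_add_eq_zero_right h
    rw [hne, CharTwo.neg_eq]
  -- main parity identity
  have main : ∀ H : Fin (2 * lam) → Fin (2 * lam) → Fin 2,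
      (∀ r, ∑ c, (H r c).val = lam) → (∀ c, ∑ r, (H r c).val = lam) →
      ((∑ r, ∑ c, (H r c).val * ∑ i, (F i r c).val : ℕ) : ZMod 2) =
        (lam : ZMod 2) * ((X1.card : ZMod 2) + (X2.card : ZMod 2)) := by
    intro H hrow hcol
    push_cast
    calc (∑ r, ∑ c, ((H r c).val : ZMod 2) * (∑ i, ((F i r c).val : ZMod 2)))
        = ∑ r, ∑ c, ((H r c).val : ZMod 2) *
            ((if r ∈ X1 then 1 else 0) + (if c ∈ X2 then 1 else 0)) := by
          refine Finset.sum_congr rfl fun r _ => Finset.sum_congr rfl fun c _ => ?_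
          congr 1
          rw [← hin r c]; push_cast; ring
      _ = (∑ r, ∑ c, ((H r c).val : ZMod 2) * (if r ∈ X1 then 1 else 0)) +
          (∑ r, ∑ c, ((H r c).val : ZMod 2) * (if c ∈ X2 then 1 else 0)) := by
          simp only [mul_add, Finset.sum_add_distrib]
      _ = (lam : ZMod 2) * ((X1.card : ZMod 2) + (X2.card : ZMod 2)) := by
          rw [Finset.sum_comm (f := fun r c => ((H r c).val : ZMod 2) * (if c ∈ X2 then 1 else 0))]
          have e1 : ∀ r : Fin (2 * lam), ∑ c, ((H r c).val : ZMod 2) * (if r ∈ X1 then 1 else 0)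
              = (lam : ZMod 2) * (if r ∈ X1 then 1 else 0) := by
            intro r
            rw [← Finset.sum_mul]
            congr 1
            rw [← Nat.cast_sum, hrow r]
          have e2 : ∀ c : Fin (2 * lam), ∑ r, ((H r c).val : ZMod 2) * (if c ∈ X2 then 1 else 0)
              = (lam : ZMod 2) * (if c ∈ X2 then 1 else 0) := by
            intro c
            rw [← Finset.sum_mul]
            congr 1
            rw [← Nat.cast_sum, hcol c]
          simp only [e1, e2, ← Finset.mul_sum]
          have s1 : (∑ r : Fin (2 * lam), (if r ∈ X1 then (1 : ZMod 2) else 0)) = (X1.card : ZMod 2) := by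
            rw [Finset.sum_ite_mem, Finset.univ_inter, Finset.sum_const, nsmul_eq_mul, mul_one]
          have s2 : (∑ c : Fin (2 * lam), (if c ∈ X2 then (1 : ZMod 2) else 0)) = (X2.card : ZMod 2) := by
            rw [Finset.sum_ite_mem, Finset.univ_inter, Finset.sum_const, nsmul_eq_mul, mul_one]
          rw [s1, s2, mul_add]
  -- reorganizing the double sum
  have swap : ∀ H : Fin (2 * lam) → Fin (2 * lam) → Fin 2,
      ∑ r, ∑ c, (H r c).val * ∑ i, (F i r c).val =
      ∑ i, ∑ r, ∑ c, (H r c).val * (F i r c).val := by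
    intro H
    simp only [Finset.mul_sum]
    calc (∑ r, ∑ c, ∑ i, (H r c).val * (F i r c).val)
        = ∑ r, ∑ i, ∑ c, (H r c).val * (F i r c).val :=
          Finset.sum_congr rfl fun r _ => Finset.sum_comm
      _ = ∑ i, ∑ r, ∑ c, (H r c).val * (F i r c).val := Finset.sum_comm
  -- value for G
  have hGval : ((∑ r, ∑ c, (G r c).val * ∑ i, (F i r c).val : ℕ) : ZMod 2) = 1 := by
    rw [swap]
    have : ∀ i : Fin k, ∑ r, ∑ c, (G r c).val * (F i r c).val = lam ^ 2 := by
      intro i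
      rw [show (∑ r, ∑ c, (G r c).val * (F i r c).val) = ∑ r, ∑ c, (F i r c).val * (G r c).val from
        Finset.sum_congr rfl fun r _ => Finset.sum_congr rfl fun c _ => mul_comm _ _]
      exact pair_sum _ _ (horth i)
    simp only [this]
    push_cast
    rw [Finset.sum_const, Finset.card_univ, Fintype.card_fin, nsmul_eq_mul, kcast, lcast]
    ring
  -- value for F i0
  have hFval : ((∑ r, ∑ c, (F i0 r c).val * ∑ i, (F i r c).val : ℕ) : ZMod 2) = 0 := by
    rw [swap]
    push_cast
    have hterm : ∀ i : Fin k, ((∑ r, ∑ c, ((F i0 r c).val * (F i r c).val) : ℕ) : ZMod 2) =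
        if i = i0 then 0 else 1 := by
      intro i
      by_cases h : i = i0
      · rw [if_pos h, h]
        have sq : ∀ v : Fin 2, v.val * v.val = v.val := by decide
        simp only [sq]
        apply ecast
        have he : (∑ r, ∑ c, (F i0 r c).val) = ∑ r : Fin (2 * lam), lam :=
          Finset.sum_congr rfl fun r _ => row_sum _ (hmofs.1 i0) r
        rw [he, Finset.sum_const, Finset.card_univ, Fintype.card_fin, smul_eq_mul]
        exact ⟨lam * lam, by ring⟩
      · rw [pair_sum _ _ (hmofs.2 i0 i (Ne.symm h))]
        push_cast
        rw [lcast]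
        simp [h]
    rw [show (∑ i : Fin k, ∑ r, ∑ c, (((F i0 r c).val : ZMod 2) * ((F i r c).val : ZMod 2))) =
        ∑ i : Fin k, ((∑ r, ∑ c, ((F i0 r c).val * (F i r c).val) : ℕ) : ZMod 2) from
      Finset.sum_congr rfl fun i _ => by push_cast; ring]
    simp only [hterm]
    rw [show (∑ i : Fin k, (if i = i0 then (0 : ZMod 2) else 1)) =
        ∑ i : Fin k, (1 + if i = i0 then (1 : ZMod 2) else 0) from
      Finset.sum_congr rfl fun i _ => by split_ifs <;> decide]
    rw [Finset.sum_add_distrib, Finset.sum_const, Finset.card_univ, Fintype.card_fin,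
      Finset.sum_ite_eq' Finset.univ i0 (fun _ => (1 : ZMod 2))]
    simp only [Finset.mem_univ, if_true, nsmul_eq_mul, mul_one, kcast]
    decide
  have h0 := (main (F i0) (row_sum _ (hmofs.1 i0)) (col_sum _ (hmofs.1 i0))).symm.trans hFval
  have h1 := (main G (row_sum _ hG) (col_sum _ hG)).symm.trans hGval
  rw [h0] at h1
  exact absurd h1 (by decide)
end

section
/- If λ is odd and k ≡ 2 or 3 (mod 4), then no set of k mutually orthogonal binary frequency squares of order 2λ satisfies a full relation. -/
lemma aux_val (v : Fin 2) : v.val = if v = 1 then 1 else 0 := by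
  fin_cases v <;> simp

lemma aux_mul (u v : Fin 2) : u.val * v.val = if u = 1 ∧ v = 1 then 1 else 0 := by
  fin_cases u <;> fin_cases v <;> simp

lemma aux_sq_mod (x y : ℕ) (h : x % 2 = y % 2) : x ^ 2 % 4 = y ^ 2 % 4 := by
  rcases Nat.even_or_odd x with hx | hx
  · obtain ⟨u, hu⟩ := hx
    have hy : y % 2 = 0 := by omega
    obtain ⟨v, hv⟩ : ∃ v, y = 2 * v := ⟨y / 2, by omega⟩
    have h1 : x ^ 2 = 4 * u ^ 2 := by subst hu; ring
    have h2 : y ^ 2 = 4 * v ^ 2 := by subst hv; ring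
    omega
  · obtain ⟨u, hu⟩ := hx
    have hy : y % 2 = 1 := by omega
    obtain ⟨v, hv⟩ : ∃ v, y = 2 * v + 1 := ⟨y / 2, by omega⟩
    have h1 : x ^ 2 = 4 * (u ^ 2 + u) + 1 := by subst hu; ring
    have h2 : y ^ 2 = 4 * (v ^ 2 + v) + 1 := by subst hv; ring
    omega


/-- If λ is odd and k ≡ 2 or 3 (mod 4), then no k-MOFS(2λ) satisfies a
full relation. -/
theorem stmt_5 (lam k : ℕ) (hlam : Odd lam) (hk : k % 4 = 2 ∨ k % 4 = 3)
    (F : Fin k → Fin (2 * lam) → Fin (2 * lam) → Fin 2)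
    (hmofs : IsMOFS (2 * lam) k F) :
    ¬ ∃ X1 X2 : Finset (Fin (2 * lam)), FullRelation (2 * lam) k F X1 X2 := by
  rintro ⟨X1, X2, hrel⟩
  obtain ⟨hfs, horth⟩ := hmofs
  obtain ⟨m, hm⟩ := hlam
  have hlam1 : 1 ≤ lam := by omega
  set a := X1.card with ha
  set b := X2.card with hb
  -- row and column sums of each square
  have hrow : ∀ i (r : Fin (2 * lam)), ∑ c, (F i r c).val = lam := by
    intro i r
    have h1 := (hfs i).1 r
    calc ∑ c, (F i r c).val = ∑ c, if F i r c = 1 then 1 else 0 :=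
          Finset.sum_congr rfl fun c _ => aux_val _
      _ = lam := by rw [← Finset.card_filter]; rw [h1]; omega
  have hcol : ∀ i (c : Fin (2 * lam)), ∑ r, (F i r c).val = lam := by
    intro i c
    have h1 := (hfs i).2 c
    calc ∑ r, (F i r c).val = ∑ r, if F i r c = 1 then 1 else 0 :=
          Finset.sum_congr rfl fun r _ => aux_val _
      _ = lam := by rw [← Finset.card_filter]; rw [h1]; omega
  -- indicator sums
  have hindX1 : ∑ r : Fin (2 * lam), (if r ∈ X1 then 1 else 0) = a := by
    rw [Finset.sum_ite_mem, Finset.univ_inter, Finset.sum_const, smul_eq_mul, mul_one]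
  have hindX2 : ∑ c : Fin (2 * lam), (if c ∈ X2 then 1 else 0) = b := by
    rw [Finset.sum_ite_mem, Finset.univ_inter, Finset.sum_const, smul_eq_mul, mul_one]
  -- total sum over a square
  have htot : ∀ i, ∑ p : Fin (2 * lam) × Fin (2 * lam), (F i p.1 p.2).val = 2 * lam ^ 2 := by
    intro i
    rw [Fintype.sum_prod_type]
    calc ∑ r : Fin (2 * lam), ∑ c : Fin (2 * lam), (F i r c).val
        = ∑ _r : Fin (2 * lam), lam := Finset.sum_congr rfl fun r _ => hrow i r
      _ = 2 * lam ^ 2 := by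
          rw [Finset.sum_const, smul_eq_mul, Finset.card_univ, Fintype.card_fin]
          ring
  -- orthogonality sums
  have horthsum : ∀ i j, i ≠ j →
      ∑ p : Fin (2 * lam) × Fin (2 * lam), (F i p.1 p.2).val * (F j p.1 p.2).val = lam ^ 2 := by
    intro i j hij
    have h1 := horth i j hij 1 1
    calc ∑ p : Fin (2 * lam) × Fin (2 * lam), (F i p.1 p.2).val * (F j p.1 p.2).val
        = ∑ p : Fin (2 * lam) × Fin (2 * lam), if F i p.1 p.2 = 1 ∧ F j p.1 p.2 = 1 then 1 else 0 :=
          Finset.sum_congr rfl fun p _ => aux_mul _ _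
      _ = lam ^ 2 := by
          rw [← Finset.card_filter]; rw [h1]
          have : (2 * lam) ^ 2 = 4 * lam ^ 2 := by ring
          omega
  -- the big sum T
  have hT : ∑ p : Fin (2 * lam) × Fin (2 * lam), (∑ i, (F i p.1 p.2).val) ^ 2 = k * (k + 1) * lam ^ 2 := by
    have step1 : ∀ p : Fin (2 * lam) × Fin (2 * lam), (∑ i, (F i p.1 p.2).val) ^ 2
        = ∑ i, ∑ j, (F i p.1 p.2).val * (F j p.1 p.2).val := by
      intro p
      rw [sq, Finset.sum_mul_sum]
    calc ∑ p : Fin (2 * lam) × Fin (2 * lam), (∑ i, (F i p.1 p.2).val) ^ 2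
        = ∑ p : Fin (2 * lam) × Fin (2 * lam), ∑ i, ∑ j, (F i p.1 p.2).val * (F j p.1 p.2).val :=
          Finset.sum_congr rfl fun p _ => step1 p
      _ = ∑ i, ∑ p : Fin (2 * lam) × Fin (2 * lam), ∑ j, (F i p.1 p.2).val * (F j p.1 p.2).val :=
          Finset.sum_comm
      _ = ∑ i, ∑ j, ∑ p : Fin (2 * lam) × Fin (2 * lam), (F i p.1 p.2).val * (F j p.1 p.2).val :=
          Finset.sum_congr rfl fun i _ => Finset.sum_comm
      _ = ∑ _i : Fin k, (k + 1) * lam ^ 2 := by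
          refine Finset.sum_congr rfl fun i _ => ?_
          rw [← Finset.add_sum_erase _ _ (Finset.mem_univ i)]
          have hdiag : ∑ p : Fin (2 * lam) × Fin (2 * lam), (F i p.1 p.2).val * (F i p.1 p.2).val
              = 2 * lam ^ 2 := by
            rw [← htot i]
            refine Finset.sum_congr rfl fun p _ => ?_
            have : (F i p.1 p.2).val = 0 ∨ (F i p.1 p.2).val = 1 := by omega
            rcases this with h | h <;> rw [h]
          have hoff : ∑ j ∈ Finset.univ.erase i,
              ∑ p : Fin (2 * lam) × Fin (2 * lam), (F i p.1 p.2).val * (F j p.1 p.2).val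
              = (k - 1) * lam ^ 2 := by
            rw [Finset.sum_congr rfl fun j hj =>
              horthsum i j (Ne.symm (Finset.ne_of_mem_erase hj))]
            rw [Finset.sum_const, smul_eq_mul, Finset.card_erase_of_mem (Finset.mem_univ i),
              Finset.card_univ, Fintype.card_fin]
          rw [hdiag, hoff]
          have hk1 : 1 ≤ k := by omega
          have : 2 * lam ^ 2 + (k - 1) * lam ^ 2 = (k + 1) * lam ^ 2 := by
            obtain ⟨t, ht⟩ := Nat.exists_eq_add_of_le hk1
            subst ht
            have h1t : 1 + t - 1 = t := by omega
            rw [h1t]; ring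
          exact this
      _ = k * (k + 1) * lam ^ 2 := by
          rw [Finset.sum_const, smul_eq_mul, Finset.card_univ, Fintype.card_fin]; ring
  -- per-cell parity
  have hpar : ∀ r c : Fin (2 * lam), (∑ i, (F i r c).val) % 2
      = ((if r ∈ X1 then 1 else 0) + (if c ∈ X2 then 1 else 0)) % 2 := by
    intro r c
    have := hrel r c
    rw [Nat.even_iff] at this
    omega
  -- the epsilon sum E
  have hE : ∑ p : Fin (2 * lam) × Fin (2 * lam),
      ((if p.1 ∈ X1 then 1 else 0) + (if p.2 ∈ X2 then 1 else 0)) ^ 2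
      = 2 * lam * a + 2 * lam * b + 2 * a * b := by
    have step : ∀ p : Fin (2 * lam) × Fin (2 * lam),
        ((if p.1 ∈ X1 then 1 else 0) + (if p.2 ∈ X2 then 1 else 0)) ^ 2
        = (if p.1 ∈ X1 then 1 else 0) + (if p.2 ∈ X2 then 1 else 0)
          + 2 * ((if p.1 ∈ X1 then 1 else 0) * (if p.2 ∈ X2 then 1 else 0)) := by
      intro p
      by_cases h1 : p.1 ∈ X1 <;> by_cases h2 : p.2 ∈ X2 <;> simp [h1, h2]
    rw [Finset.sum_congr rfl fun p _ => step p]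
    rw [Finset.sum_add_distrib, Finset.sum_add_distrib]
    rw [Fintype.sum_prod_type, Fintype.sum_prod_type, Fintype.sum_prod_type]
    have e1 : ∑ r : Fin (2 * lam), ∑ _c : Fin (2 * lam), (if r ∈ X1 then 1 else 0) = 2 * lam * a := by
      rw [Finset.sum_congr rfl fun r _ => by
        rw [Finset.sum_const, smul_eq_mul, Finset.card_univ, Fintype.card_fin]]
      rw [← Finset.mul_sum, hindX1]
    have e2 : ∑ _r : Fin (2 * lam), ∑ c : Fin (2 * lam), (if c ∈ X2 then 1 else 0) = 2 * lam * b := by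
      rw [Finset.sum_congr rfl fun r _ => hindX2]
      rw [Finset.sum_const, smul_eq_mul, Finset.card_univ, Fintype.card_fin]
    have e3 : ∑ r : Fin (2 * lam), ∑ c : Fin (2 * lam),
        2 * ((if r ∈ X1 then 1 else 0) * (if c ∈ X2 then 1 else 0)) = 2 * a * b := by
      have : ∀ r : Fin (2 * lam), ∑ c : Fin (2 * lam),
          2 * ((if r ∈ X1 then 1 else 0) * (if c ∈ X2 then 1 else 0))
          = 2 * ((if r ∈ X1 then 1 else 0) * b) := by
        intro r
        rw [← Finset.mul_sum, ← Finset.mul_sum, hindX2]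
      rw [Finset.sum_congr rfl fun r _ => this r, ← Finset.mul_sum]
      have : ∑ r : Fin (2 * lam), (if r ∈ X1 then 1 else 0) * b
          = (∑ r : Fin (2 * lam), if r ∈ X1 then 1 else 0) * b := by
        rw [Finset.sum_mul]
      rw [this, hindX1]; ring
    rw [e1, e2, e3]
  -- T ≡ E mod 4
  have hTE : (k * (k + 1) * lam ^ 2) % 4 = (2 * lam * a + 2 * lam * b + 2 * a * b) % 4 := by
    rw [← hT, ← hE, Finset.sum_nat_mod, Finset.sum_nat_mod _ 4
      (fun p : Fin (2 * lam) × Fin (2 * lam) =>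
        ((if p.1 ∈ X1 then 1 else 0) + (if p.2 ∈ X2 then 1 else 0)) ^ 2)]
    congr 1
    exact Finset.sum_congr rfl fun p _ => aux_sq_mod _ _ (hpar p.1 p.2)
  -- parity of b via a row sum
  have hnpos : 0 < 2 * lam := by omega
  have hbpar : (k + b) % 2 = 0 := by
    set r0 : Fin (2 * lam) := ⟨0, hnpos⟩
    have hs : ∑ c, (∑ i, (F i r0 c).val) = k * lam := by
      rw [Finset.sum_comm]
      rw [Finset.sum_congr rfl fun i _ => hrow i r0]
      rw [Finset.sum_const, smul_eq_mul, Finset.card_univ, Fintype.card_fin]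
    have he : ∑ c : Fin (2 * lam), ((if r0 ∈ X1 then 1 else 0) + (if c ∈ X2 then 1 else 0))
        = 2 * lam * (if r0 ∈ X1 then 1 else 0) + b := by
      rw [Finset.sum_add_distrib, hindX2, Finset.sum_const, smul_eq_mul,
        Finset.card_univ, Fintype.card_fin]
    have hmod : (∑ c, (∑ i, (F i r0 c).val)) % 2
        = (∑ c : Fin (2 * lam), ((if r0 ∈ X1 then 1 else 0) + (if c ∈ X2 then 1 else 0))) % 2 := by
      rw [Finset.sum_nat_mod, Finset.sum_nat_mod _ 2
        (fun c : Fin (2 * lam) => (if r0 ∈ X1 then 1 else 0) + (if c ∈ X2 then 1 else 0))]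
      congr 1
      exact Finset.sum_congr rfl fun c _ => hpar r0 c
    rw [hs, he] at hmod
    have h1 : k * lam = 2 * (k * m) + k := by rw [hm]; ring
    have h2 : ∀ x : ℕ, 2 * lam * x = 2 * (lam * x) := by intro x; ring
    rw [h1, h2] at hmod
    omega
  -- parity of a via a column sum
  have hapar : (k + a) % 2 = 0 := by
    set c0 : Fin (2 * lam) := ⟨0, hnpos⟩
    have hs : ∑ r, (∑ i, (F i r c0).val) = k * lam := by
      rw [Finset.sum_comm]
      rw [Finset.sum_congr rfl fun i _ => hcol i c0]
      rw [Finset.sum_const, smul_eq_mul, Finset.card_univ, Fintype.card_fin]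
    have he : ∑ r : Fin (2 * lam), ((if r ∈ X1 then 1 else 0) + (if c0 ∈ X2 then 1 else 0))
        = a + 2 * lam * (if c0 ∈ X2 then 1 else 0) := by
      rw [Finset.sum_add_distrib, hindX1, Finset.sum_const, smul_eq_mul,
        Finset.card_univ, Fintype.card_fin]
    have hmod : (∑ r, (∑ i, (F i r c0).val)) % 2
        = (∑ r : Fin (2 * lam), ((if r ∈ X1 then 1 else 0) + (if c0 ∈ X2 then 1 else 0))) % 2 := by
      rw [Finset.sum_nat_mod, Finset.sum_nat_mod _ 2
        (fun r : Fin (2 * lam) => (if r ∈ X1 then 1 else 0) + (if c0 ∈ X2 then 1 else 0))]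
      congr 1
      exact Finset.sum_congr rfl fun r _ => hpar r c0
    rw [hs, he] at hmod
    have h1 : k * lam = 2 * (k * m) + k := by rw [hm]; ring
    have h2 : ∀ x : ℕ, 2 * lam * x = 2 * (lam * x) := by intro x; ring
    rw [h1, h2] at hmod
    omega
  -- final contradiction
  have hlamsq : lam ^ 2 % 4 = 1 := by
    have : lam ^ 2 = 4 * (m ^ 2 + m) + 1 := by rw [hm]; ring
    omega
  have hTmod : (k * (k + 1) * lam ^ 2) % 4 = (k % 4) * ((k + 1) % 4) % 4 * (lam ^ 2 % 4) % 4 := by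
    conv_lhs => rw [Nat.mul_mod, Nat.mul_mod k (k + 1)]
  rcases hk with hk2 | hk3
  · -- k ≡ 2 (mod 4): a, b even
    have hk12 : (k + 1) % 4 = 3 := by omega
    have hT2 : (k * (k + 1) * lam ^ 2) % 4 = 2 := by
      rw [hTmod, hk2, hk12, hlamsq]
    obtain ⟨a', ha'⟩ : ∃ a', a = 2 * a' := ⟨a / 2, by omega⟩
    obtain ⟨b', hb'⟩ : ∃ b', b = 2 * b' := ⟨b / 2, by omega⟩
    have hE0 : 2 * lam * a + 2 * lam * b + 2 * a * b = 4 * (lam * a' + lam * b' + 2 * a' * b') := by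
      rw [ha', hb']; ring
    omega
  · -- k ≡ 3 (mod 4): a, b odd
    have hk13 : (k + 1) % 4 = 0 := by omega
    have hT0 : (k * (k + 1) * lam ^ 2) % 4 = 0 := by
      rw [hTmod, hk3, hk13, hlamsq]
    obtain ⟨a', ha'⟩ : ∃ a', a = 2 * a' + 1 := ⟨a / 2, by omega⟩
    obtain ⟨b', hb'⟩ : ∃ b', b = 2 * b' + 1 := ⟨b / 2, by omega⟩
    have hE2 : 2 * lam * a + 2 * lam * b + 2 * a * b
        = 4 * (lam * a' + lam * b' + lam + 2 * a' * b' + a' + b') + 2 := by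
      rw [ha', hb']; ring
    omega
end

section
/- Let λ be odd and suppose a k-MOFS(2λ) admits a full relation with row set X_1 and column set X_2. If k ≡ 1 (mod 8) then |X_1|·|X_2| ≡ 1 (mod 4), and if k ≡ 5 (mod 8) then |X_1|·|X_2| ≡ 3 (mod 4). -/
open Finset

private lemma fin2_val_ite : ∀ v : Fin 2, v.val = if v = 1 then 1 else 0 := by decide
private lemma fin2_val_mul : ∀ v w : Fin 2,
    v.val * w.val = if v = 1 ∧ w = 1 then 1 else 0 := by decide
private lemma fin2_val_sq : ∀ v : Fin 2, v.val * v.val = v.val := by decide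

private lemma sum_swap4 {α : Type*} [AddCommMonoid α] {n k : ℕ}
    (g : Fin k → Fin k → Fin n → Fin n → α) :
    ∑ r, ∑ c, ∑ i, ∑ j, g i j r c = ∑ i, ∑ j, ∑ r, ∑ c, g i j r c := by
  calc ∑ r, ∑ c, ∑ i, ∑ j, g i j r c
      = ∑ r, ∑ i, ∑ c, ∑ j, g i j r c :=
        Finset.sum_congr rfl fun r _ => Finset.sum_comm
    _ = ∑ i, ∑ r, ∑ c, ∑ j, g i j r c := Finset.sum_comm
    _ = ∑ i, ∑ r, ∑ j, ∑ c, g i j r c :=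
        Finset.sum_congr rfl fun i _ => Finset.sum_congr rfl fun r _ => Finset.sum_comm
    _ = ∑ i, ∑ j, ∑ r, ∑ c, g i j r c :=
        Finset.sum_congr rfl fun i _ => Finset.sum_comm

private lemma master (lam k : ℕ) (x y : Fin (2*lam) → ℤ) (s : Fin (2*lam) → Fin (2*lam) → ℤ)
    (hx01 : ∀ r, x r = 0 ∨ x r = 1)
    (hy01 : ∀ c, y c = 0 ∨ y c = 1)
    (hsrow : ∀ r, ∑ c, s r c = (k:ℤ) * lam)
    (hscol : ∀ c, ∑ r, s r c = (k:ℤ) * lam)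
    (hT1 : ∑ r, ∑ c, s r c * s r c = ((k:ℤ)^2 + k) * (lam:ℤ)^2)
    (hpar : ∀ r c, (2:ℤ) ∣ (x r + y c + s r c)) :
    (16:ℤ) ∣ (2*((k:ℤ)^2+(k:ℤ))*(lam:ℤ)^2 - 8*(k:ℤ)*(lam:ℤ)^2
      - 4*(lam:ℤ)*((∑ r, x r) + (∑ c, y c)) + 4*(∑ r, x r)*(∑ c, y c)
      + 4*((∑ r, x r)+(∑ c, y c))*(k:ℤ)*(lam:ℤ)) := by
  set A := ∑ r, x r with hA
  set B := ∑ c, y c with hB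
  -- pointwise divisibility
  have hpt : ∀ r c, (16:ℤ) ∣ (2*(s r c * s r c) - 4*(s r c) - 2*(x r) - 2*(y c)
      + 4*(x r * y c) + 4*(x r * s r c) + 4*(y c * s r c) - 8*(x r * y c * s r c)) := by
    intro r c
    obtain ⟨d, hd⟩ := hpar r c
    have he01 : x r + y c - 2*(x r * y c) = 0 ∨ x r + y c - 2*(x r * y c) = 1 := by
      rcases hx01 r with h|h <;> rcases hy01 c with h'|h' <;> rw [h, h'] <;> norm_num
    set ev := x r + y c - 2*(x r * y c) with hev
    set t := d - x r - y c + x r * y c with htd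
    have hst : s r c = ev + 2*t := by rw [hev, htd]; linarith
    have hsq : s r c * s r c = ev + 4*(t*t + ev*t) := by
      rcases he01 with h|h <;> rw [hst, h] <;> ring
    have heven : Even ((t-1)*t) := by
      have := Int.even_mul_succ_self (t-1)
      simpa using this
    obtain ⟨c0, hc0⟩ := heven
    have hg : t*t + ev*t = (1-ev)*t + 2*(c0 + ev*t) := by linear_combination hc0
    have h2V : (1-ev)*(2*t) = s r c - ev * (s r c) := by
      rcases he01 with h|h <;> rw [hst, h] <;> ring
    exact ⟨c0 + ev*t, by linear_combination 2*hsq + 8*hg + 4*h2V + (4*(s r c) - 2)*hev⟩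
  have hglob := Finset.dvd_sum (fun r (_ : r ∈ univ) => Finset.dvd_sum
    (fun c (_ : c ∈ univ) => hpt r c))
  -- evaluate the pieces
  have hT2 : ∑ r, ∑ c, s r c = 2*(k:ℤ)*(lam:ℤ)^2 := by
    simp [hsrow, Finset.sum_const, Finset.card_univ]; ring
  have hT3 : ∑ r : Fin (2*lam), ∑ _c : Fin (2*lam), x r = 2*(lam:ℤ)*A := by
    simp [Finset.sum_const, Finset.card_univ, ← Finset.sum_nsmul, hA, Finset.mul_sum]
  have hT4 : ∑ _r : Fin (2*lam), ∑ c, y c = 2*(lam:ℤ)*B := by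
    simp [Finset.sum_const, Finset.card_univ, hB]
  have hT5 : ∑ r, ∑ c, x r * y c = A*B := by
    rw [hA, hB]; exact (Finset.sum_mul_sum univ univ x y).symm
  have hT6 : ∑ r, ∑ c, x r * s r c = A*((k:ℤ)*lam) := by
    calc ∑ r, ∑ c, x r * s r c = ∑ r, x r * ((k:ℤ)*lam) :=
          Finset.sum_congr rfl (fun r _ => by rw [← Finset.mul_sum, hsrow r])
      _ = A*((k:ℤ)*lam) := by rw [← Finset.sum_mul, hA]
  have hT7 : ∑ r, ∑ c, y c * s r c = B*((k:ℤ)*lam) := by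
    rw [Finset.sum_comm]
    calc ∑ c, ∑ r, y c * s r c = ∑ c, y c * ((k:ℤ)*lam) :=
          Finset.sum_congr rfl (fun c _ => by rw [← Finset.mul_sum, hscol c])
      _ = B*((k:ℤ)*lam) := by rw [← Finset.sum_mul, hB]
  have hSA : (2:ℤ) ∣ ∑ r, ∑ c, x r * y c * s r c := by
    apply Finset.dvd_sum; intro r _; apply Finset.dvd_sum; intro c _
    rcases hx01 r with h|h
    · rw [h]; simp
    rcases hy01 c with h'|h'
    · rw [h']; simp
    · obtain ⟨d, hd⟩ := hpar r c
      rw [h, h'] at hd ⊢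
      exact ⟨d - 1, by linarith⟩
  obtain ⟨d2, hd2⟩ := hSA
  -- split the global sum
  have hsplit : ∑ r, ∑ c, (2*(s r c * s r c) - 4*(s r c) - 2*(x r) - 2*(y c)
      + 4*(x r * y c) + 4*(x r * s r c) + 4*(y c * s r c) - 8*(x r * y c * s r c))
      = 2*(∑ r, ∑ c, s r c * s r c) - 4*(∑ r, ∑ c, s r c)
        - 2*(∑ r : Fin (2*lam), ∑ _c : Fin (2*lam), x r)
        - 2*(∑ _r : Fin (2*lam), ∑ c, y c)
        + 4*(∑ r, ∑ c, x r * y c) + 4*(∑ r, ∑ c, x r * s r c)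
        + 4*(∑ r, ∑ c, y c * s r c) - 8*(∑ r, ∑ c, x r * y c * s r c) := by
    simp only [Finset.sum_add_distrib, Finset.sum_sub_distrib, ← Finset.mul_sum]
  rw [hsplit, hT1, hT2, hT3, hT4, hT5, hT6, hT7, hd2] at hglob
  obtain ⟨q, hq⟩ := hglob
  exact ⟨q + d2, by linarith⟩

/-- Let λ be odd and suppose a k-MOFS(2λ) admits a full relation (X1, X2).
If k ≡ 1 (mod 8) then |X1|·|X2| ≡ 1 (mod 4), and if k ≡ 5 (mod 8) then
|X1|·|X2| ≡ 3 (mod 4). -/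
theorem stmt_7 (lam k : ℕ) (hlam : Odd lam)
    (F : Fin k → Fin (2 * lam) → Fin (2 * lam) → Fin 2)
    (hmofs : IsMOFS (2 * lam) k F)
    (X1 X2 : Finset (Fin (2 * lam)))
    (hrel : FullRelation (2 * lam) k F X1 X2) :
    (k % 8 = 1 → (X1.card * X2.card) % 4 = 1) ∧
    (k % 8 = 5 → (X1.card * X2.card) % 4 = 3) := by
  classical
  -- row and column sums of each square
  have hrowN : ∀ i r, ∑ c, (F i r c).val = lam := by
    intro i r
    have h := (hmofs.1 i).1 r
    rw [Finset.card_filter] at h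
    have h2 : ∑ c, (F i r c).val = 2*lam/2 := by
      rw [← h]; exact Finset.sum_congr rfl fun c _ => fin2_val_ite _
    omega
  have hcolN : ∀ i c, ∑ r, (F i r c).val = lam := by
    intro i c
    have h := (hmofs.1 i).2 c
    rw [Finset.card_filter] at h
    have h2 : ∑ r, (F i r c).val = 2*lam/2 := by
      rw [← h]; exact Finset.sum_congr rfl fun r _ => fin2_val_ite _
    omega
  have hrowZ : ∀ i r, ∑ c, ((F i r c).val : ℤ) = (lam:ℤ) := by
    intro i r; exact_mod_cast congrArg (Nat.cast : ℕ → ℤ) (hrowN i r)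
  have hcolZ : ∀ i c, ∑ r, ((F i r c).val : ℤ) = (lam:ℤ) := by
    intro i c; exact_mod_cast congrArg (Nat.cast : ℕ → ℤ) (hcolN i c)
  -- hypotheses of `master`
  have hsrow : ∀ r, ∑ c, ∑ i, ((F i r c).val : ℤ) = (k:ℤ) * lam := by
    intro r
    rw [Finset.sum_comm]
    calc ∑ i, ∑ c, ((F i r c).val:ℤ) = ∑ _i : Fin k, (lam:ℤ) :=
          Finset.sum_congr rfl fun i _ => hrowZ i r
      _ = (k:ℤ)*lam := by simp [Finset.sum_const, Finset.card_univ, mul_comm]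
  have hscol : ∀ c, ∑ r, ∑ i, ((F i r c).val : ℤ) = (k:ℤ) * lam := by
    intro c
    rw [Finset.sum_comm]
    calc ∑ i, ∑ r, ((F i r c).val:ℤ) = ∑ _i : Fin k, (lam:ℤ) :=
          Finset.sum_congr rfl fun i _ => hcolZ i c
      _ = (k:ℤ)*lam := by simp [Finset.sum_const, Finset.card_univ, mul_comm]
  have horthZ : ∀ i j, i ≠ j →
      ∑ r, ∑ c, ((F i r c).val:ℤ) * ((F j r c).val:ℤ) = (lam:ℤ)^2 := by
    intro i j hij
    have h := hmofs.2 i j hij 1 1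
    rw [Finset.card_filter] at h
    have hN : ∑ r, ∑ c, (F i r c).val * (F j r c).val = (2*lam)^2/4 := by
      calc ∑ r, ∑ c, (F i r c).val * (F j r c).val
          = ∑ p ∈ Finset.univ ×ˢ Finset.univ, (F i p.1 p.2).val * (F j p.1 p.2).val :=
            (Finset.sum_product' _ _ _).symm
        _ = ∑ p : Fin (2*lam) × Fin (2*lam), (F i p.1 p.2).val * (F j p.1 p.2).val := by
            rw [Finset.univ_product_univ]
        _ = ∑ p : Fin (2*lam) × Fin (2*lam),
              if F i p.1 p.2 = 1 ∧ F j p.1 p.2 = 1 then 1 else 0 :=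
            Finset.sum_congr rfl fun p _ => fin2_val_mul _ _
        _ = (2*lam)^2/4 := h
    have h4 : (2*lam)^2/4 = lam^2 := by
      have h5 : (2*lam)^2 = 4*lam^2 := by ring
      omega
    rw [h4] at hN
    have := congrArg (Nat.cast : ℕ → ℤ) hN
    push_cast at this
    exact this
  have hselfZ : ∀ i, ∑ r, ∑ c, ((F i r c).val:ℤ) * ((F i r c).val:ℤ) = 2*(lam:ℤ)^2 := by
    intro i
    calc ∑ r, ∑ c, ((F i r c).val:ℤ) * ((F i r c).val:ℤ)
        = ∑ r, ∑ c, ((F i r c).val:ℤ) := by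
          refine Finset.sum_congr rfl fun r _ => Finset.sum_congr rfl fun c _ => ?_
          exact_mod_cast congrArg (Nat.cast : ℕ → ℤ) (fin2_val_sq (F i r c))
      _ = ∑ _r : Fin (2*lam), (lam:ℤ) := Finset.sum_congr rfl fun r _ => hrowZ i r
      _ = 2*(lam:ℤ)^2 := by
          simp [Finset.sum_const, Finset.card_univ]
          ring
  have hkey : ∀ i j, ∑ r, ∑ c, ((F i r c).val:ℤ) * ((F j r c).val:ℤ)
      = (lam:ℤ)^2 + (if i = j then (lam:ℤ)^2 else 0) := by
    intro i j
    by_cases h : i = j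
    · subst h; rw [hselfZ i]; simp; ring
    · rw [horthZ i j h]; simp [h]
  have hT1 : ∑ r, ∑ c, (∑ i, ((F i r c).val:ℤ)) * (∑ i, ((F i r c).val:ℤ))
      = ((k:ℤ)^2 + k) * (lam:ℤ)^2 := by
    calc ∑ r, ∑ c, (∑ i, ((F i r c).val:ℤ)) * (∑ i, ((F i r c).val:ℤ))
        = ∑ r, ∑ c, ∑ i, ∑ j, ((F i r c).val:ℤ) * ((F j r c).val:ℤ) := by
          refine Finset.sum_congr rfl fun r _ => Finset.sum_congr rfl fun c _ => ?_
          exact Finset.sum_mul_sum univ univ _ _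
      _ = ∑ i, ∑ j, ∑ r, ∑ c, ((F i r c).val:ℤ) * ((F j r c).val:ℤ) :=
          sum_swap4 _
      _ = ∑ i : Fin k, ∑ j : Fin k, ((lam:ℤ)^2 + (if i = j then (lam:ℤ)^2 else 0)) :=
          Finset.sum_congr rfl fun i _ => Finset.sum_congr rfl fun j _ => hkey i j
      _ = ((k:ℤ)^2 + k) * (lam:ℤ)^2 := by
          simp [Finset.sum_add_distrib, Finset.sum_ite_eq, Finset.sum_const,
            Finset.card_univ]
          ring
  have hpar : ∀ r c, (2:ℤ) ∣ ((if r ∈ X1 then (1:ℤ) else 0) + (if c ∈ X2 then (1:ℤ) else 0)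
      + ∑ i, ((F i r c).val:ℤ)) := by
    intro r c
    obtain ⟨d, hd⟩ := hrel r c
    refine ⟨(d:ℤ), ?_⟩
    have := congrArg (Nat.cast : ℕ → ℤ) hd
    push_cast at this
    linarith
  have hE := master lam k (fun r => if r ∈ X1 then (1:ℤ) else 0)
    (fun c => if c ∈ X2 then (1:ℤ) else 0)
    (fun r c => ∑ i, ((F i r c).val:ℤ))
    (fun r => by by_cases h : r ∈ X1 <;> simp [h])
    (fun c => by by_cases h : c ∈ X2 <;> simp [h])
    hsrow hscol hT1 hpar
  have hAX : ∑ r, (if r ∈ X1 then (1:ℤ) else 0) = (X1.card:ℤ) := by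
    simp [Finset.sum_ite_mem, Finset.univ_inter]
  have hBX : ∑ c, (if c ∈ X2 then (1:ℤ) else 0) = (X2.card:ℤ) := by
    simp [Finset.sum_ite_mem, Finset.univ_inter]
  simp only [hAX, hBX] at hE
  obtain ⟨u, hu⟩ := hlam
  constructor
  · intro hk
    obtain ⟨m, hm⟩ : ∃ m, k = 8*m+1 := ⟨k/8, by omega⟩
    subst hu; subst hm
    obtain ⟨q, hq⟩ := hE
    push_cast at hq
    have h4 : (4:ℤ)*((X1.card : ℤ)*(X2.card : ℤ)) - 4
        = 16*(q - ((32*(m:ℤ)^2+12*m+1)*((u:ℤ)^2+u) + m*(8*m+3))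
              + (2*(8*(m:ℤ)+1)*((u:ℤ)^2+u) + 4*m)
              - 2*(2*(u:ℤ)+1)*((X1.card:ℤ)+(X2.card:ℤ))*m) := by
      linear_combination hq
    have h4' : (4:ℤ)*((X1.card * X2.card : ℕ) : ℤ) - 4
        = 16*(q - ((32*(m:ℤ)^2+12*m+1)*((u:ℤ)^2+u) + m*(8*m+3))
              + (2*(8*(m:ℤ)+1)*((u:ℤ)^2+u) + 4*m)
              - 2*(2*(u:ℤ)+1)*((X1.card:ℤ)+(X2.card:ℤ))*m) := by
      push_cast; linarith
    omega
  · intro hk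
    obtain ⟨m, hm⟩ : ∃ m, k = 8*m+5 := ⟨k/8, by omega⟩
    subst hu; subst hm
    obtain ⟨q, hq⟩ := hE
    push_cast at hq
    have h4 : (4:ℤ)*((X1.card : ℤ)*(X2.card : ℤ)) - 12
        = 16*(q - ((32*(m:ℤ)^2+44*m+15)*((u:ℤ)^2+u) + 8*(m:ℤ)^2+11*m+3)
              + (2*(8*(m:ℤ)+5)*((u:ℤ)^2+u) + 4*m + 1)
              - (2*(u:ℤ)+1)*((X1.card:ℤ)+(X2.card:ℤ))*(2*m+1)) := by
      linear_combination hq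
    have h4' : (4:ℤ)*((X1.card * X2.card : ℕ) : ℤ) - 12
        = 16*(q - ((32*(m:ℤ)^2+44*m+15)*((u:ℤ)^2+u) + 8*(m:ℤ)^2+11*m+3)
              + (2*(8*(m:ℤ)+5)*((u:ℤ)^2+u) + 4*m + 1)
              - (2*(u:ℤ)+1)*((X1.card:ℤ)+(X2.card:ℤ))*(2*m+1)) := by
      push_cast; linarith
    omega
end

section
/- Three binary frequency squares F_1, F_2, F_3 of order 2λ are pairwise orthogonal if and only if in their superposition the counts x_t of each triple t satisfy x_{000}=x_{011}=x_{101}=x_{110} and x_{001}=x_{010}=x_{100}=x_{111}. -/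
/-- The number of cells in which the superposition of three binary squares
shows the triple (a,b,c). -/
def tripleCount (n : ℕ) (F1 F2 F3 : Fin n → Fin n → Fin 2)
    (a b c : Fin 2) : ℕ :=
  (Finset.univ.filter fun p : Fin n × Fin n =>
    F1 p.1 p.2 = a ∧ F2 p.1 p.2 = b ∧ F3 p.1 p.2 = c).card

open Finset

lemma fin2_cases (v : Fin 2) : v = 0 ∨ v = 1 := by revert v; decide

lemma pair12 (n : ℕ) (F1 F2 F3 : Fin n → Fin n → Fin 2) (a b : Fin 2) :
    (Finset.univ.filter fun p : Fin n × Fin n =>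
      F1 p.1 p.2 = a ∧ F2 p.1 p.2 = b).card
    = tripleCount n F1 F2 F3 a b 0 + tripleCount n F1 F2 F3 a b 1 := by
  unfold tripleCount
  rw [Finset.card_filter, Finset.card_filter, Finset.card_filter, ← Finset.sum_add_distrib]
  refine Finset.sum_congr rfl fun p _ => ?_
  rcases fin2_cases (F3 p.1 p.2) with h | h <;>
    by_cases h1 : F1 p.1 p.2 = a <;> by_cases h2 : F2 p.1 p.2 = b <;> simp [h, h1, h2]

lemma pair13 (n : ℕ) (F1 F2 F3 : Fin n → Fin n → Fin 2) (a c : Fin 2) :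
    (Finset.univ.filter fun p : Fin n × Fin n =>
      F1 p.1 p.2 = a ∧ F3 p.1 p.2 = c).card
    = tripleCount n F1 F2 F3 a 0 c + tripleCount n F1 F2 F3 a 1 c := by
  unfold tripleCount
  rw [Finset.card_filter, Finset.card_filter, Finset.card_filter, ← Finset.sum_add_distrib]
  refine Finset.sum_congr rfl fun p _ => ?_
  rcases fin2_cases (F2 p.1 p.2) with h | h <;>
    by_cases h1 : F1 p.1 p.2 = a <;> by_cases h3 : F3 p.1 p.2 = c <;> simp [h, h1, h3]

lemma pair23 (n : ℕ) (F1 F2 F3 : Fin n → Fin n → Fin 2) (b c : Fin 2) :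
    (Finset.univ.filter fun p : Fin n × Fin n =>
      F2 p.1 p.2 = b ∧ F3 p.1 p.2 = c).card
    = tripleCount n F1 F2 F3 0 b c + tripleCount n F1 F2 F3 1 b c := by
  unfold tripleCount
  rw [Finset.card_filter, Finset.card_filter, Finset.card_filter, ← Finset.sum_add_distrib]
  refine Finset.sum_congr rfl fun p _ => ?_
  rcases fin2_cases (F1 p.1 p.2) with h | h <;>
    by_cases h2 : F2 p.1 p.2 = b <;> by_cases h3 : F3 p.1 p.2 = c <;> simp [h, h2, h3]

lemma tot1 (n : ℕ) (F1 F2 F3 : Fin n → Fin n → Fin 2) :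
    (Finset.univ.filter fun p : Fin n × Fin n => F1 p.1 p.2 = 1).card
    = tripleCount n F1 F2 F3 1 0 0 + tripleCount n F1 F2 F3 1 0 1
      + tripleCount n F1 F2 F3 1 1 0 + tripleCount n F1 F2 F3 1 1 1 := by
  unfold tripleCount
  rw [Finset.card_filter, Finset.card_filter, Finset.card_filter, Finset.card_filter,
    Finset.card_filter, ← Finset.sum_add_distrib, ← Finset.sum_add_distrib,
    ← Finset.sum_add_distrib]
  refine Finset.sum_congr rfl fun p _ => ?_
  rcases fin2_cases (F2 p.1 p.2) with h2 | h2 <;>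
    rcases fin2_cases (F3 p.1 p.2) with h3 | h3 <;>
    by_cases h1 : F1 p.1 p.2 = 1 <;> simp [h1, h2, h3]

lemma card_one (n : ℕ) (F : Fin n → Fin n → Fin 2)
    (h : ∀ r : Fin n, (Finset.univ.filter fun c => F r c = 1).card = n / 2) :
    (Finset.univ.filter fun p : Fin n × Fin n => F p.1 p.2 = 1).card = n * (n / 2) := by
  rw [Finset.card_filter, Fintype.sum_prod_type]
  have key : ∀ r : Fin n, (∑ c : Fin n, if F r c = 1 then 1 else 0) = n / 2 := fun r => by
    rw [← Finset.card_filter]; exact h r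
  rw [Finset.sum_congr rfl fun r _ => key r, Finset.sum_const, Finset.card_univ,
    Fintype.card_fin, smul_eq_mul]

/-- Three binary frequency squares of order 2λ are pairwise orthogonal iff
x₀₀₀ = x₀₁₁ = x₁₀₁ = x₁₁₀ and x₀₀₁ = x₀₁₀ = x₁₀₀ = x₁₁₁. -/
theorem stmt_8 (lam : ℕ)
    (F1 F2 F3 : Fin (2 * lam) → Fin (2 * lam) → Fin 2)
    (h1 : IsFreqSquare (2 * lam) F1) (h2 : IsFreqSquare (2 * lam) F2)
    (h3 : IsFreqSquare (2 * lam) F3) :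
    (OrthFS (2 * lam) F1 F2 ∧ OrthFS (2 * lam) F1 F3 ∧
      OrthFS (2 * lam) F2 F3) ↔
    (tripleCount (2 * lam) F1 F2 F3 0 0 0 = tripleCount (2 * lam) F1 F2 F3 0 1 1 ∧
     tripleCount (2 * lam) F1 F2 F3 0 1 1 = tripleCount (2 * lam) F1 F2 F3 1 0 1 ∧
     tripleCount (2 * lam) F1 F2 F3 1 0 1 = tripleCount (2 * lam) F1 F2 F3 1 1 0 ∧
     tripleCount (2 * lam) F1 F2 F3 0 0 1 = tripleCount (2 * lam) F1 F2 F3 0 1 0 ∧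
     tripleCount (2 * lam) F1 F2 F3 0 1 0 = tripleCount (2 * lam) F1 F2 F3 1 0 0 ∧
     tripleCount (2 * lam) F1 F2 F3 1 0 0 = tripleCount (2 * lam) F1 F2 F3 1 1 1) := by

  have sq : (2 * lam) ^ 2 / 4 = lam * lam := by
    have h4 : (2 * lam) ^ 2 = lam * lam * 4 := by ring
    rw [h4, Nat.mul_div_cancel _ (by norm_num)]
  constructor
  · rintro ⟨o12, o13, o23⟩
    have e12 : ∀ a b : Fin 2, tripleCount (2*lam) F1 F2 F3 a b 0
        + tripleCount (2*lam) F1 F2 F3 a b 1 = lam * lam := fun a b =>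
      (pair12 _ F1 F2 F3 a b).symm.trans ((o12 a b).trans sq)
    have e13 : ∀ a c : Fin 2, tripleCount (2*lam) F1 F2 F3 a 0 c
        + tripleCount (2*lam) F1 F2 F3 a 1 c = lam * lam := fun a c =>
      (pair13 _ F1 F2 F3 a c).symm.trans ((o13 a c).trans sq)
    have e23 : ∀ b c : Fin 2, tripleCount (2*lam) F1 F2 F3 0 b c
        + tripleCount (2*lam) F1 F2 F3 1 b c = lam * lam := fun b c =>
      (pair23 _ F1 F2 F3 b c).symm.trans ((o23 b c).trans sq)
    have A1 := e12 0 0; have A2 := e12 0 1; have A3 := e12 1 0; have A4 := e12 1 1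
    have B1 := e13 0 0; have B2 := e13 0 1; have B3 := e13 1 0; have B4 := e13 1 1
    have C1 := e23 0 0; have C2 := e23 0 1; have C3 := e23 1 0; have C4 := e23 1 1
    refine ⟨by omega, by omega, by omega, by omega, by omega, by omega⟩
  · rintro ⟨q1, q2, q3, q4, q5, q6⟩
    have tot : tripleCount (2*lam) F1 F2 F3 1 0 0 + tripleCount (2*lam) F1 F2 F3 1 0 1
        + tripleCount (2*lam) F1 F2 F3 1 1 0 + tripleCount (2*lam) F1 F2 F3 1 1 1
        = 2 * lam * (2 * lam / 2) :=
      (tot1 _ F1 F2 F3).symm.trans (card_one _ F1 h1.1)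
    have hdiv : 2 * lam / 2 = lam := by omega
    rw [hdiv, show 2 * lam * lam = 2 * (lam * lam) from by ring] at tot
    refine ⟨?_, ?_, ?_⟩ <;> intro a b <;>
      rcases fin2_cases a with ha | ha <;> rcases fin2_cases b with hb | hb <;>
      subst ha <;> subst hb
    · rw [pair12 _ F1 F2 F3, sq]; omega
    · rw [pair12 _ F1 F2 F3, sq]; omega
    · rw [pair12 _ F1 F2 F3, sq]; omega
    · rw [pair12 _ F1 F2 F3, sq]; omega
    · rw [pair13 _ F1 F2 F3, sq]; omega
    · rw [pair13 _ F1 F2 F3, sq]; omega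
    · rw [pair13 _ F1 F2 F3, sq]; omega
    · rw [pair13 _ F1 F2 F3, sq]; omega
    · rw [pair23 _ F1 F2 F3, sq]; omega
    · rw [pair23 _ F1 F2 F3, sq]; omega
    · rw [pair23 _ F1 F2 F3, sq]; omega
    · rw [pair23 _ F1 F2 F3, sq]; omega
end

section
/- If two orthogonal binary frequency squares of order 2λ satisfy a full relation with row set X_1 and column set X_2, then |X_1| = λ or |X_2| = λ, and both |X_1| and |X_2| (and λ) are even. -/
/-- If two orthogonal binary frequency squares of order 2λ satisfy a full
relation (X1, X2), then |X1| = λ or |X2| = λ, and |X1|, |X2| and λ are all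
even. -/
theorem stmt_10 (lam : ℕ)
    (F : Fin 2 → Fin (2 * lam) → Fin (2 * lam) → Fin 2)
    (hfs : ∀ i, IsFreqSquare (2 * lam) (F i))
    (horth : OrthFS (2 * lam) (F 0) (F 1))
    (X1 X2 : Finset (Fin (2 * lam)))
    (hrel : FullRelation (2 * lam) 2 F X1 X2) :
    (X1.card = lam ∨ X2.card = lam) ∧
    Even X1.card ∧ Even X2.card ∧ Even lam := by
  classical
  rcases Nat.eq_zero_or_pos lam with h0 | hpos
  · subst h0
    have hx1 : X1.card = 0 := by
      have := Finset.card_le_univ X1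
      rw [Fintype.card_fin] at this; omega
    have hx2 : X2.card = 0 := by
      have := Finset.card_le_univ X2
      rw [Fintype.card_fin] at this; omega
    simp [hx1, hx2]
  have hval : ∀ x : Fin 2, x.val = if x = 1 then 1 else 0 := by decide
  -- row sums of each square are lam
  have hrow : ∀ i (r : Fin (2 * lam)), ∑ c, (F i r c).val = lam := by
    intro i r
    have h := (hfs i).1 r
    calc ∑ c, (F i r c).val = ∑ c, (if F i r c = 1 then 1 else 0) := by
          simp_rw [← hval]
      _ = (Finset.univ.filter fun c => F i r c = 1).card :=
          (Finset.card_filter _ _).symm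
      _ = lam := by rw [h]; omega
  have hcol : ∀ i (c : Fin (2 * lam)), ∑ r, (F i r c).val = lam := by
    intro i c
    have h := (hfs i).2 c
    calc ∑ r, (F i r c).val = ∑ r, (if F i r c = 1 then 1 else 0) := by
          simp_rw [← hval]
      _ = (Finset.univ.filter fun r => F i r c = 1).card :=
          (Finset.card_filter _ _).symm
      _ = lam := by rw [h]; omega
  have hcard_ite : ∀ (X : Finset (Fin (2 * lam))),
      ∑ c, (if c ∈ X then (1:ℕ) else 0) = X.card := by
    intro X
    rw [Finset.sum_ite_mem, Finset.univ_inter, Finset.card_eq_sum_ones]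
  -- parity of X2.card
  have hb : Even X2.card := by
    set r0 : Fin (2 * lam) := ⟨0, by omega⟩
    have hsum : Even (∑ c, ((if r0 ∈ X1 then 1 else 0) + (if c ∈ X2 then 1 else 0) +
        ∑ i, (F i r0 c).val)) := Finset.even_sum _ (fun c _ => hrel r0 c)
    rw [Finset.sum_add_distrib, Finset.sum_add_distrib, hcard_ite,
      Finset.sum_comm] at hsum
    simp only [Finset.sum_const, Finset.card_fin, smul_eq_mul, mul_one] at hsum
    rw [Fin.sum_univ_two, hrow, hrow] at hsum
    rw [Nat.even_iff] at hsum ⊢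
    by_cases h1 : r0 ∈ X1 <;> simp [h1] at hsum <;> omega
  -- parity of X1.card
  have ha : Even X1.card := by
    set c0 : Fin (2 * lam) := ⟨0, by omega⟩
    have hsum : Even (∑ r, ((if r ∈ X1 then 1 else 0) + (if c0 ∈ X2 then 1 else 0) +
        ∑ i, (F i r c0).val)) := Finset.even_sum _ (fun r _ => hrel r c0)
    rw [Finset.sum_add_distrib, Finset.sum_add_distrib, hcard_ite,
      Finset.sum_comm] at hsum
    simp only [Finset.sum_const, Finset.card_fin, smul_eq_mul, mul_one] at hsum
    rw [Fin.sum_univ_two, hcol, hcol] at hsum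
    rw [Nat.even_iff] at hsum ⊢
    by_cases h2 : c0 ∈ X2 <;> simp [h2] at hsum <;> omega
  -- pointwise characterization of disagreement cells
  have hpt : ∀ r c : Fin (2 * lam),
      F 0 r c ≠ F 1 r c ↔ ((r ∈ X1 ∧ c ∉ X2) ∨ (r ∉ X1 ∧ c ∈ X2)) := by
    intro r c
    have h := hrel r c
    rw [Fin.sum_univ_two, Nat.even_iff] at h
    have hne : ∀ x y : Fin 2, x ≠ y ↔ x.val + y.val = 1 := by decide
    have b0 : (F 0 r c).val < 2 := (F 0 r c).isLt
    have b1 : (F 1 r c).val < 2 := (F 1 r c).isLt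
    by_cases h1 : r ∈ X1 <;> by_cases h2 : c ∈ X2 <;>
      simp [h1, h2, hne] at h ⊢ <;> omega
  -- counting
  have hsq : (2 * lam) ^ 2 / 4 = lam ^ 2 := by
    have : (2 * lam) ^ 2 = 4 * lam ^ 2 := by ring
    rw [this]; omega
  have h01 := horth 0 1
  have h10 := horth 1 0
  rw [hsq] at h01 h10
  have hD : (Finset.univ.filter fun p : Fin (2 * lam) × Fin (2 * lam) =>
      F 0 p.1 p.2 ≠ F 1 p.1 p.2).card = 2 * lam ^ 2 := by
    have hiff : ∀ x y : Fin 2, x ≠ y ↔ ((x = 0 ∧ y = 1) ∨ (x = 1 ∧ y = 0)) := by decide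
    have : (Finset.univ.filter fun p : Fin (2 * lam) × Fin (2 * lam) =>
        F 0 p.1 p.2 ≠ F 1 p.1 p.2) =
        (Finset.univ.filter fun p : Fin (2 * lam) × Fin (2 * lam) =>
          F 0 p.1 p.2 = 0 ∧ F 1 p.1 p.2 = 1) ∪
        (Finset.univ.filter fun p : Fin (2 * lam) × Fin (2 * lam) =>
          F 0 p.1 p.2 = 1 ∧ F 1 p.1 p.2 = 0) := by
      rw [← Finset.filter_or]
      exact Finset.filter_congr fun p _ => by rw [hiff]
    rw [this, Finset.card_union_of_disjoint, h01, h10]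
    · omega
    · rw [Finset.disjoint_left]
      intro p hp hq
      simp only [Finset.mem_filter] at hp hq
      exact absurd (hp.2.1.symm.trans hq.2.1) (by decide)
  have hDeq : (Finset.univ.filter fun p : Fin (2 * lam) × Fin (2 * lam) =>
      F 0 p.1 p.2 ≠ F 1 p.1 p.2) = (X1 ×ˢ X2ᶜ) ∪ (X1ᶜ ×ˢ X2) := by
    ext p
    simp only [Finset.mem_filter, Finset.mem_univ, true_and, Finset.mem_union,
      Finset.mem_product, Finset.mem_compl]
    exact hpt p.1 p.2
  rw [hDeq, Finset.card_union_of_disjoint] at hD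
  swap
  · rw [Finset.disjoint_left]
    intro p hp hq
    rw [Finset.mem_product] at hp hq
    exact absurd hp.1 (Finset.mem_compl.mp hq.1)
  rw [Finset.card_product, Finset.card_product, Finset.card_compl,
    Finset.card_compl, Fintype.card_fin] at hD
  have ha2 : X1.card ≤ 2 * lam := by
    simpa using Finset.card_le_univ X1
  have hb2 : X2.card ≤ 2 * lam := by
    simpa using Finset.card_le_univ X2
  -- derive the main dichotomy over ℤ
  have key : X1.card = lam ∨ X2.card = lam := by
    have hz : ((lam : ℤ) - X1.card) * ((lam : ℤ) - X2.card) = 0 := by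
      have hD' : (X1.card : ℤ) * (2 * lam - X2.card) +
          (2 * lam - X1.card) * X2.card = 2 * lam ^ 2 := by
        have := hD
        zify [ha2, hb2] at this
        linarith [this]
      nlinarith [hD']
    rcases mul_eq_zero.mp hz with h | h
    · left; omega
    · right; omega
  exact ⟨key, ha, hb, by rcases key with h | h <;> [exact h ▸ ha; exact h ▸ hb]⟩
end

section
/- For odd positive integers t ≥ 1 and k > 1, there does not exist a resolvable 2-design with parameters (2k, k, t(k-1)). -/
/-- For odd positive integers t ≥ 1 and k > 1, there is no resolvable
2-design with parameters (2k, k, t(k-1)): no family of k-subsets (blocks)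
of a 2k-set, together with an assignment of blocks to parallel classes each
of which partitions the point set, such that every pair of distinct points
lies in exactly t(k-1) blocks. -/
theorem stmt_11 (t k : ℕ) (ht : Odd t) (hk : Odd k) (hk1 : 1 < k) :
    ¬ ∃ (m p : ℕ) (B : Fin m → Finset (Fin (2 * k))) (cls : Fin m → Fin p),
      (∀ i, (B i).card = k) ∧
      (∀ x y : Fin (2 * k), x ≠ y →
        (Finset.univ.filter fun i => x ∈ B i ∧ y ∈ B i).card = t * (k - 1)) ∧
      (∀ (j : Fin p) (x : Fin (2 * k)), ∃! i, cls i = j ∧ x ∈ B i) := by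
  rintro ⟨m, p, B, cls, hcard, hlam, hres⟩
  have hk3 : 3 ≤ k := by rcases hk with ⟨a, rfl⟩; omega
  -- g j x : the unique block of class j containing x
  set g : Fin p → Fin (2*k) → Fin m := fun j x => (hres j x).exists.choose with hgdef
  have hgspec : ∀ (j : Fin p) (x : Fin (2*k)), cls (g j x) = j ∧ x ∈ B (g j x) :=
    fun j x => (hres j x).exists.choose_spec
  have huniq : ∀ (j : Fin p) (x : Fin (2*k)) (i : Fin m),
      cls i = j → x ∈ B i → g j x = i :=
    fun j x i h1 h2 => (hres j x).unique ⟨(hgspec j x).1, (hgspec j x).2⟩ ⟨h1, h2⟩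
  -- replication: each point is in exactly p blocks
  have hrep : ∀ x : Fin (2*k), (Finset.univ.filter fun i => x ∈ B i).card = p := by
    intro x
    rw [show p = (Finset.univ : Finset (Fin p)).card by simp]
    apply Finset.card_bij (fun i _ => cls i)
    · intro i _; exact Finset.mem_univ _
    · intro i1 h1 i2 h2 h
      simp only [Finset.mem_filter] at h1 h2
      rw [← huniq (cls i1) x i1 rfl h1.2, ← huniq (cls i2) x i2 rfl h2.2, h]
    · intro j _
      exact ⟨g j x, Finset.mem_filter.2 ⟨Finset.mem_univ _, (hgspec j x).2⟩,
        (hgspec j x).1⟩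
  -- count p
  have hp : p = (2*k-1) * t := by
    set x0 : Fin (2*k) := ⟨0, by omega⟩ with hx0
    have key : ∑ y ∈ Finset.univ.erase x0,
        (Finset.univ.filter fun i => x0 ∈ B i ∧ y ∈ B i).card
        = (2*k-1) * (t*(k-1)) := by
      rw [Finset.sum_congr rfl (fun y hy => hlam x0 y
        (Ne.symm (Finset.ne_of_mem_erase hy)))]
      rw [Finset.sum_const, Finset.card_erase_of_mem (Finset.mem_univ _),
        Finset.card_univ, Fintype.card_fin, smul_eq_mul]
    have key2 : ∑ y ∈ Finset.univ.erase x0,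
        (Finset.univ.filter fun i => x0 ∈ B i ∧ y ∈ B i).card
        = p * (k-1) := by
      simp_rw [Finset.card_filter]
      rw [Finset.sum_comm]
      have : ∀ i : Fin m, (∑ y ∈ Finset.univ.erase x0,
          if x0 ∈ B i ∧ y ∈ B i then 1 else 0)
          = if x0 ∈ B i then k - 1 else 0 := by
        intro i
        by_cases h : x0 ∈ B i
        · simp only [h, true_and, if_true]
          rw [← Finset.card_filter]
          have : (Finset.univ.erase x0).filter (fun y => y ∈ B i)
              = (B i).erase x0 := by
            ext y
            simp [Finset.mem_erase, Finset.mem_filter, and_comm]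
          rw [this, Finset.card_erase_of_mem h, hcard i]
        · simp [h]
      rw [Finset.sum_congr rfl (fun i _ => this i), ← Finset.sum_filter,
        Finset.sum_const, hrep x0, smul_eq_mul]
    have h1 : p * (k-1) = (2*k-1) * (t*(k-1)) := by rw [← key2, key]
    have h2 : (2*k-1) * (t*(k-1)) = ((2*k-1)*t) * (k-1) := by ring
    have := Nat.eq_of_mul_eq_mul_right (show 0 < k - 1 by omega) (h1.trans h2)
    exact this
  have hpodd : Odd p := by
    rw [hp]
    exact Odd.mul ⟨k-1, by omega⟩ ht
  -- three distinct points
  set x0 : Fin (2*k) := ⟨0, by omega⟩ with hx0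
  set x1 : Fin (2*k) := ⟨1, by omega⟩ with hx1
  set x2 : Fin (2*k) := ⟨2, by omega⟩ with hx2
  have h01 : x0 ≠ x1 := by simp [hx0, hx1, Fin.ext_iff]
  have h02 : x0 ≠ x2 := by simp [hx0, hx2, Fin.ext_iff]
  have h12 : x1 ≠ x2 := by simp [hx1, hx2, Fin.ext_iff]
  -- same-class counts equal λ
  have hsame : ∀ x y : Fin (2*k), x ≠ y →
      (Finset.univ.filter fun j => g j x = g j y).card = t * (k-1) := by
    intro x y hxy
    rw [← hlam x y hxy]
    apply Finset.card_bij (fun j _ => g j x)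
    · intro j hj
      simp only [Finset.mem_filter, Finset.mem_univ, true_and] at hj ⊢
      exact ⟨(hgspec j x).2, hj ▸ (hgspec j y).2⟩
    · intro j1 _ j2 _ h
      rw [← (hgspec j1 x).1, h, (hgspec j2 x).1]
    · intro i hi
      simp only [Finset.mem_filter, Finset.mem_univ, true_and] at hi
      refine ⟨cls i, Finset.mem_filter.2 ⟨Finset.mem_univ _, ?_⟩,
        huniq (cls i) x i rfl hi.1⟩
      rw [huniq (cls i) x i rfl hi.1, huniq (cls i) y i rfl hi.2]
  -- per-class: not all three blocks distinct
  have hnot3 : ∀ j : Fin p, ¬(g j x0 ≠ g j x1 ∧ g j x0 ≠ g j x2 ∧ g j x1 ≠ g j x2) := by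
    rintro j ⟨n01, n02, n12⟩
    have hdisj : ∀ a b : Fin (2*k), g j a ≠ g j b → Disjoint (B (g j a)) (B (g j b)) := by
      intro a b hab
      rw [Finset.disjoint_left]
      intro z hza hzb
      exact hab ((huniq j z (g j a) (hgspec j a).1 hza).symm.trans
        (huniq j z (g j b) (hgspec j b).1 hzb))
    have hc : (B (g j x0) ∪ B (g j x1) ∪ B (g j x2)).card = 3 * k := by
      rw [Finset.card_union_of_disjoint, Finset.card_union_of_disjoint (hdisj _ _ n01),
        hcard, hcard, hcard]
      · ring
      · rw [Finset.disjoint_union_left]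
        exact ⟨hdisj _ _ n02, hdisj _ _ n12⟩
    have := Finset.card_le_card (Finset.subset_univ
      (B (g j x0) ∪ B (g j x1) ∪ B (g j x2)))
    rw [hc, Finset.card_univ, Fintype.card_fin] at this
    omega
  -- per-class parity sum
  set s : Fin p → ℕ := fun j =>
    (if g j x0 = g j x1 then 1 else 0) + (if g j x0 = g j x2 then 1 else 0)
      + (if g j x1 = g j x2 then 1 else 0) with hs
  have hsodd : ∀ j, s j % 2 = 1 := by
    intro j
    have h3 := hnot3 j
    by_cases e01 : g j x0 = g j x1 <;> by_cases e02 : g j x0 = g j x2 <;>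
        by_cases e12 : g j x1 = g j x2 <;>
      first
        | exact absurd (⟨e01, e02, e12⟩ : _ ∧ _ ∧ _) h3
        | exact absurd (e01.symm.trans e02) e12
        | exact absurd (e01.trans e12) e02
        | exact absurd (e02.trans e12.symm) e01
        | (simp only [hs]; rw [if_pos e01, if_pos e02, if_pos e12])
        | (simp only [hs]; rw [if_pos e01, if_neg e02, if_neg e12])
        | (simp only [hs]; rw [if_neg e01, if_pos e02, if_neg e12])
        | (simp only [hs]; rw [if_neg e01, if_neg e02, if_pos e12])
  have hS1 : (∑ j : Fin p, s j) % 2 = 1 := by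
    rw [Finset.sum_nat_mod, Finset.sum_congr rfl (fun j _ => hsodd j),
      Finset.sum_const, Finset.card_univ, Fintype.card_fin, smul_eq_mul, mul_one]
    rcases hpodd with ⟨a, rfl⟩; omega
  have hS2 : (∑ j : Fin p, s j) = 3 * (t * (k-1)) := by
    simp only [hs]
    rw [Finset.sum_add_distrib, Finset.sum_add_distrib,
      ← Finset.card_filter, ← Finset.card_filter, ← Finset.card_filter,
      hsame x0 x1 h01, hsame x0 x2 h02, hsame x1 x2 h12]
    ring
  rw [hS2] at hS1
  have hev : Even (3 * (t * (k - 1))) := by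
    have h2 : Even (k - 1) := by rcases hk with ⟨b, rfl⟩; exact ⟨b, by omega⟩
    exact (h2.mul_left t).mul_left 3
  rw [Nat.even_iff] at hev
  omega
end

section
/- If n ≡ 2 (mod 4) and n > 2, then there does not exist a complete set of (n-1)^2 mutually orthogonal binary frequency squares of type F(n; n/2). -/
namespace Stmt12Aux

open Finset

/-- The ±1 version of a 0/1 square, as a function on cells. -/
def eps {n : ℕ} (G : Fin n → Fin n → Fin 2) : Fin n × Fin n → ℤ :=
  fun p => if G p.1 p.2 = 1 then 1 else -1

lemma sum_row_eps {n : ℕ} (hn2 : n % 2 = 0) {G : Fin n → Fin n → Fin 2}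
    (hG : IsFreqSquare n G) (r : Fin n) : ∑ c, eps G (r, c) = 0 := by
  have hcard := hG.1 r
  have hsplit := Finset.card_filter_add_card_filter_not
      (s := (univ : Finset (Fin n))) (p := fun c => G r c = 1)
  rw [Finset.card_univ, Fintype.card_fin] at hsplit
  unfold eps
  rw [Finset.sum_ite]
  simp only [Finset.sum_const, smul_eq_mul, mul_one, mul_neg, smul_neg]
  have h2 : (univ.filter fun c => ¬ G r c = 1).card = n / 2 := by omega
  rw [hcard, h2]
  ring

lemma sum_col_eps {n : ℕ} (hn2 : n % 2 = 0) {G : Fin n → Fin n → Fin 2}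
    (hG : IsFreqSquare n G) (c : Fin n) : ∑ r, eps G (r, c) = 0 := by
  have hcard := hG.2 c
  have hsplit := Finset.card_filter_add_card_filter_not
      (s := (univ : Finset (Fin n))) (p := fun r => G r c = 1)
  rw [Finset.card_univ, Fintype.card_fin] at hsplit
  unfold eps
  rw [Finset.sum_ite]
  simp only [Finset.sum_const, smul_eq_mul, mul_one, mul_neg, smul_neg]
  have h2 : (univ.filter fun r => ¬ G r c = 1).card = n / 2 := by omega
  rw [hcard, h2]
  ring

lemma sum_norm_eps {n : ℕ} (G : Fin n → Fin n → Fin 2) :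
    ∑ p : Fin n × Fin n, eps G p * eps G p = (n:ℤ)^2 := by
  have h : ∀ p : Fin n × Fin n, eps G p * eps G p = 1 := by
    intro p; unfold eps; split_ifs <;> ring
  rw [Finset.sum_congr rfl fun p _ => h p]
  simp [Finset.card_univ, sq]

lemma sum_orth_eps {n : ℕ} (hn : n % 4 = 2) {G G' : Fin n → Fin n → Fin 2}
    (hG : IsFreqSquare n G) (hG' : IsFreqSquare n G') (hO : OrthFS n G G') :
    ∑ p : Fin n × Fin n, eps G p * eps G' p = 0 := by
  obtain ⟨u, hu⟩ : ∃ u, n = 4*u + 2 := ⟨n/4, by omega⟩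
  have hpt : ∀ p : Fin n × Fin n, eps G p * eps G' p =
      4 * (if G p.1 p.2 = 1 ∧ G' p.1 p.2 = 1 then (1:ℤ) else 0)
      - 2 * (if G p.1 p.2 = 1 then (1:ℤ) else 0)
      - 2 * (if G' p.1 p.2 = 1 then (1:ℤ) else 0) + 1 := by
    intro p; unfold eps; split_ifs with h1 h2 h3 <;> simp_all
  rw [Finset.sum_congr rfl fun p _ => hpt p]
  rw [Finset.sum_add_distrib, Finset.sum_sub_distrib, Finset.sum_sub_distrib,
    ← Finset.mul_sum, ← Finset.mul_sum, ← Finset.mul_sum]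
  rw [Finset.sum_boole, Finset.sum_boole, Finset.sum_boole]
  have c1 : (univ.filter fun p : Fin n × Fin n => G p.1 p.2 = 1 ∧ G' p.1 p.2 = 1).card
      = 4*u^2 + 4*u + 1 := by
    have h := hO 1 1
    rw [h, hu]
    have h4 : (4*u+2)^2 = (4*u^2+4*u+1)*4 := by ring
    rw [h4, Nat.mul_div_cancel]; omega
  have c2 : (univ.filter fun p : Fin n × Fin n => G p.1 p.2 = 1).card = (4*u+2)*(2*u+1) := by
    have hc : (univ.filter fun p : Fin n × Fin n => G p.1 p.2 = 1).card
        = ∑ r : Fin n, (univ.filter fun c => G r c = 1).card := by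
      rw [Finset.card_filter, Fintype.sum_prod_type]
      exact Finset.sum_congr rfl fun r _ => (Finset.card_filter _ _).symm
    rw [hc]
    have hr : ∀ r : Fin n, (univ.filter fun c => G r c = 1).card = 2*u+1 := by
      intro r; rw [hG.1 r, hu]; omega
    rw [Finset.sum_congr rfl fun r _ => hr r]
    simp [Finset.card_univ, hu]
  have c3 : (univ.filter fun p : Fin n × Fin n => G' p.1 p.2 = 1).card = (4*u+2)*(2*u+1) := by
    have hc : (univ.filter fun p : Fin n × Fin n => G' p.1 p.2 = 1).card
        = ∑ r : Fin n, (univ.filter fun c => G' r c = 1).card := by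
      rw [Finset.card_filter, Fintype.sum_prod_type]
      exact Finset.sum_congr rfl fun r _ => (Finset.card_filter _ _).symm
    rw [hc]
    have hr : ∀ r : Fin n, (univ.filter fun c => G' r c = 1).card = 2*u+1 := by
      intro r; rw [hG'.1 r, hu]; omega
    rw [Finset.sum_congr rfl fun r _ => hr r]
    simp [Finset.card_univ, hu]
  rw [c1, c2, c3]
  have hcard : (univ : Finset (Fin n × Fin n)).card = n * n := by
    simp [Finset.card_univ]
  rw [Finset.sum_const, hcard, hu]
  push_cast
  ring

/-- The projection of a cell indicator onto the "zero row/column sums" space,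
scaled by n². -/
def Qv (n : ℕ) (a : Fin n × Fin n) : Fin n × Fin n → ℤ :=
  fun p => (if p = a then (n:ℤ)^2 else 0) - (if p.1 = a.1 then (n:ℤ) else 0)
    - (if p.2 = a.2 then (n:ℤ) else 0) + 1

lemma Qv_row {n : ℕ} (a : Fin n × Fin n) (r : Fin n) : ∑ c, Qv n a (r, c) = 0 := by
  unfold Qv
  rw [Finset.sum_add_distrib, Finset.sum_sub_distrib, Finset.sum_sub_distrib]
  have s1 : ∑ c, (if ((r, c) : Fin n × Fin n) = a then (n:ℤ)^2 else 0)
      = if r = a.1 then (n:ℤ)^2 else 0 := by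
    by_cases h : r = a.1
    · rw [if_pos h]
      have key : ∀ c : Fin n, (((r, c) : Fin n × Fin n) = a) ↔ (c = a.2) := by
        intro c
        constructor
        · intro hc; exact congrArg Prod.snd hc
        · intro hc; exact Prod.ext_iff.mpr ⟨h, hc⟩
      simp only [key]
      simp
    · rw [if_neg h]
      apply Finset.sum_eq_zero
      intro c _
      rw [if_neg]
      intro hc
      exact h (congrArg Prod.fst hc)
  have s2 : ∑ _c : Fin n, (if r = a.1 then (n:ℤ) else 0)
      = if r = a.1 then (n:ℤ)*n else 0 := by
    rw [Finset.sum_const, Finset.card_univ, Fintype.card_fin]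
    split_ifs <;> simp [mul_comm]
  have s3 : ∑ c : Fin n, (if c = a.2 then (n:ℤ) else 0) = n := by simp
  have s4 : ∑ _c : Fin n, (1:ℤ) = n := by simp [Finset.card_univ]
  rw [s1, s2, s3, s4]
  split_ifs <;> ring

lemma Qv_col {n : ℕ} (a : Fin n × Fin n) (c : Fin n) : ∑ r, Qv n a (r, c) = 0 := by
  unfold Qv
  rw [Finset.sum_add_distrib, Finset.sum_sub_distrib, Finset.sum_sub_distrib]
  have s1 : ∑ r, (if ((r, c) : Fin n × Fin n) = a then (n:ℤ)^2 else 0)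
      = if c = a.2 then (n:ℤ)^2 else 0 := by
    by_cases h : c = a.2
    · rw [if_pos h]
      have key : ∀ r : Fin n, (((r, c) : Fin n × Fin n) = a) ↔ (r = a.1) := by
        intro r
        constructor
        · intro hc; exact congrArg Prod.fst hc
        · intro hc; exact Prod.ext_iff.mpr ⟨hc, h⟩
      simp only [key]
      simp
    · rw [if_neg h]
      apply Finset.sum_eq_zero
      intro r _
      rw [if_neg]
      intro hc
      exact h (congrArg Prod.snd hc)
  have s2 : ∑ r : Fin n, (if r = a.1 then (n:ℤ) else 0) = n := by simp
  have s3 : ∑ _r : Fin n, (if c = a.2 then (n:ℤ) else 0)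
      = if c = a.2 then (n:ℤ)*n else 0 := by
    rw [Finset.sum_const, Finset.card_univ, Fintype.card_fin]
    split_ifs <;> simp [mul_comm]
  have s4 : ∑ _r : Fin n, (1:ℤ) = n := by simp [Finset.card_univ]
  rw [s1, s2, s3, s4]
  split_ifs <;> ring

/-- Dot product of `Qv a` with any vector having zero row and column sums. -/
lemma dpQ {n : ℕ} (a : Fin n × Fin n) (v : Fin n × Fin n → ℤ)
    (hrow : ∀ r, ∑ c, v (r, c) = 0) (hcol : ∀ c, ∑ r, v (r, c) = 0) :
    ∑ p : Fin n × Fin n, Qv n a p * v p = n^2 * v a := by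
  have htot : ∑ p : Fin n × Fin n, v p = 0 := by
    rw [Fintype.sum_prod_type]; exact Finset.sum_eq_zero fun r _ => hrow r
  unfold Qv
  have hpt : ∀ p : Fin n × Fin n,
      ((if p = a then (n:ℤ)^2 else 0) - (if p.1 = a.1 then (n:ℤ) else 0)
        - (if p.2 = a.2 then (n:ℤ) else 0) + 1) * v p
      = (if p = a then (n:ℤ)^2 * v p else 0) - (if p.1 = a.1 then (n:ℤ) * v p else 0)
        - (if p.2 = a.2 then (n:ℤ) * v p else 0) + v p := by
    intro p; split_ifs <;> ring
  rw [Finset.sum_congr rfl fun p _ => hpt p]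
  rw [Finset.sum_add_distrib, Finset.sum_sub_distrib, Finset.sum_sub_distrib]
  have h1 : ∑ p : Fin n × Fin n, (if p = a then (n:ℤ)^2 * v p else 0) = n^2 * v a := by
    simp
  have h2 : ∑ p : Fin n × Fin n, (if p.1 = a.1 then (n:ℤ) * v p else 0) = 0 := by
    rw [Fintype.sum_prod_type]
    apply Finset.sum_eq_zero
    intro r _
    simp only
    by_cases h : r = a.1
    · simp only [h, eq_self_iff_true, if_true]
      rw [← Finset.mul_sum, hrow a.1, mul_zero]
    · simp [h]
  have h3 : ∑ p : Fin n × Fin n, (if p.2 = a.2 then (n:ℤ) * v p else 0) = 0 := by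
    rw [Fintype.sum_prod_type, Finset.sum_comm]
    apply Finset.sum_eq_zero
    intro c _
    simp only
    by_cases h : c = a.2
    · simp only [h, eq_self_iff_true, if_true]
      rw [← Finset.mul_sum, hcol a.2, mul_zero]
    · simp [h]
  rw [h1, h2, h3, htot]
  ring

/-- The heart of the argument: for a complete set of (n-1)² pairwise orthogonal
vectors of norm² n² with zero row/column sums, the Gram structure of the cells
is completely determined. -/
lemma core {n k : ℕ} (E : Fin k → Fin n × Fin n → ℤ)
    (hrow : ∀ i r, ∑ c, E i (r, c) = 0) (hcol : ∀ i c, ∑ r, E i (r, c) = 0)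
    (hnorm : ∀ i, ∑ p : Fin n × Fin n, E i p * E i p = (n:ℤ)^2)
    (horth : ∀ i j, i ≠ j → ∑ p : Fin n × Fin n, E i p * E j p = 0)
    (heps : ∀ i p, E i p * E i p = 1)
    (hk : (k : ℤ) = ((n:ℤ) - 1)^2)
    (b p : Fin n × Fin n) :
    ∑ i, E i b * E i p = Qv n b p := by
  set S : (Fin n × Fin n) → ℤ := fun q => ∑ i, E i b * E i q with hS
  have hdp : ∀ i j, ∑ q : Fin n × Fin n, E i q * E j q = if i = j then (n:ℤ)^2 else 0 := by
    intro i j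
    by_cases h : i = j
    · subst h; rw [if_pos rfl]; exact hnorm i
    · rw [if_neg h]; exact horth i j h
  have T1 : ∑ q : Fin n × Fin n, Qv n b q * Qv n b q = (n:ℤ)^2 * (((n:ℤ))^2 - n - n + 1) := by
    rw [dpQ b (Qv n b) (Qv_row b) (Qv_col b)]
    congr 1
    simp [Qv]
  have T2 : ∑ q : Fin n × Fin n, Qv n b q * S q = (n:ℤ)^2 * k := by
    have step1 : ∀ q : Fin n × Fin n, Qv n b q * S q = ∑ i, E i b * (Qv n b q * E i q) := by
      intro q
      rw [hS, Finset.mul_sum]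
      exact Finset.sum_congr rfl fun i _ => by ring
    rw [Finset.sum_congr rfl fun q _ => step1 q, Finset.sum_comm]
    have step2 : ∀ i, ∑ q : Fin n × Fin n, E i b * (Qv n b q * E i q) = (n:ℤ)^2 := by
      intro i
      rw [← Finset.mul_sum, dpQ b (E i) (hrow i) (hcol i)]
      nlinarith [heps i b]
    rw [Finset.sum_congr rfl fun i _ => step2 i, Finset.sum_const, Finset.card_univ,
      Fintype.card_fin]
    ring
  have T3 : ∑ q : Fin n × Fin n, S q * S q = (n:ℤ)^2 * k := by
    have step1 : ∀ q : Fin n × Fin n, S q * S q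
        = ∑ i, ∑ j, (E i b * E j b) * (E i q * E j q) := by
      intro q
      rw [hS]
      rw [Finset.sum_mul_sum]
      exact Finset.sum_congr rfl fun i _ => Finset.sum_congr rfl fun j _ => by ring
    rw [Finset.sum_congr rfl fun q _ => step1 q, Finset.sum_comm]
    have step2 : ∀ i, ∑ q : Fin n × Fin n, ∑ j, (E i b * E j b) * (E i q * E j q)
        = (n:ℤ)^2 := by
      intro i
      rw [Finset.sum_comm]
      have inner : ∀ j, ∑ q : Fin n × Fin n, (E i b * E j b) * (E i q * E j q)
          = if j = i then (n:ℤ)^2 * (E i b * E j b) else 0 := by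
        intro j
        rw [← Finset.mul_sum, hdp i j]
        by_cases h : i = j
        · subst h; simp [mul_comm]
        · rw [if_neg h, if_neg (Ne.symm h), mul_zero]
      rw [Finset.sum_congr rfl fun j _ => inner j, Finset.sum_ite_eq' univ i]
      simp only [Finset.mem_univ, if_true]
      nlinarith [heps i b]
    rw [Finset.sum_congr rfl fun i _ => step2 i, Finset.sum_const, Finset.card_univ,
      Fintype.card_fin]
    ring
  have hzz : ∑ q : Fin n × Fin n, (Qv n b q - S q) * (Qv n b q - S q) = 0 := by
    have expand : ∀ q : Fin n × Fin n, (Qv n b q - S q) * (Qv n b q - S q)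
        = Qv n b q * Qv n b q - 2 * (Qv n b q * S q) + S q * S q := fun q => by ring
    rw [Finset.sum_congr rfl fun q _ => expand q, Finset.sum_add_distrib,
      Finset.sum_sub_distrib, ← Finset.mul_sum, T1, T2, T3, hk]
    ring
  have hz : ∀ q ∈ (univ : Finset (Fin n × Fin n)), (Qv n b q - S q) * (Qv n b q - S q) = 0 :=
    (Finset.sum_eq_zero_iff_of_nonneg fun q _ => mul_self_nonneg _).mp hzz
  have h := mul_self_eq_zero.mp (hz p (Finset.mem_univ p))
  linarith

end Stmt12Aux

/-- If n ≡ 2 (mod 4) and n > 2, there is no complete set of (n-1)^2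
mutually orthogonal binary frequency squares of type F(n; n/2). -/
theorem stmt_12 (n : ℕ) (hn : n % 4 = 2) (hn2 : 2 < n) :
    ¬ ∃ F : Fin ((n - 1) ^ 2) → Fin n → Fin n → Fin 2,
        IsMOFS n ((n - 1) ^ 2) F := by
  rintro ⟨F, hFS, hO⟩
  open Finset Stmt12Aux in
  obtain ⟨u, hu⟩ : ∃ u, n = 4*u + 2 := ⟨n/4, by omega⟩
  have hn2' : n % 2 = 0 := by omega
  have hkZ : (((n - 1) ^ 2 : ℕ) : ℤ) = ((n:ℤ) - 1)^2 := by
    have h1 : n - 1 = 4*u + 1 := by omega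
    rw [h1, hu]
    push_cast
    ring
  -- ±1 vectors
  have hrow : ∀ i r, ∑ c, eps (F i) (r, c) = 0 := fun i r => sum_row_eps hn2' (hFS i) r
  have hcol : ∀ i c, ∑ r, eps (F i) (r, c) = 0 := fun i c => sum_col_eps hn2' (hFS i) c
  have hnorm : ∀ i, ∑ p : Fin n × Fin n, eps (F i) p * eps (F i) p = (n:ℤ)^2 :=
    fun i => sum_norm_eps (F i)
  have horth : ∀ i j, i ≠ j →
      ∑ p : Fin n × Fin n, eps (F i) p * eps (F j) p = 0 :=
    fun i j h => sum_orth_eps hn (hFS i) (hFS j) (hO i j h)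
  have heps : ∀ i (p : Fin n × Fin n), eps (F i) p * eps (F i) p = 1 := by
    intro i p; unfold Stmt12Aux.eps; split_ifs <;> ring
  -- the row we will use
  set r0 : Fin n := ⟨0, by omega⟩ with hr0
  -- key exact inner product: same row, distinct columns
  have key : ∀ x y : Fin n, x ≠ y →
      ∑ i, eps (F i) (r0, y) * eps (F i) (r0, x) = 1 - n := by
    intro x y hxy
    have h := core (fun i => eps (F i)) hrow hcol hnorm horth heps hkZ (r0, y) (r0, x)
    rw [h]
    unfold Stmt12Aux.Qv
    have h1 : ¬ (((r0, x) : Fin n × Fin n) = (r0, y)) := by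
      intro hc
      exact hxy (congrArg Prod.snd hc)
    have h2 : ¬ ((x : Fin n) = y) := hxy
    simp only [h1, if_false, if_neg h1]
    simp only [h2, if_false]
    simp
    ring
  -- parity of the disagreement count
  have parity : ∀ x y : Fin n, x ≠ y →
      ((univ.filter fun i => F i r0 x ≠ F i r0 y).card) % 2 = 1 := by
    intro x y hxy
    have tab : ∀ s t : Fin 2, ((if s = 1 then (1:ℤ) else -1) * (if t = 1 then (1:ℤ) else -1))
        = 1 - 2*(if t ≠ s then (1:ℤ) else 0) := by decide
    have hsum : ∑ i, eps (F i) (r0, y) * eps (F i) (r0, x)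
        = (((n-1)^2 : ℕ) : ℤ)
          - 2 * ((univ.filter fun i => F i r0 x ≠ F i r0 y).card : ℤ) := by
      have hpt : ∀ i : Fin ((n-1)^2), eps (F i) (r0, y) * eps (F i) (r0, x)
          = 1 - 2*(if F i r0 x ≠ F i r0 y then (1:ℤ) else 0) := by
        intro i
        exact tab (F i r0 y) (F i r0 x)
      rw [Finset.sum_congr rfl fun i _ => hpt i, Finset.sum_sub_distrib, ← Finset.mul_sum,
        Finset.sum_boole, Finset.sum_const, Finset.card_univ, Fintype.card_fin]
      simp
    have heq := key x y hxy
    rw [hsum] at heq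
    set D := (univ.filter fun i => F i r0 x ≠ F i r0 y).card with hD
    have hDZ : (D : ℤ) = 8*(u:ℤ)^2 + 6*u + 1 := by
      rw [hkZ] at heq
      have : ((n:ℤ)) = 4*(u:ℤ) + 2 := by exact_mod_cast congrArg (Nat.cast : ℕ → ℤ) hu
      rw [this] at heq
      linarith
    have hDN : D = 8*u^2 + 6*u + 1 := by exact_mod_cast hDZ
    obtain ⟨s, hs⟩ : ∃ s, u^2 = s := ⟨_, rfl⟩
    rw [hs] at hDN
    omega
  -- the three columns
  have h0 : (0:ℕ) < n := by omega
  have h1 : (1:ℕ) < n := by omega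
  have h2 : (2:ℕ) < n := by omega
  set x0 : Fin n := ⟨0, h0⟩ with hx0def
  set x1 : Fin n := ⟨1, h1⟩ with hx1def
  set x2 : Fin n := ⟨2, h2⟩ with hx2def
  have hx01 : x0 ≠ x1 := by simp [hx0def, hx1def, Fin.ext_iff]
  have hx12 : x1 ≠ x2 := by simp [hx1def, hx2def, Fin.ext_iff]
  have hx02 : x0 ≠ x2 := by simp [hx0def, hx2def, Fin.ext_iff]
  -- cast disagreement counts into ZMod 2
  have castZ : ∀ x y : Fin n,
      (((univ.filter fun i => F i r0 x ≠ F i r0 y).card : ℕ) : ZMod 2)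
      = ∑ i, (((F i r0 x).val : ZMod 2) + ((F i r0 y).val : ZMod 2)) := by
    intro x y
    have tab2 : ∀ s t : Fin 2, (if s ≠ t then (1:ZMod 2) else 0)
        = (s.val : ZMod 2) + (t.val : ZMod 2) := by decide
    rw [Finset.card_filter, Nat.cast_sum]
    apply Finset.sum_congr rfl
    intro i _
    rw [apply_ite (Nat.cast : ℕ → ZMod 2)]
    simp only [Nat.cast_one, Nat.cast_zero]
    exact tab2 _ _
  have hone : ∀ x y : Fin n, x ≠ y →
      (((univ.filter fun i => F i r0 x ≠ F i r0 y).card : ℕ) : ZMod 2) = 1 := by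
    intro x y hxy
    rw [← ZMod.natCast_mod _ 2, parity x y hxy]
    rfl
  have helper : ∀ a b c : ZMod 2, (a + b) + (b + c) + (a + c) = 0 := by decide
  have hzero :
      (((univ.filter fun i => F i r0 x0 ≠ F i r0 x1).card : ℕ) : ZMod 2)
      + (((univ.filter fun i => F i r0 x1 ≠ F i r0 x2).card : ℕ) : ZMod 2)
      + (((univ.filter fun i => F i r0 x0 ≠ F i r0 x2).card : ℕ) : ZMod 2)
      = 0 := by
    rw [castZ, castZ, castZ, ← Finset.sum_add_distrib, ← Finset.sum_add_distrib]
    apply Finset.sum_eq_zero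
    intro i _
    exact helper _ _ _
  rw [hone _ _ hx01, hone _ _ hx12, hone _ _ hx02] at hzero
  exact absurd hzero (by decide)
end

section
/- Let {F_1,...,F_k} be a complete set of (n-1)^2 mutually orthogonal binary frequency squares of order n. For each square F_i and each symbol s ∈ {0,1}, let B_{s,i} be the set of columns containing s in the first row of F_i. Then the multiset of these 2(n-1)^2 blocks forms a resolvable (n, n/2, (n-1)(n-2)/2)-design on the column set. -/
open Finset

lemma fin2cases (a : Fin 2) : a = 0 ∨ a = 1 := by
  rcases a with ⟨a, ha⟩
  interval_cases a <;> simp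

lemma fin2_eq_zero_iff (a : Fin 2) : a = 0 ↔ ¬ a = 1 := by
  rcases fin2cases a with h | h <;> subst h <;> simp

/-- sign vector -/
noncomputable def sg (a : Fin 2) : ℝ := if a = 1 then 1 else -1

lemma sum_range_ite (n m : ℕ) (hm : m < n) (A B : ℝ) :
    ∑ j ∈ range n, (if j = m then A else if j < m then B else 0) = A + m * B := by
  have h1 : range n = range (m+1) ∪ Finset.Ico (m+1) n := by
    rw [range_eq_Ico, range_eq_Ico, Finset.Ico_union_Ico_eq_Ico (by omega) (by omega)]
  rw [h1, Finset.sum_union (by simp [Finset.disjoint_left]; omega)]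
  have h2 : ∑ j ∈ Finset.Ico (m+1) n, (if j = m then A else if j < m then B else 0) = 0 := by
    apply Finset.sum_eq_zero
    intro j hj
    simp only [Finset.mem_Ico] at hj
    rw [if_neg (by omega), if_neg (by omega)]
  rw [h2, add_zero, Finset.sum_range_succ, if_pos rfl]
  have h3 : ∑ j ∈ range m, (if j = m then A else if j < m then B else 0) = m * B := by
    rw [Finset.sum_congr rfl (fun j hj => ?_), Finset.sum_const, card_range, nsmul_eq_mul]
    rw [Finset.mem_range] at hj
    rw [if_neg (by omega), if_pos hj]
  rw [h3]; ring

/-- Helmert-type vector on columns -/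
noncomputable def hel (n : ℕ) (k : Fin (n-1)) (c : Fin n) : ℝ :=
  if (c : ℕ) = (k : ℕ) + 1 then 1 else
    if (c : ℕ) < (k : ℕ) + 1 then -(1/(((k:ℕ):ℝ)+1)) else 0

lemma hel_lt (n : ℕ) (k : Fin (n-1)) : (k : ℕ) + 1 < n := by
  have := k.isLt; omega

lemma hel_sum (n : ℕ) (k : Fin (n-1)) : ∑ c : Fin n, hel n k c = 0 := by
  unfold hel
  rw [Fin.sum_univ_eq_sum_range
    (fun j => if j = (k:ℕ)+1 then (1:ℝ) else if j < (k:ℕ)+1 then -(1/(((k:ℕ):ℝ)+1)) else 0) n,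
    sum_range_ite n ((k:ℕ)+1) (hel_lt n k)]
  have : ((k:ℕ):ℝ) + 1 ≠ 0 := by positivity
  field_simp
  push_cast
  ring

lemma hel_sq (n : ℕ) (k : Fin (n-1)) :
    ∑ c : Fin n, hel n k c * hel n k c = 1 + 1/(((k:ℕ):ℝ)+1) := by
  have hpt : ∀ c : Fin n, hel n k c * hel n k c =
      if (c : ℕ) = (k : ℕ) + 1 then (1:ℝ) else if (c : ℕ) < (k : ℕ) + 1
        then (1/(((k:ℕ):ℝ)+1)) * (1/(((k:ℕ):ℝ)+1)) else 0 := by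
    intro c; unfold hel; split_ifs <;> ring
  rw [Finset.sum_congr rfl (fun c _ => hpt c)]
  rw [Fin.sum_univ_eq_sum_range
    (fun j => if j = (k:ℕ)+1 then (1:ℝ) else if j < (k:ℕ)+1
      then (1/(((k:ℕ):ℝ)+1)) * (1/(((k:ℕ):ℝ)+1)) else 0) n,
    sum_range_ite n ((k:ℕ)+1) (hel_lt n k)]
  have : ((k:ℕ):ℝ) + 1 ≠ 0 := by positivity
  field_simp
  push_cast
  ring

lemma hel_ortho (n : ℕ) (k k' : Fin (n-1)) (hkk : (k:ℕ) < (k':ℕ)) :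
    ∑ c : Fin n, hel n k c * hel n k' c = 0 := by
  have hpt : ∀ c : Fin n, hel n k c * hel n k' c =
      if (c : ℕ) = (k : ℕ) + 1 then -(1/(((k':ℕ):ℝ)+1)) else if (c : ℕ) < (k : ℕ) + 1
        then (1/(((k:ℕ):ℝ)+1)) * (1/(((k':ℕ):ℝ)+1)) else 0 := by
    intro c; unfold hel
    split_ifs <;> first | (exfalso; omega) | ring
  rw [Finset.sum_congr rfl (fun c _ => hpt c)]
  rw [Fin.sum_univ_eq_sum_range
    (fun j => if j = (k:ℕ)+1 then -(1/(((k':ℕ):ℝ)+1)) else if j < (k:ℕ)+1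
      then (1/(((k:ℕ):ℝ)+1)) * (1/(((k':ℕ):ℝ)+1)) else (0:ℝ)) n,
    sum_range_ite n ((k:ℕ)+1) (hel_lt n k)]
  have h1 : ((k:ℕ):ℝ) + 1 ≠ 0 := by positivity
  have h2 : ((k':ℕ):ℝ) + 1 ≠ 0 := by positivity
  field_simp
  push_cast
  ring

noncomputable def dvec (n : ℕ) (t : Fin n) (c : Fin n) : ℝ :=
  (if c = t then 1 else 0) - 1/n

lemma dvec_sum (n : ℕ) (hn : 0 < n) (t : Fin n) : ∑ c : Fin n, dvec n t c = 0 := by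
  unfold dvec
  rw [Finset.sum_sub_distrib, Finset.sum_ite_eq' univ t (fun _ => (1:ℝ)), if_pos (mem_univ t),
    Finset.sum_const, card_univ, Fintype.card_fin, nsmul_eq_mul]
  have : (n:ℝ) ≠ 0 := by positivity
  field_simp
  norm_num

lemma dvec_mul_sum (n : ℕ) (hn : 0 < n) (t : Fin n) (f : Fin n → ℝ) (hf : ∑ c : Fin n, f c = 0) :
    ∑ c : Fin n, dvec n t c * f c = f t := by
  unfold dvec
  have hpt : ∀ c : Fin n, ((if c = t then (1:ℝ) else 0) - 1/n) * f c
      = (if c = t then f c else 0) - (1/n) * f c := by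
    intro c; split_ifs <;> ring
  rw [Finset.sum_congr rfl (fun c _ => hpt c), Finset.sum_sub_distrib,
    Finset.sum_ite_eq' univ t f, if_pos (mem_univ t), ← Finset.mul_sum, hf, mul_zero, sub_zero]

lemma dvec_dvec_sum (n : ℕ) (hn : 0 < n) (t t' : Fin n) (htt' : t ≠ t') :
    ∑ c : Fin n, dvec n t' c * dvec n t c = -(1/n) := by
  rw [dvec_mul_sum n hn t' (dvec n t) (dvec_sum n hn t)]
  unfold dvec
  rw [if_neg htt'.symm]  -- condition: t' = t
  ring

lemma dvec_self_sum (n : ℕ) (hn : 0 < n) (t : Fin n) :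
    ∑ c : Fin n, dvec n t c * dvec n t c = 1 - 1/n := by
  rw [dvec_mul_sum n hn t (dvec n t) (dvec_sum n hn t)]
  unfold dvec
  rw [if_pos rfl]

lemma key_sum (n : ℕ) (hn2 : 2 ≤ n) (H : Fin ((n-1)^2) → Fin n → Fin n → ℝ)
    (hrow : ∀ i r, ∑ c : Fin n, H i r c = 0)
    (hcol : ∀ i c, ∑ r : Fin n, H i r c = 0)
    (hsq : ∀ i r c, H i r c * H i r c = 1)
    (horthH : ∀ i j, i ≠ j → ∑ p : Fin n × Fin n, H i p.1 p.2 * H j p.1 p.2 = 0)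
    (r0 x y : Fin n) (hxy : x ≠ y) :
    ∑ i : Fin ((n-1)^2), H i r0 x * H i r0 y = -((n:ℝ) - 1) := by
  have hn0 : 0 < n := by omega
  have hnR : (n:ℝ) ≠ 0 := by positivity
  set b : (Fin ((n-1)^2) ⊕ (Fin n ⊕ Fin (n-1))) → (Fin n × Fin n → ℝ) :=
    Sum.elim (fun i p => H i p.1 p.2)
      (Sum.elim (fun r p => if p.1 = r then (1:ℝ) else 0) (fun k p => hel n k p.2)) with hbdef
  -- bilinearity helper
  have hip_sum : ∀ (s : Finset (Fin ((n-1)^2) ⊕ (Fin n ⊕ Fin (n-1))))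
      (g : Fin ((n-1)^2) ⊕ (Fin n ⊕ Fin (n-1)) → ℝ)
      (w : Fin n × Fin n → ℝ),
      ∑ p : Fin n × Fin n, (∑ j ∈ s, g j • b j) p * w p
        = ∑ j ∈ s, g j * ∑ p : Fin n × Fin n, b j p * w p := by
    intro s g w
    simp only [Finset.sum_apply, Pi.smul_apply, smul_eq_mul, Finset.sum_mul]
    rw [Finset.sum_comm]
    refine Finset.sum_congr rfl fun j _ => ?_
    rw [Finset.mul_sum]
    exact Finset.sum_congr rfl fun p _ => by ring
  have flip : ∀ u v : Fin n × Fin n → ℝ, ∑ p : Fin n × Fin n, u p * v p = ∑ p : Fin n × Fin n, v p * u p :=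
    fun u v => Finset.sum_congr rfl (fun p _ => mul_comm _ _)
  -- orthogonality cases
  have oAR : ∀ i r, ∑ p : Fin n × Fin n, H i p.1 p.2 * (if p.1 = r then (1:ℝ) else 0) = 0 := by
    intro i r
    rw [Fintype.sum_prod_type]
    dsimp only
    apply Finset.sum_eq_zero
    intro a _
    by_cases ha : a = r <;> simp [ha, hrow]
  have oAD : ∀ i k, ∑ p : Fin n × Fin n, H i p.1 p.2 * hel n k p.2 = 0 := by
    intro i k
    rw [Fintype.sum_prod_type]
    dsimp only
    rw [Finset.sum_comm]
    apply Finset.sum_eq_zero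
    intro c _
    rw [← Finset.sum_mul, hcol, zero_mul]
  have oRR : ∀ r r' : Fin n, r ≠ r' →
      ∑ p : Fin n × Fin n, (if p.1 = r then (1:ℝ) else 0) * (if p.1 = r' then 1 else 0) = 0 := by
    intro r r' hrr'
    apply Finset.sum_eq_zero
    intro p _
    by_cases h1 : p.1 = r
    · by_cases h2 : p.1 = r'
      · exact absurd (h1.symm.trans h2) hrr'
      · simp [h2]
    · simp [h1]
  have oRD : ∀ (r : Fin n) (k : Fin (n-1)),
      ∑ p : Fin n × Fin n, (if p.1 = r then (1:ℝ) else 0) * hel n k p.2 = 0 := by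
    intro r k
    rw [Fintype.sum_prod_type]
    dsimp only
    apply Finset.sum_eq_zero
    intro a _
    by_cases ha : a = r <;> simp [ha, hel_sum]
  have oDD : ∀ k k' : Fin (n-1), k ≠ k' →
      ∑ p : Fin n × Fin n, hel n k p.2 * hel n k' p.2 = 0 := by
    intro k k' hkk'
    rw [Fintype.sum_prod_type]
    dsimp only
    apply Finset.sum_eq_zero
    intro a _
    rcases Nat.lt_trichotomy (k:ℕ) (k':ℕ) with hlt | heq | hgt
    · exact hel_ortho n k k' hlt
    · exact absurd (Fin.ext heq) hkk'
    · rw [Finset.sum_congr rfl (fun c _ => mul_comm (hel n k c) (hel n k' c))]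
      exact hel_ortho n k' k hgt
  -- norms
  have normA : ∀ i, ∑ p : Fin n × Fin n, H i p.1 p.2 * H i p.1 p.2 = (n:ℝ)^2 := by
    intro i
    rw [Finset.sum_congr rfl (fun p _ => hsq i p.1 p.2), Finset.sum_const, card_univ,
      Fintype.card_prod, Fintype.card_fin, nsmul_eq_mul]
    push_cast; ring
  have normR : ∀ r : Fin n, ∑ p : Fin n × Fin n,
      (if p.1 = r then (1:ℝ) else 0) * (if p.1 = r then 1 else 0) = n := by
    intro r
    rw [Fintype.sum_prod_type]
    dsimp only
    have : ∀ a : Fin n, ∑ _c : Fin n, (if a = r then (1:ℝ) else 0) * (if a = r then 1 else 0)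
        = (n:ℝ) * (if a = r then 1 else 0) := by
      intro a
      rw [Finset.sum_const, card_univ, Fintype.card_fin, nsmul_eq_mul]
      split_ifs <;> ring
    rw [Finset.sum_congr rfl (fun a _ => this a), ← Finset.mul_sum,
      Finset.sum_ite_eq' univ r (fun _ => (1:ℝ)), if_pos (mem_univ r), mul_one]
  have normD : ∀ k : Fin (n-1), ∑ p : Fin n × Fin n, hel n k p.2 * hel n k p.2
      = (n:ℝ) * (1 + 1/((k:ℕ)+1)) := by
    intro k
    rw [Fintype.sum_prod_type]
    dsimp only
    rw [Finset.sum_congr rfl (fun a _ => hel_sq n k), Finset.sum_const, card_univ,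
      Fintype.card_fin, nsmul_eq_mul]
  -- norms nonzero
  have hnormne : ∀ j, ∑ p : Fin n × Fin n, b j p * b j p ≠ 0 := by
    rintro (i | r | k)
    · simp only [hbdef, Sum.elim_inl]
      rw [normA]; positivity
    · simp only [hbdef, Sum.elim_inr, Sum.elim_inl]
      rw [normR]; positivity
    · simp only [hbdef, Sum.elim_inr]
      rw [normD]; positivity
  -- pairwise orthogonality
  have horth : ∀ j j', j ≠ j' → ∑ p : Fin n × Fin n, b j p * b j' p = 0 := by
    rintro (i | r | k) (i' | r' | k') hne <;>
      simp only [hbdef, Sum.elim_inl, Sum.elim_inr]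
    · exact horthH i i' (by simpa using hne)
    · exact oAR i r'
    · exact oAD i k'
    · rw [flip]; exact oAR i' r
    · exact oRR r r' (by simpa using hne)
    · exact oRD r k'
    · rw [flip]; exact oAD i' k
    · rw [flip]; exact oRD r' k
    · exact oDD k k' (by simpa using hne)
  -- evaluation of b
  have e1 : ∀ i, b (Sum.inl i) = fun p : Fin n × Fin n => H i p.1 p.2 := fun _ => rfl
  have e2 : ∀ r, b (Sum.inr (Sum.inl r)) = fun p : Fin n × Fin n => if p.1 = r then (1:ℝ) else 0 :=
    fun _ => rfl
  have e3 : ∀ k, b (Sum.inr (Sum.inr k)) = fun p : Fin n × Fin n => hel n k p.2 := fun _ => rfl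
  -- linear independence
  have li : LinearIndependent ℝ b := by
    rw [linearIndependent_iff']
    intro s g hg j hj
    have h0 := congrArg (fun v : Fin n × Fin n → ℝ => ∑ p : Fin n × Fin n, v p * b j p) hg
    rw [hip_sum s g (b j), Finset.sum_eq_single j
      (fun j' _ hne => by rw [horth j' j hne, mul_zero])
      (fun habs => absurd hj habs)] at h0
    have h1 : ∑ p : Fin n × Fin n, (0 : Fin n × Fin n → ℝ) p * b j p = 0 := by
      simp
    rw [h1] at h0
    exact (mul_eq_zero.mp h0).resolve_right (hnormne j)
  have hcard : Fintype.card (Fin ((n-1)^2) ⊕ (Fin n ⊕ Fin (n-1)))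
      = Module.finrank ℝ (Fin n × Fin n → ℝ) := by
    simp only [Module.finrank_fintype_fun_eq_card, Fintype.card_prod, Fintype.card_sum,
      Fintype.card_fin]
    obtain ⟨m, rfl⟩ : ∃ m, n = m + 2 := ⟨n - 2, by omega⟩
    have hm : m + 2 - 1 = m + 1 := rfl
    rw [hm]; ring
  have : Nonempty (Fin ((n-1)^2) ⊕ (Fin n ⊕ Fin (n-1))) := ⟨Sum.inr (Sum.inl ⟨0, hn0⟩)⟩
  set B : Module.Basis _ ℝ (Fin n × Fin n → ℝ) := basisOfLinearIndependentOfCardEqFinrank li hcard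
    with hBdef
  have hBcoe : ⇑B = b := coe_basisOfLinearIndependentOfCardEqFinrank li hcard
  set g : (Fin ((n-1)^2) ⊕ (Fin n ⊕ Fin (n-1))) → ℝ :=
    fun j => B.repr (fun p : Fin n × Fin n => dvec n r0 p.1 * dvec n x p.2) j with hgdef
  have hsum_repr : (∑ j : Fin ((n-1)^2) ⊕ (Fin n ⊕ Fin (n-1)), g j • b j)
      = fun p : Fin n × Fin n => dvec n r0 p.1 * dvec n x p.2 := by
    have := B.sum_repr (fun p : Fin n × Fin n => dvec n r0 p.1 * dvec n x p.2)
    rw [hBcoe] at this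
    exact this
  -- the u-inner-products
  have hu_inl : ∀ (z : Fin n) (i : Fin ((n-1)^2)),
      ∑ p : Fin n × Fin n, (dvec n r0 p.1 * dvec n z p.2) * H i p.1 p.2 = H i r0 z := by
    intro z i
    rw [Fintype.sum_prod_type]
    dsimp only
    have hin : ∀ a : Fin n, ∑ c : Fin n, (dvec n r0 a * dvec n z c) * H i a c
        = dvec n r0 a * H i a z := by
      intro a
      rw [Finset.sum_congr rfl (fun c _ => show (dvec n r0 a * dvec n z c) * H i a c
          = dvec n r0 a * (dvec n z c * H i a c) from by ring), ← Finset.mul_sum,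
        dvec_mul_sum n hn0 z (fun c => H i a c) (hrow i a)]
    rw [Finset.sum_congr rfl (fun a _ => hin a),
      dvec_mul_sum n hn0 r0 (fun a => H i a z) (hcol i z)]
  have hu_R : ∀ (z : Fin n) (r : Fin n),
      ∑ p : Fin n × Fin n, (dvec n r0 p.1 * dvec n z p.2) * (if p.1 = r then (1:ℝ) else 0) = 0 := by
    intro z r
    rw [Fintype.sum_prod_type]
    dsimp only
    apply Finset.sum_eq_zero
    intro a _
    rw [Finset.sum_congr rfl (fun c _ => show (dvec n r0 a * dvec n z c) * (if a = r then (1:ℝ) else 0)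
        = (dvec n r0 a * (if a = r then (1:ℝ) else 0)) * dvec n z c from by ring),
      ← Finset.mul_sum, dvec_sum n hn0 z, mul_zero]
  have hu_D : ∀ (z : Fin n) (k : Fin (n-1)),
      ∑ p : Fin n × Fin n, (dvec n r0 p.1 * dvec n z p.2) * hel n k p.2 = 0 := by
    intro z k
    rw [Fintype.sum_prod_type]
    dsimp only
    have hin : ∀ a : Fin n, ∑ c : Fin n, (dvec n r0 a * dvec n z c) * hel n k c
        = dvec n r0 a * ∑ c : Fin n, dvec n z c * hel n k c := by
      intro a
      rw [Finset.mul_sum]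
      exact Finset.sum_congr rfl fun c _ => by ring
    rw [Finset.sum_congr rfl (fun a _ => hin a), ← Finset.sum_mul, dvec_sum n hn0 r0, zero_mul]
  have huu' : ∑ p : Fin n × Fin n, (dvec n r0 p.1 * dvec n x p.2) * (dvec n r0 p.1 * dvec n y p.2)
      = (1 - 1/n) * (-(1/(n:ℝ))) := by
    rw [Fintype.sum_prod_type]
    dsimp only
    have hin : ∀ a : Fin n, ∑ c : Fin n, (dvec n r0 a * dvec n x c) * (dvec n r0 a * dvec n y c)
        = (dvec n r0 a * dvec n r0 a) * ∑ c : Fin n, dvec n x c * dvec n y c := by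
      intro a
      rw [Finset.mul_sum]
      exact Finset.sum_congr rfl fun c _ => by ring
    rw [Finset.sum_congr rfl (fun a _ => hin a), ← Finset.sum_mul, dvec_self_sum n hn0 r0,
      dvec_dvec_sum n hn0 y x hxy.symm]
  -- coefficients
  have hg : ∀ j0, g j0 * (∑ p : Fin n × Fin n, b j0 p * b j0 p)
      = ∑ p : Fin n × Fin n, (dvec n r0 p.1 * dvec n x p.2) * b j0 p := by
    intro j0
    have h0 := congrArg (fun v : Fin n × Fin n → ℝ => ∑ p : Fin n × Fin n, v p * b j0 p) hsum_repr
    rw [hip_sum univ g (b j0), Finset.sum_eq_single j0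
      (fun j' _ hne => by rw [horth j' j0 hne, mul_zero])
      (fun habs => absurd (mem_univ j0) habs)] at h0
    exact h0
  have hgR : ∀ r : Fin n, g (Sum.inr (Sum.inl r)) = 0 := by
    intro r
    have h1 := hg (Sum.inr (Sum.inl r))
    rw [e2 r] at h1
    dsimp only at h1
    rw [normR r, hu_R x r] at h1
    exact (mul_eq_zero.mp h1).resolve_right hnR
  have hgD : ∀ k : Fin (n-1), g (Sum.inr (Sum.inr k)) = 0 := by
    intro k
    have h1 := hg (Sum.inr (Sum.inr k))
    rw [e3 k] at h1
    dsimp only at h1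
    rw [normD k, hu_D x k] at h1
    have hne : (n:ℝ) * (1 + 1/((k:ℕ)+1)) ≠ 0 := by positivity
    exact (mul_eq_zero.mp h1).resolve_right hne
  have hgA : ∀ i, g (Sum.inl i) * (n:ℝ)^2 = H i r0 x := by
    intro i
    have h1 := hg (Sum.inl i)
    rw [e1 i] at h1
    dsimp only at h1
    rw [normA i, hu_inl x i] at h1
    exact h1
  -- the final computation
  have h0 := congrArg
    (fun v : Fin n × Fin n → ℝ => ∑ p : Fin n × Fin n, v p * (dvec n r0 p.1 * dvec n y p.2))
    hsum_repr
  rw [hip_sum univ g (fun p => dvec n r0 p.1 * dvec n y p.2), huu'] at h0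
  rw [Fintype.sum_sum_type, Fintype.sum_sum_type] at h0
  rw [Finset.sum_eq_zero (fun (r : Fin n) (_ : r ∈ univ) => by rw [hgR r, zero_mul]),
    Finset.sum_eq_zero (fun (k : Fin (n-1)) (_ : k ∈ univ) => by rw [hgD k, zero_mul])] at h0
  simp only [add_zero, zero_add] at h0
  have hterm : ∀ i, g (Sum.inl i) * ∑ p : Fin n × Fin n, b (Sum.inl i) p * (dvec n r0 p.1 * dvec n y p.2)
      = g (Sum.inl i) * H i r0 y := by
    intro i
    rw [e1 i]
    dsimp only
    rw [flip (fun p : Fin n × Fin n => H i p.1 p.2) (fun p => dvec n r0 p.1 * dvec n y p.2)]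
    try dsimp only
    rw [hu_inl y i]
  rw [Finset.sum_congr rfl (fun i _ => hterm i)] at h0
  -- h0 : ∑ i, g (Sum.inl i) * H i r0 y = (1 - 1/n) * (-(1/n))
  have hstep : ∑ i : Fin ((n-1)^2), H i r0 x * H i r0 y
      = (∑ i : Fin ((n-1)^2), g (Sum.inl i) * H i r0 y) * (n:ℝ)^2 := by
    rw [Finset.sum_mul]
    exact Finset.sum_congr rfl fun i _ => by rw [← hgA i]; ring
  rw [hstep, h0]
  have h1 : (n:ℝ) * (1/n) = 1 := by field_simp
  linear_combination ((n:ℝ) * (1/n) - n + 1) * h1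

lemma sg_zero : sg 0 = -1 := by rw [sg, if_neg (by decide)]

lemma sg_one : sg 1 = 1 := by rw [sg, if_pos rfl]

lemma pair_indicator_sum (x y : Fin 2) :
    ∑ ab : Fin 2 × Fin 2, (if (x = ab.1 ∧ y = ab.2) then (1:ℕ) else 0) = 1 := by
  rcases fin2cases x with h | h <;> rcases fin2cases y with h' | h' <;> subst h <;> subst h' <;>
    decide

lemma orth_even {n : ℕ} {F G : Fin n → Fin n → Fin 2} (hFG : OrthFS n F G) : n % 2 = 0 := by
  have h1 : (n^2 : ℕ) = ∑ p : Fin n × Fin n, (1:ℕ) := by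
    rw [Finset.sum_const, card_univ, Fintype.card_prod, Fintype.card_fin, smul_eq_mul, mul_one, sq]
  have h2 : ∀ p : Fin n × Fin n, (1:ℕ) =
      ∑ ab : Fin 2 × Fin 2, (if (F p.1 p.2 = ab.1 ∧ G p.1 p.2 = ab.2) then (1:ℕ) else 0) :=
    fun p => (pair_indicator_sum _ _).symm
  rw [Finset.sum_congr rfl (fun p _ => h2 p), Finset.sum_comm] at h1
  have h3 : ∀ ab : Fin 2 × Fin 2, (∑ p : Fin n × Fin n,
      if (F p.1 p.2 = ab.1 ∧ G p.1 p.2 = ab.2) then (1:ℕ) else 0) = n^2/4 := by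
    intro ab
    rw [← Finset.card_filter]
    exact hFG ab.1 ab.2
  rw [Finset.sum_congr rfl (fun ab _ => h3 ab), Finset.sum_const, card_univ] at h1
  have h4 : (n^2 : ℕ) = 4 * (n^2/4) := by simpa using h1
  have h5 : Even (n^2) := ⟨2*(n^2/4), by omega⟩
  exact Nat.even_iff.mp (Nat.even_pow.mp h5).1

lemma sum_sg_eq (m : ℕ) (f : Fin m → Fin 2) :
    ∑ c : Fin m, sg (f c) = 2 * (((univ.filter fun c => f c = 1).card : ℕ) : ℝ) - m := by
  have hpt : ∀ c, sg (f c) = 2 * (if f c = 1 then (1:ℝ) else 0) - 1 := by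
    intro c; unfold sg; split_ifs <;> ring
  rw [Finset.sum_congr rfl (fun c _ => hpt c), Finset.sum_sub_distrib, ← Finset.mul_sum,
    Finset.sum_boole, Finset.sum_const, card_univ, Fintype.card_fin, nsmul_eq_mul, mul_one]

lemma mofs_pair_count (n : ℕ) (hn2 : 2 ≤ n) (hev : n % 2 = 0)
    (F : Fin ((n - 1) ^ 2) → Fin n → Fin n → Fin 2)
    (h : IsMOFS n ((n - 1) ^ 2) F) (r0 x y : Fin n) (hxy : x ≠ y) :
    2 * (univ.filter fun i : Fin ((n-1)^2) => F i r0 x = F i r0 y).card = (n-1)*(n-2) := by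
  have hn0 : 0 < n := by omega
  have hhalf : (2:ℝ) * ((n/2 : ℕ) : ℝ) = n := by
    have h2 : 2 * (n/2) = n := by omega
    calc (2:ℝ) * ((n/2:ℕ):ℝ) = ((2 * (n/2) : ℕ) : ℝ) := by push_cast; ring
    _ = n := by rw [h2]
  have hrow : ∀ i r, ∑ c : Fin n, sg (F i r c) = 0 := by
    intro i r
    rw [sum_sg_eq n (fun c => F i r c), (h.1 i).1 r]
    linarith [hhalf]
  have hcol : ∀ i c, ∑ r : Fin n, sg (F i r c) = 0 := by
    intro i c
    rw [sum_sg_eq n (fun r => F i r c), (h.1 i).2 c]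
    linarith [hhalf]
  have hsq : ∀ i r c, sg (F i r c) * sg (F i r c) = 1 := by
    intro i r c; unfold sg; split_ifs <;> norm_num
  have horthH : ∀ i j, i ≠ j →
      ∑ p : Fin n × Fin n, sg (F i p.1 p.2) * sg (F j p.1 p.2) = 0 := by
    intro i j hij
    have hfib := Finset.sum_fiberwise (univ : Finset (Fin n × Fin n))
      (fun p => (F i p.1 p.2, F j p.1 p.2)) (fun p => sg (F i p.1 p.2) * sg (F j p.1 p.2))
    rw [← hfib]
    have hfbr : ∀ ab : Fin 2 × Fin 2,
        (∑ p ∈ univ.filter (fun p : Fin n × Fin n => (F i p.1 p.2, F j p.1 p.2) = ab),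
          sg (F i p.1 p.2) * sg (F j p.1 p.2)) = ((n^2/4 : ℕ) : ℝ) * (sg ab.1 * sg ab.2) := by
      intro ab
      have hconst : ∀ p ∈ univ.filter (fun p : Fin n × Fin n => (F i p.1 p.2, F j p.1 p.2) = ab),
          sg (F i p.1 p.2) * sg (F j p.1 p.2) = sg ab.1 * sg ab.2 := by
        intro p hp
        rw [Finset.mem_filter] at hp
        have ha : F i p.1 p.2 = ab.1 := (Prod.ext_iff.mp hp.2).1
        have hb : F j p.1 p.2 = ab.2 := (Prod.ext_iff.mp hp.2).2
        rw [ha, hb]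
      have hcf : (univ.filter (fun p : Fin n × Fin n => (F i p.1 p.2, F j p.1 p.2) = ab)).card
          = n^2/4 := by
        rw [show (univ.filter (fun p : Fin n × Fin n => (F i p.1 p.2, F j p.1 p.2) = ab))
            = univ.filter (fun p : Fin n × Fin n => F i p.1 p.2 = ab.1 ∧ F j p.1 p.2 = ab.2) from
          Finset.filter_congr (fun p _ => by simp [Prod.ext_iff])]
        exact h.2 i j hij ab.1 ab.2
      rw [Finset.sum_congr rfl hconst, Finset.sum_const, nsmul_eq_mul, hcf]
    rw [Finset.sum_congr rfl (fun ab _ => hfbr ab), ← Finset.mul_sum]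
    have hz : ∑ ab : Fin 2 × Fin 2, sg ab.1 * sg ab.2 = 0 := by
      rw [Fintype.sum_prod_type]
      norm_num [Fin.sum_univ_two, sg_zero, sg_one]
    rw [hz, mul_zero]
  have hkey := key_sum n hn2 (fun i r c => sg (F i r c)) hrow hcol hsq horthH r0 x y hxy
  have hpt : ∀ i : Fin ((n-1)^2), sg (F i r0 x) * sg (F i r0 y)
      = 2 * (if F i r0 x = F i r0 y then (1:ℝ) else 0) - 1 := by
    intro i
    rcases fin2cases (F i r0 x) with h1 | h1 <;> rcases fin2cases (F i r0 y) with h2 | h2 <;>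
      rw [h1, h2] <;> norm_num [sg_zero, sg_one, Fin.ext_iff]
  rw [Finset.sum_congr rfl (fun i _ => hpt i), Finset.sum_sub_distrib, ← Finset.mul_sum,
    Finset.sum_boole, Finset.sum_const, card_univ, Fintype.card_fin, nsmul_eq_mul, mul_one] at hkey
  have hcast1 : (((n-1)^2 : ℕ) : ℝ) = ((n:ℝ) - 1)^2 := by
    rw [Nat.cast_pow, Nat.cast_sub (by omega : 1 ≤ n), Nat.cast_one]
  rw [hcast1] at hkey
  have hgoal : ((2 * (univ.filter fun i : Fin ((n-1)^2) => F i r0 x = F i r0 y).card : ℕ) : ℝ)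
      = (((n-1)*(n-2) : ℕ) : ℝ) := by
    rw [Nat.cast_mul (n-1), Nat.cast_sub (by omega : 1 ≤ n), Nat.cast_sub (by omega : 2 ≤ n)]
    push_cast
    linear_combination hkey
  exact_mod_cast hgoal

lemma cardpair_eq (K : ℕ) (f g : Fin K → Fin 2) :
    (univ.filter fun b : Fin K × Fin 2 => f b.1 = b.2 ∧ g b.1 = b.2).card
      = (univ.filter fun i : Fin K => f i = g i).card := by
  rw [Finset.card_filter, Finset.card_filter, Fintype.sum_prod_type]
  apply Finset.sum_congr rfl
  intro i _
  dsimp only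
  rcases fin2cases (f i) with h1 | h1 <;> rcases fin2cases (g i) with h2 | h2 <;>
    simp only [h1, h2] <;> decide

/-- Given a complete set of (n-1)^2 MOFS of order n, the blocks
B_{s,i} = {c : F_i[first row, c] = s} (for s ∈ {0,1} and each square i)
form a resolvable (n, n/2, (n-1)(n-2)/2)-design on the columns:
every block has size n/2, every pair of distinct columns lies in exactly
(n-1)(n-2)/2 blocks, and for each i the two blocks B_{0,i}, B_{1,i} form a
parallel class partitioning the column set. -/
theorem stmt_13 (n : ℕ) (hn : 0 < n)
    (F : Fin ((n - 1) ^ 2) → Fin n → Fin n → Fin 2)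
    (h : IsMOFS n ((n - 1) ^ 2) F) :
    (∀ (i : Fin ((n - 1) ^ 2)) (s : Fin 2),
      (Finset.univ.filter fun c : Fin n => F i ⟨0, hn⟩ c = s).card = n / 2) ∧
    (∀ x y : Fin n, x ≠ y →
      (Finset.univ.filter fun b : Fin ((n - 1) ^ 2) × Fin 2 =>
        F b.1 ⟨0, hn⟩ x = b.2 ∧ F b.1 ⟨0, hn⟩ y = b.2).card =
          (n - 1) * (n - 2) / 2) ∧
    (∀ i : Fin ((n - 1) ^ 2),
      (Finset.univ.filter fun c : Fin n => F i ⟨0, hn⟩ c = 1) =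
        (Finset.univ.filter fun c : Fin n => F i ⟨0, hn⟩ c = 0)ᶜ) := by
  have hpart3 : ∀ i : Fin ((n - 1) ^ 2),
      (Finset.univ.filter fun c : Fin n => F i ⟨0, hn⟩ c = 1) =
        (Finset.univ.filter fun c : Fin n => F i ⟨0, hn⟩ c = 0)ᶜ := by
    intro i
    ext c
    simp only [Finset.mem_filter, Finset.mem_compl, Finset.mem_univ, true_and]
    constructor
    · intro h1 h0
      rw [h0] at h1
      exact absurd h1 (by decide)
    · intro h0
      rcases fin2cases (F i ⟨0,hn⟩ c) with h1 | h1
      · exact absurd h1 h0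
      · exact h1
  rcases eq_or_ne n 1 with rfl | hne1
  · refine ⟨?_, ?_, hpart3⟩
    · intro i s
      exact absurd i.isLt (by omega)
    · intro x y hxy
      exact absurd (Subsingleton.elim x y) hxy
  · have hev : n % 2 = 0 := by
      rcases Nat.lt_or_ge n 3 with h3 | h3
      · omega
      · have h2 : 2 ≤ n - 1 := by omega
        have h4 : 2^2 ≤ (n-1)^2 := Nat.pow_le_pow_left h2 2
        exact orth_even (h.2 ⟨0, by omega⟩ ⟨1, by omega⟩ (by simp [Fin.ext_iff]))
    have hn2 : 2 ≤ n := by omega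
    refine ⟨?_, ?_, hpart3⟩
    · intro i s
      rcases fin2cases s with h1 | h1 <;> subst h1
      · rw [show (univ.filter fun c : Fin n => F i ⟨0,hn⟩ c = 0)
            = (univ.filter fun c : Fin n => F i ⟨0,hn⟩ c = 1)ᶜ from ?_]
        · rw [Finset.card_compl, (h.1 i).1 ⟨0,hn⟩, Fintype.card_fin]
          omega
        · rw [hpart3 i, compl_compl]
      · exact (h.1 i).1 ⟨0, hn⟩
    · intro x y hxy
      have hm := mofs_pair_count n hn2 hev F h ⟨0,hn⟩ x y hxy
      rw [cardpair_eq ((n-1)^2) (fun i => F i ⟨0,hn⟩ x) (fun i => F i ⟨0,hn⟩ y)]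
      obtain ⟨M, hM⟩ : ∃ M, (n-1)*(n-2) = M := ⟨_, rfl⟩
      rw [hM] at hm ⊢
      omega
end

section
/- If λ is even, then every binary frequency square of type F(2λ; λ) has an orthogonal mate of the same type. -/
namespace Stmt15Aux

open Finset

variable {n : ℕ}

/-- Number of entries of `M` in row `r`. -/
def rdeg (M : Finset (Fin n × Fin n)) (r : Fin n) : ℕ :=
  (M.filter fun p => p.1 = r).card

/-- Number of entries of `M` in column `c`. -/
def cdeg (M : Finset (Fin n × Fin n)) (c : Fin n) : ℕ :=
  (M.filter fun p => p.2 = c).card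

lemma card_eq_sum_rdeg (M : Finset (Fin n × Fin n)) :
    M.card = ∑ r : Fin n, rdeg M r := by
  rw [Finset.card_eq_sum_card_fiberwise (f := Prod.fst) (t := Finset.univ)
    (fun x _ => mem_univ _)]
  rfl

/-- Hall's theorem: a `k`-regular bipartite graph (as a set of cells with all row and
column degrees equal to `k > 0`) contains a perfect matching. -/
lemma hall (M : Finset (Fin n × Fin n)) (k : ℕ) (hk : 0 < k)
    (hr : ∀ r, rdeg M r = k) (hc : ∀ c, cdeg M c = k) :
    ∃ σ : Equiv.Perm (Fin n), ∀ r, (r, σ r) ∈ M := by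
  set t : Fin n → Finset (Fin n) := fun r => univ.filter fun c => (r, c) ∈ M with ht
  have hcard : ∀ s : Finset (Fin n), s.card ≤ (s.biUnion t).card := by
    intro s
    set P := M.filter fun p => p.1 ∈ s with hP
    have h1 : P.card = k * s.card := by
      rw [Finset.card_eq_sum_card_fiberwise (f := Prod.fst) (t := s) (s := P)
        (fun p hp => (mem_filter.mp hp).2)]
      have heach : ∀ r ∈ s, (P.filter fun p => p.1 = r).card = k := by
        intro r hrs
        rw [hP, Finset.filter_filter]
        have : (M.filter fun p => p.1 ∈ s ∧ p.1 = r) = M.filter fun p => p.1 = r := by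
          apply Finset.filter_congr
          intro p _
          constructor
          · rintro ⟨_, h⟩; exact h
          · intro h; exact ⟨h ▸ hrs, h⟩
        rw [this]; exact hr r
      calc ∑ r ∈ s, (P.filter fun p => Prod.fst p = r).card
          = ∑ r ∈ s, k := Finset.sum_congr rfl heach
        _ = k * s.card := by rw [Finset.sum_const, smul_eq_mul, mul_comm]
    have h2 : P.card ≤ k * (s.biUnion t).card := by
      rw [Finset.card_eq_sum_card_fiberwise (f := Prod.snd) (t := s.biUnion t)
        (by
          intro p hp
          simp only [hP, Finset.mem_coe, mem_filter] at hp
          exact Finset.mem_biUnion.mpr ⟨p.1, hp.2, by simp [ht, hp.1]⟩)]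
      calc ∑ c ∈ s.biUnion t, (P.filter fun p => Prod.snd p = c).card
          ≤ ∑ c ∈ s.biUnion t, k := by
            apply Finset.sum_le_sum
            intro c _
            rw [← hc c]
            exact Finset.card_le_card
              (Finset.filter_subset_filter _ (Finset.filter_subset _ _))
        _ = k * (s.biUnion t).card := by rw [Finset.sum_const, smul_eq_mul, mul_comm]
    exact Nat.le_of_mul_le_mul_left (h1 ▸ h2) hk
  obtain ⟨f, hfinj, hf⟩ := (Finset.all_card_le_biUnion_card_iff_exists_injective t).mp hcard
  refine ⟨Equiv.ofBijective f (Finite.injective_iff_bijective.mp hfinj), fun r => ?_⟩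
  have := hf r
  rw [ht] at this
  simpa using this

/-- Removing a perfect matching from `M` decreases every row and column degree by one. -/
lemma deg_remove (M : Finset (Fin n × Fin n)) (σ : Equiv.Perm (Fin n))
    (hσ : ∀ r, (r, σ r) ∈ M) :
    (∀ r, rdeg (M \ univ.image fun i => ((i, σ i) : Fin n × Fin n)) r = rdeg M r - 1) ∧
    (∀ c, cdeg (M \ univ.image fun i => ((i, σ i) : Fin n × Fin n)) c = cdeg M c - 1) := by
  constructor
  · intro r
    have hset : ((M \ univ.image fun i => ((i, σ i) : Fin n × Fin n)).filter
        fun p => p.1 = r) = (M.filter fun p => p.1 = r).erase (r, σ r) := by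
      ext p
      simp only [mem_filter, mem_sdiff, mem_erase, mem_image, mem_univ, true_and]
      constructor
      · rintro ⟨⟨hpM, hnP⟩, h1⟩
        refine ⟨?_, hpM, h1⟩
        rintro rfl
        exact hnP ⟨r, rfl⟩
      · rintro ⟨hne, hpM, h1⟩
        refine ⟨⟨hpM, ?_⟩, h1⟩
        rintro ⟨i, rfl⟩
        exact hne (by rw [← h1])
    rw [rdeg, hset, Finset.card_erase_of_mem (by simp [hσ r]), rdeg]
  · intro c
    have hset : ((M \ univ.image fun i => ((i, σ i) : Fin n × Fin n)).filter
        fun p => p.2 = c) = (M.filter fun p => p.2 = c).erase (σ.symm c, c) := by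
      ext p
      simp only [mem_filter, mem_sdiff, mem_erase, mem_image, mem_univ, true_and]
      constructor
      · rintro ⟨⟨hpM, hnP⟩, h2⟩
        refine ⟨?_, hpM, h2⟩
        rintro rfl
        exact hnP ⟨σ.symm c, by simp⟩
      · rintro ⟨hne, hpM, h2⟩
        refine ⟨⟨hpM, ?_⟩, h2⟩
        rintro ⟨i, rfl⟩
        apply hne
        have : i = σ.symm c := by
          have : σ i = c := h2
          simp [← this]
        rw [this]
        simp
    rw [cdeg, hset, Finset.card_erase_of_mem (by simpa using hσ (σ.symm c)), cdeg]

/-- A `k`-regular set of cells contains an `m`-regular subset for every `m ≤ k`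
(by repeatedly removing perfect matchings). -/
lemma exists_sub : ∀ k : ℕ, ∀ m ≤ k, ∀ M : Finset (Fin n × Fin n),
    (∀ r, rdeg M r = k) → (∀ c, cdeg M c = k) →
    ∃ S, S ⊆ M ∧ (∀ r, rdeg S r = m) ∧ (∀ c, cdeg S c = m) := by
  intro k
  induction k with
  | zero =>
    intro m hm M hr hc
    interval_cases m
    exact ⟨M, subset_rfl, hr, hc⟩
  | succ k ih =>
    intro m hm M hr hc
    rcases eq_or_lt_of_le hm with h | h
    · exact ⟨M, subset_rfl, fun r => h ▸ hr r, fun c => h ▸ hc c⟩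
    · obtain ⟨σ, hσ⟩ := hall M (k + 1) (Nat.succ_pos k) hr hc
      obtain ⟨hr', hc'⟩ := deg_remove M σ hσ
      obtain ⟨S, hSM, hS⟩ := ih m (Nat.lt_succ_iff.mp h) _
        (fun r => by rw [hr' r, hr r]; omega) (fun c => by rw [hc' c, hc c]; omega)
      exact ⟨S, hSM.trans sdiff_subset, hS⟩

lemma rdeg_filter (P : Fin n → Fin n → Prop) [∀ r c, Decidable (P r c)] (r : Fin n) :
    rdeg (univ.filter fun p : Fin n × Fin n => P p.1 p.2) r
      = (univ.filter fun c => P r c).card := by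
  unfold rdeg
  rw [Finset.filter_filter]
  apply Finset.card_bij (fun p _ => p.2)
  · intro p hp
    simp only [mem_filter, mem_univ, true_and] at hp ⊢
    rw [← hp.2]; exact hp.1
  · intro p hp q hq h
    simp only [mem_filter, mem_univ, true_and] at hp hq
    exact Prod.ext (hp.2.trans hq.2.symm) h
  · intro c hc
    simp only [mem_filter, mem_univ, true_and] at hc
    exact ⟨(r, c), by simp [hc], rfl⟩

lemma cdeg_filter (P : Fin n → Fin n → Prop) [∀ r c, Decidable (P r c)] (c : Fin n) :
    cdeg (univ.filter fun p : Fin n × Fin n => P p.1 p.2) c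
      = (univ.filter fun r => P r c).card := by
  unfold cdeg
  rw [Finset.filter_filter]
  apply Finset.card_bij (fun p _ => p.1)
  · intro p hp
    simp only [mem_filter, mem_univ, true_and] at hp ⊢
    rw [← hp.2]; exact hp.1
  · intro p hp q hq h
    simp only [mem_filter, mem_univ, true_and] at hp hq
    exact Prod.ext h (hp.2.trans hq.2.symm)
  · intro r hr
    simp only [mem_filter, mem_univ, true_and] at hr
    exact ⟨(r, c), by simp [hr], rfl⟩

end Stmt15Aux

open Stmt15Aux Finset in
/-- If λ is even, every binary frequency square of type F(2λ;λ) has an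
orthogonal mate of the same type. -/
theorem stmt_15 (lam : ℕ) (hlam : Even lam)
    (B : Fin (2 * lam) → Fin (2 * lam) → Fin 2)
    (hB : IsFreqSquare (2 * lam) B) :
    ∃ B' : Fin (2 * lam) → Fin (2 * lam) → Fin 2,
      IsFreqSquare (2 * lam) B' ∧ OrthFS (2 * lam) B B' := by
  obtain ⟨hBr, hBc⟩ := hB
  obtain ⟨tt, httt⟩ := hlam
  have hdiv : (2 * lam) / 2 = lam := Nat.mul_div_cancel_left lam (by norm_num)
  have hhalf : lam / 2 = tt := by omega
  have hfin2 : ∀ a : Fin 2, (a = 0) ↔ ¬ (a = 1) := by decide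
  set M1 : Finset (Fin (2*lam) × Fin (2*lam)) :=
    univ.filter fun p => B p.1 p.2 = 1 with hM1
  set M0 : Finset (Fin (2*lam) × Fin (2*lam)) :=
    univ.filter fun p => B p.1 p.2 = 0 with hM0
  have hrow0 : ∀ r : Fin (2*lam), (univ.filter fun c => B r c = 0).card = lam := by
    intro r
    have : (univ.filter fun c => B r c = 0) = univ \ (univ.filter fun c => B r c = 1) := by
      rw [← Finset.filter_not]
      exact Finset.filter_congr fun c _ => hfin2 _
    rw [this, Finset.card_sdiff_of_subset (Finset.filter_subset _ _), hBr r, hdiv]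
    simp; omega
  have hcol0 : ∀ c : Fin (2*lam), (univ.filter fun r => B r c = 0).card = lam := by
    intro c
    have : (univ.filter fun r => B r c = 0) = univ \ (univ.filter fun r => B r c = 1) := by
      rw [← Finset.filter_not]
      exact Finset.filter_congr fun r _ => hfin2 _
    rw [this, Finset.card_sdiff_of_subset (Finset.filter_subset _ _), hBc c, hdiv]
    simp; omega
  have hr1 : ∀ r, rdeg M1 r = lam := fun r => by
    rw [hM1, rdeg_filter (fun r c => B r c = 1), hBr r, hdiv]
  have hc1 : ∀ c, cdeg M1 c = lam := fun c => by
    rw [hM1, cdeg_filter (fun r c => B r c = 1), hBc c, hdiv]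
  have hr0 : ∀ r, rdeg M0 r = lam := fun r => by
    rw [hM0, rdeg_filter (fun r c => B r c = 0), hrow0 r]
  have hc0 : ∀ c, cdeg M0 c = lam := fun c => by
    rw [hM0, cdeg_filter (fun r c => B r c = 0), hcol0 c]
  obtain ⟨S, hSM, hSr, hSc⟩ := exists_sub lam (lam / 2) (Nat.div_le_self _ _) M1 hr1 hc1
  obtain ⟨T, hTM, hTr, hTc⟩ := exists_sub lam (lam / 2) (Nat.div_le_self _ _) M0 hr0 hc0
  -- Memberships
  have hSmem : ∀ p, p ∈ S → B p.1 p.2 = 1 := by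
    intro p hp
    have := hSM hp
    rw [hM1, mem_filter] at this
    exact this.2
  have hTmem : ∀ p, p ∈ T → B p.1 p.2 = 0 := by
    intro p hp
    have := hTM hp
    rw [hM0, mem_filter] at this
    exact this.2
  have hdisj : Disjoint S T := by
    rw [Finset.disjoint_left]
    intro p hpS hpT
    have h1 := hSmem p hpS
    have h0 := hTmem p hpT
    rw [h1] at h0
    exact absurd h0 (by decide)
  -- The orthogonal mate
  set B' : Fin (2 * lam) → Fin (2 * lam) → Fin 2 :=
    fun r c => if (r, c) ∈ S ∪ T then 1 else 0 with hB'
  have hB'one : ∀ r c, B' r c = 1 ↔ (r, c) ∈ S ∪ T := by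
    intro r c
    rw [hB']
    by_cases h : (r, c) ∈ S ∪ T <;> simp [h]
  have hB'zero : ∀ r c, B' r c = 0 ↔ (r, c) ∉ S ∪ T := by
    intro r c
    rw [hfin2, not_iff_not]
    exact hB'one r c
  have hpM1 : ∀ p : Fin (2*lam) × Fin (2*lam), p ∈ M1 ↔ B p.1 p.2 = 1 := by
    intro p; rw [hM1]; simp
  have hpM0 : ∀ p : Fin (2*lam) × Fin (2*lam), p ∈ M0 ↔ B p.1 p.2 = 0 := by
    intro p; rw [hM0]; simp
  have hpU1 : ∀ p : Fin (2*lam) × Fin (2*lam), B' p.1 p.2 = 1 ↔ p ∈ S ∪ T := by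
    intro p; rw [hB'one]
  have hpU0 : ∀ p : Fin (2*lam) × Fin (2*lam), B' p.1 p.2 = 0 ↔ p ∉ S ∪ T := by
    intro p; rw [hB'zero]
  have hMS : 2 * lam * lam = 2 * lam * tt + 2 * lam * tt := by rw [httt]; ring
  -- Degrees of S ∪ T
  have hST : S ∪ T = univ.filter fun p : Fin (2*lam) × Fin (2*lam) => (p.1, p.2) ∈ S ∪ T := by
    ext p
    simp
  have hUr : ∀ r, rdeg (S ∪ T) r = lam := by
    intro r
    have : rdeg (S ∪ T) r = rdeg S r + rdeg T r := by
      unfold rdeg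
      rw [Finset.filter_union,
        Finset.card_union_of_disjoint (Finset.disjoint_filter_filter hdisj)]
    rw [this, hSr r, hTr r]; omega
  have hUc : ∀ c, cdeg (S ∪ T) c = lam := by
    intro c
    have : cdeg (S ∪ T) c = cdeg S c + cdeg T c := by
      unfold cdeg
      rw [Finset.filter_union,
        Finset.card_union_of_disjoint (Finset.disjoint_filter_filter hdisj)]
    rw [this, hSc c, hTc c]; omega
  -- Cardinalities
  have hScard : S.card = 2 * lam * tt := by
    rw [card_eq_sum_rdeg]
    simp [hSr, hhalf, Finset.sum_const, mul_comm]
  have hTcard : T.card = 2 * lam * tt := by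
    rw [card_eq_sum_rdeg]
    simp [hTr, hhalf, Finset.sum_const, mul_comm]
  have hM1card : M1.card = 2 * lam * lam := by
    rw [card_eq_sum_rdeg]
    simp [hr1, Finset.sum_const, mul_comm]
  have hM0card : M0.card = 2 * lam * lam := by
    rw [card_eq_sum_rdeg]
    simp [hr0, Finset.sum_const, mul_comm]
  have hgoalcount : (2 * lam) ^ 2 / 4 = 2 * lam * tt := by
    have h1 : (2 * lam) ^ 2 = 4 * (lam * lam) := by ring
    have h2 : 2 * lam * tt = lam * lam := by
      rw [httt]; ring
    rw [h1, h2, Nat.mul_div_cancel_left _ (by norm_num)]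
  refine ⟨B', ⟨?_, ?_⟩, ?_⟩
  · -- rows of B'
    intro r
    have : (univ.filter fun c => B' r c = 1) = univ.filter fun c => (r, c) ∈ S ∪ T :=
      Finset.filter_congr fun c _ => hB'one r c
    rw [this, hdiv, ← rdeg_filter (fun r c => (r, c) ∈ S ∪ T) r, ← hST, hUr r]
  · -- columns of B'
    intro c
    have : (univ.filter fun r => B' r c = 1) = univ.filter fun r => (r, c) ∈ S ∪ T :=
      Finset.filter_congr fun r _ => hB'one r c
    rw [this, hdiv, ← cdeg_filter (fun r c => (r, c) ∈ S ∪ T) c, ← hST, hUc c]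
  · -- orthogonality
    have h11 : (univ.filter fun p : Fin (2*lam) × Fin (2*lam) =>
        B p.1 p.2 = 1 ∧ B' p.1 p.2 = 1) = S := by
      ext p
      simp only [mem_filter, mem_univ, true_and]
      rw [hpU1 p, Finset.mem_union]
      constructor
      · rintro ⟨h1, hp | hp⟩
        · exact hp
        · rw [hTmem p hp] at h1
          exact absurd h1 (by decide)
      · intro hp
        exact ⟨hSmem p hp, Or.inl hp⟩
    have h10 : (univ.filter fun p : Fin (2*lam) × Fin (2*lam) =>
        B p.1 p.2 = 1 ∧ B' p.1 p.2 = 0) = M1 \ S := by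
      ext p
      simp only [mem_filter, mem_univ, true_and, Finset.mem_sdiff]
      rw [hpU0 p, Finset.mem_union, hpM1 p, not_or]
      constructor
      · rintro ⟨h1, hpS, _⟩
        exact ⟨h1, hpS⟩
      · rintro ⟨h1, hpS⟩
        refine ⟨h1, hpS, fun hpT => ?_⟩
        rw [hTmem p hpT] at h1
        exact absurd h1 (by decide)
    have h01 : (univ.filter fun p : Fin (2*lam) × Fin (2*lam) =>
        B p.1 p.2 = 0 ∧ B' p.1 p.2 = 1) = T := by
      ext p
      simp only [mem_filter, mem_univ, true_and]
      rw [hpU1 p, Finset.mem_union]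
      constructor
      · rintro ⟨h0, hp | hp⟩
        · rw [hSmem p hp] at h0
          exact absurd h0 (by decide)
        · exact hp
      · intro hp
        exact ⟨hTmem p hp, Or.inr hp⟩
    have h00 : (univ.filter fun p : Fin (2*lam) × Fin (2*lam) =>
        B p.1 p.2 = 0 ∧ B' p.1 p.2 = 0) = M0 \ T := by
      ext p
      simp only [mem_filter, mem_univ, true_and, Finset.mem_sdiff]
      rw [hpU0 p, Finset.mem_union, hpM0 p, not_or]
      constructor
      · rintro ⟨h0, hpS, hpT⟩
        exact ⟨h0, hpT⟩
      · rintro ⟨h0, hpT⟩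
        refine ⟨h0, fun hpS => ?_, hpT⟩
        rw [hSmem p hpS] at h0
        exact absurd h0 (by decide)
    have hc11 : (univ.filter fun p : Fin (2*lam) × Fin (2*lam) =>
        B p.1 p.2 = 1 ∧ B' p.1 p.2 = 1).card = (2*lam)^2/4 := by
      rw [h11, hScard, hgoalcount]
    have hc10 : (univ.filter fun p : Fin (2*lam) × Fin (2*lam) =>
        B p.1 p.2 = 1 ∧ B' p.1 p.2 = 0).card = (2*lam)^2/4 := by
      rw [h10, Finset.card_sdiff_of_subset hSM, hM1card, hScard, hgoalcount]
      omega
    have hc01 : (univ.filter fun p : Fin (2*lam) × Fin (2*lam) =>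
        B p.1 p.2 = 0 ∧ B' p.1 p.2 = 1).card = (2*lam)^2/4 := by
      rw [h01, hTcard, hgoalcount]
    have hc00 : (univ.filter fun p : Fin (2*lam) × Fin (2*lam) =>
        B p.1 p.2 = 0 ∧ B' p.1 p.2 = 0).card = (2*lam)^2/4 := by
      rw [h00, Finset.card_sdiff_of_subset hTM, hM0card, hTcard, hgoalcount]
      omega
    intro a b
    fin_cases a <;> fin_cases b
    · exact hc00
    · exact hc01
    · exact hc10
    · exact hc11
end

section
/- Let {F_1,...,F_k} be mutually orthogonal binary frequency squares of order n in which every square has the property that every pair of its rows is either equal or complementary, with n > 2. Then there exist at least (n/2)^4 basic trades (switching the entries on a 2×2 submatrix meeting all four constant blocks of F_1 in every square where those four cells have entries forming an identity pattern or its complement) each of which produces a set of MOFS not isomorphic to the original. -/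
/-- Switching a basic trade: given a distinguished square F_{i0} and a set of
cells C, complement the entries on C in every square that agrees with F_{i0}
on all of C or disagrees with F_{i0} on all of C. -/
def switchOn (n k : ℕ) (F : Fin k → Fin n → Fin n → Fin 2) (i0 : Fin k)
    (C : Finset (Fin n × Fin n)) : Fin k → Fin n → Fin n → Fin 2 :=
  fun i r c =>
    if ((∀ p ∈ C, F i p.1 p.2 = F i0 p.1 p.2) ∨
        (∀ p ∈ C, F i p.1 p.2 ≠ F i0 p.1 p.2)) ∧ (r, c) ∈ C
    then 1 - F i r c else F i r c

/-- Isomorphism of (ordered) sets of MOFS: common row and column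
permutations, optional transposition of all squares, complementation of the
symbols in individual squares, and reordering of the squares. -/
def MOFSIso (n k : ℕ) (F G : Fin k → Fin n → Fin n → Fin 2) : Prop :=
  ∃ (σ τ : Equiv.Perm (Fin n)) (π : Equiv.Perm (Fin k)) (s : Fin k → Fin 2),
    (∀ i r c, G i r c = F (π i) (σ r) (τ c) + s i) ∨
    (∀ i r c, G i r c = F (π i) (σ c) (τ r) + s i)

open Finset

-- ===== helpers =====

lemma f2_add_zero : ∀ x : Fin 2, x + 0 = x := by decide
lemma f2_sub_self : ∀ x : Fin 2, x - x = 0 := by decide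
lemma f2_one_sub_sub : ∀ x : Fin 2, (1 - x) - x = 1 := by decide
lemma f2_one_sub_eq_add : ∀ x : Fin 2, 1 - x = x + 1 := by decide
lemma f2_ne_eq : ∀ x y : Fin 2, x ≠ y → x = 1 - y := by decide
lemma f2_sub_sub : ∀ x : Fin 2, 1 - (1 - x) = x := by decide
lemma f2_ne_one_sub : ∀ x : Fin 2, x ≠ 1 - x := by decide
lemma f2_sub_add : ∀ x s : Fin 2, (1 - x) + s = 1 - (x + s) := by decide
lemma f2_cases : ∀ x : Fin 2, x = 0 ∨ x = 1 := by decide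

lemma rows_to_cols {n : ℕ} (H : Fin n → Fin n → Fin 2) (h0 : 0 < n)
    (hr : ∀ r r', (∀ c, H r c = H r' c) ∨ (∀ c, H r c = 1 - H r' c)) :
    ∀ c c', (∀ r, H r c = H r c') ∨ (∀ r, H r c = 1 - H r c') := by
  intro c c'
  set z : Fin n := ⟨0, h0⟩
  by_cases h : H z c = H z c'
  · left
    intro r
    rcases hr r z with he | hc
    · rw [he c, he c', h]
    · rw [hc c, hc c', h]
  · right
    have h' : H z c' = 1 - H z c := f2_ne_eq _ _ (Ne.symm h)
    intro r
    rcases hr r z with he | hc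
    · rw [he c, he c', h', f2_sub_sub]
    · rw [hc c, hc c', h', f2_sub_sub]

lemma card_filter_equiv {α : Type*} [Fintype α] (φ : Equiv.Perm α)
    (p q : α → Prop) [DecidablePred p] [DecidablePred q]
    (h : ∀ a, p a ↔ q (φ a)) :
    (Finset.univ.filter p).card = (Finset.univ.filter q).card := by
  apply Finset.card_bij' (fun a _ => φ a) (fun a _ => φ.symm a)
  · intro a ha; simp only [mem_filter, mem_univ, true_and] at *; exact (h a).1 ha
  · intro a ha; simp only [mem_filter, mem_univ, true_and] at *
    exact (h (φ.symm a)).2 (by simpa using ha)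
  · intro a _; simp
  · intro a _; simp

lemma orth_transfer {n : ℕ} (A B A' B' : Fin n → Fin n → Fin 2)
    (φ : Equiv.Perm (Fin n × Fin n))
    (hA : ∀ p : Fin n × Fin n, A' p.1 p.2 = A (φ p).1 (φ p).2)
    (hB : ∀ p : Fin n × Fin n, B' p.1 p.2 = B (φ p).1 (φ p).2)
    (h : OrthFS n A B) : OrthFS n A' B' := by
  intro a b
  rw [← h a b]
  exact card_filter_equiv φ _ _ (fun p => by rw [hA p, hB p])

def quadSwap {α : Type*} [DecidableEq α] (a b c d : α) : α → α :=
  fun x => if x = a then b else if x = b then a else if x = c then d else if x = d then c else x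

lemma quadSwap_involutive {α : Type*} [DecidableEq α] (a b c d : α)
    (hac : a ≠ c) (had : a ≠ d) (hbc : b ≠ c) (hbd : b ≠ d) :
    Function.Involutive (quadSwap a b c d) := by
  intro x; unfold quadSwap; split_ifs <;> simp_all

section
variable {α : Type*} [DecidableEq α] {a b c d x : α}
lemma quadSwap_a : quadSwap a b c d a = b := by simp [quadSwap]
lemma quadSwap_b (h : b ≠ a) : quadSwap a b c d b = a := by simp [quadSwap, h]
lemma quadSwap_c (h1 : c ≠ a) (h2 : c ≠ b) : quadSwap a b c d c = d := by simp [quadSwap, h1, h2]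
lemma quadSwap_d (h1 : d ≠ a) (h2 : d ≠ b) (h3 : d ≠ c) : quadSwap a b c d d = c := by
  simp [quadSwap, h1, h2, h3]
lemma quadSwap_other (h1 : x ≠ a) (h2 : x ≠ b) (h3 : x ≠ c) (h4 : x ≠ d) :
    quadSwap a b c d x = x := by simp [quadSwap, h1, h2, h3, h4]
end

-- ===== main auxiliary lemma =====

lemma aux_main (n k : ℕ) (hn : 2 < n) (hk : 0 < k)
    (F : Fin k → Fin n → Fin n → Fin 2)
    (hmofs : IsMOFS n k F)
    (hrows : ∀ (i : Fin k) (r r' : Fin n),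
      (∀ c, F i r c = F i r' c) ∨ (∀ c, F i r c = 1 - F i r' c))
    (f ε : Fin n → Fin 2)
    (K : ∀ r c, F ⟨0, hk⟩ r c = f c + ε r)
    (r0 r1 c0 c1 : Fin n)
    (hε0 : ε r0 = 0) (hε1 : ε r1 = 1) (hf0 : f c0 = 0) (hf1 : f c1 = 1)
    (r2 : Fin n) (hr20 : r2 ≠ r0) (hε2 : ε r2 = 0) :
    IsMOFS n k (switchOn n k F ⟨0, hk⟩ {(r0,c0),(r0,c1),(r1,c0),(r1,c1)}) ∧
    ¬ MOFSIso n k F (switchOn n k F ⟨0, hk⟩ {(r0,c0),(r0,c1),(r1,c0),(r1,c1)}) := by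
  classical
  set i0 : Fin k := ⟨0, hk⟩ with hi0
  set C : Finset (Fin n × Fin n) := {(r0,c0),(r0,c1),(r1,c0),(r1,c1)} with hC
  set G := switchOn n k F i0 C with hGdef
  have npos : 0 < n := by omega
  have hr01 : r0 ≠ r1 := by
    intro h; rw [h, hε1] at hε0; exact absurd hε0 (by decide)
  have hc01 : c0 ≠ c1 := by
    intro h; rw [h, hf1] at hf0; exact absurd hf0 (by decide)
  have hr21 : r2 ≠ r1 := by
    intro h; rw [h, hε1] at hε2; exact absurd hε2 (by decide)
  have pne1 : ∀ {x y u v : Fin n}, x ≠ y → ((x,u) : Fin n × Fin n) ≠ (y,v) :=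
    fun h heq => h (congrArg Prod.fst heq)
  have pne2 : ∀ {x y u v : Fin n}, u ≠ v → ((x,u) : Fin n × Fin n) ≠ (y,v) :=
    fun h heq => h (congrArg Prod.snd heq)
  have memC : ∀ p : Fin n × Fin n,
      p ∈ C ↔ p = (r0,c0) ∨ p = (r0,c1) ∨ p = (r1,c0) ∨ p = (r1,c1) := by
    intro p; simp [hC]
  have m1 : ((r0,c0) : Fin n × Fin n) ∈ C := (memC _).2 (Or.inl rfl)
  have m2 : ((r0,c1) : Fin n × Fin n) ∈ C := (memC _).2 (Or.inr (Or.inl rfl))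
  have m3 : ((r1,c0) : Fin n × Fin n) ∈ C := (memC _).2 (Or.inr (Or.inr (Or.inl rfl)))
  have m4 : ((r1,c1) : Fin n × Fin n) ∈ C := (memC _).2 (Or.inr (Or.inr (Or.inr rfl)))
  have notmem : ∀ p : Fin n × Fin n, p ∉ C →
      p ≠ (r0,c0) ∧ p ≠ (r0,c1) ∧ p ≠ (r1,c0) ∧ p ≠ (r1,c1) := by
    intro p hp; rw [memC] at hp; push_neg at hp; exact hp
  -- values of F i0 on the four cells
  have hv1 : F i0 r0 c0 = 0 := by rw [K, hf0, hε0]; decide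
  have hv2 : F i0 r0 c1 = 1 := by rw [K, hf1, hε0]; decide
  have hv3 : F i0 r1 c0 = 1 := by rw [K, hf0, hε1]; decide
  have hv4 : F i0 r1 c1 = 0 := by rw [K, hf1, hε1]; decide
  -- description of G
  have hG_pos : ∀ i, ((∀ p ∈ C, F i p.1 p.2 = F i0 p.1 p.2) ∨
        (∀ p ∈ C, F i p.1 p.2 ≠ F i0 p.1 p.2)) → ∀ r c,
      G i r c = if (r,c) ∈ C then 1 - F i r c else F i r c := by
    intro i hPi r c
    by_cases hm : (r,c) ∈ C
    · rw [if_pos hm]; show switchOn n k F i0 C i r c = _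
      rw [switchOn, if_pos ⟨hPi, hm⟩]
    · rw [if_neg hm]; show switchOn n k F i0 C i r c = _
      rw [switchOn, if_neg (fun h => hm h.2)]
  have hG_neg : ∀ i, ¬((∀ p ∈ C, F i p.1 p.2 = F i0 p.1 p.2) ∨
        (∀ p ∈ C, F i p.1 p.2 ≠ F i0 p.1 p.2)) → ∀ r c, G i r c = F i r c := by
    intro i hPi r c
    show switchOn n k F i0 C i r c = _
    rw [switchOn, if_neg (fun h => hPi h.1)]
  -- pattern of a switched square
  have hpat : ∀ i, ((∀ p ∈ C, F i p.1 p.2 = F i0 p.1 p.2) ∨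
        (∀ p ∈ C, F i p.1 p.2 ≠ F i0 p.1 p.2)) →
      F i r0 c1 = 1 - F i r0 c0 ∧ F i r1 c0 = 1 - F i r0 c0 ∧ F i r1 c1 = F i r0 c0 := by
    intro i hPi
    rcases hPi with h | h
    · have e1 := h _ m1; have e2 := h _ m2; have e3 := h _ m3; have e4 := h _ m4
      simp only at e1 e2 e3 e4
      rw [hv1] at e1; rw [hv2] at e2; rw [hv3] at e3; rw [hv4] at e4
      rw [e1, e2, e3, e4]
      refine ⟨by decide, by decide, by decide⟩
    · have e1 := h _ m1; have e2 := h _ m2; have e3 := h _ m3; have e4 := h _ m4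
      simp only at e1 e2 e3 e4
      rw [hv1] at e1; rw [hv2] at e2; rw [hv3] at e3; rw [hv4] at e4
      have e1' : F i r0 c0 = 1 := (f2_cases _).resolve_left e1
      have e2' : F i r0 c1 = 0 := (f2_cases _).resolve_right e2
      have e3' : F i r1 c0 = 0 := (f2_cases _).resolve_right e3
      have e4' : F i r1 c1 = 1 := (f2_cases _).resolve_left e4
      rw [e1', e2', e3', e4']
      refine ⟨by decide, by decide, by decide⟩
  -- the two involutions
  have inv_r : Function.Involutive (quadSwap ((r0,c0) : Fin n × Fin n) (r1,c0) (r0,c1) (r1,c1)) :=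
    quadSwap_involutive _ _ _ _ (pne2 hc01) (pne2 hc01) (pne2 hc01) (pne2 hc01)
  have inv_c : Function.Involutive (quadSwap ((r0,c0) : Fin n × Fin n) (r0,c1) (r1,c0) (r1,c1)) :=
    quadSwap_involutive _ _ _ _ (pne1 hr01) (pne1 hr01) (pne1 hr01) (pne1 hr01)
  set Phr : Equiv.Perm (Fin n × Fin n) := inv_r.toPerm _ with hPhr
  set Phc : Equiv.Perm (Fin n × Fin n) := inv_c.toPerm _ with hPhc
  have vr1 : Phr (r0,c0) = (r1,c0) := quadSwap_a
  have vr2 : Phr (r1,c0) = (r0,c0) := quadSwap_b (pne1 (Ne.symm hr01))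
  have vr3 : Phr (r0,c1) = (r1,c1) := quadSwap_c (pne2 (Ne.symm hc01)) (pne1 hr01)
  have vr4 : Phr (r1,c1) = (r0,c1) :=
    quadSwap_d (pne1 (Ne.symm hr01)) (pne2 (Ne.symm hc01)) (pne1 (Ne.symm hr01))
  have vr5 : ∀ p : Fin n × Fin n, p ∉ C → Phr p = p := by
    intro p hp
    obtain ⟨h1, h2, h3, h4⟩ := notmem p hp
    exact quadSwap_other h1 h3 h2 h4
  have vc1 : Phc (r0,c0) = (r0,c1) := quadSwap_a
  have vc2 : Phc (r0,c1) = (r0,c0) := quadSwap_b (pne2 (Ne.symm hc01))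
  have vc3 : Phc (r1,c0) = (r1,c1) := quadSwap_c (pne1 (Ne.symm hr01)) (pne1 (Ne.symm hr01))
  have vc4 : Phc (r1,c1) = (r1,c0) :=
    quadSwap_d (pne1 (Ne.symm hr01)) (pne1 (Ne.symm hr01)) (pne2 (Ne.symm hc01))
  have vc5 : ∀ p : Fin n × Fin n, p ∉ C → Phc p = p := by
    intro p hp
    obtain ⟨h1, h2, h3, h4⟩ := notmem p hp
    exact quadSwap_other h1 h2 h3 h4
  -- the key classification of squares
  have key : ∀ i : Fin k,
      ((∀ p : Fin n × Fin n, G i p.1 p.2 = F i (Phr p).1 (Phr p).2) ∧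
       (∀ p : Fin n × Fin n, G i p.1 p.2 = F i (Phc p).1 (Phc p).2)) ∨
      ((∀ r c, G i r c = F i r c) ∧
       ((∀ p : Fin n × Fin n, F i (Phr p).1 (Phr p).2 = F i p.1 p.2) ∨
        (∀ p : Fin n × Fin n, F i (Phc p).1 (Phc p).2 = F i p.1 p.2))) := by
    intro i
    by_cases hPi : (∀ p ∈ C, F i p.1 p.2 = F i0 p.1 p.2) ∨
        (∀ p ∈ C, F i p.1 p.2 ≠ F i0 p.1 p.2)
    · left
      obtain ⟨hb, hc, hd⟩ := hpat i hPi
      constructor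
      · intro p
        by_cases hp : p ∈ C
        · rw [memC] at hp
          rcases hp with rfl | rfl | rfl | rfl
          · rw [vr1]; show G i r0 c0 = F i r1 c0
            rw [hG_pos i hPi, if_pos m1, hc]
          · rw [vr3]; show G i r0 c1 = F i r1 c1
            rw [hG_pos i hPi, if_pos m2, hb, hd, f2_sub_sub]
          · rw [vr2]; show G i r1 c0 = F i r0 c0
            rw [hG_pos i hPi, if_pos m3, hc, f2_sub_sub]
          · rw [vr4]; show G i r1 c1 = F i r0 c1
            rw [hG_pos i hPi, if_pos m4, hd, hb]
        · rw [vr5 p hp, hG_pos i hPi, if_neg (by simpa using hp)]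
      · intro p
        by_cases hp : p ∈ C
        · rw [memC] at hp
          rcases hp with rfl | rfl | rfl | rfl
          · rw [vc1]; show G i r0 c0 = F i r0 c1
            rw [hG_pos i hPi, if_pos m1, hb]
          · rw [vc2]; show G i r0 c1 = F i r0 c0
            rw [hG_pos i hPi, if_pos m2, hb, f2_sub_sub]
          · rw [vc3]; show G i r1 c0 = F i r1 c1
            rw [hG_pos i hPi, if_pos m3, hc, hd, f2_sub_sub]
          · rw [vc4]; show G i r1 c1 = F i r1 c0
            rw [hG_pos i hPi, if_pos m4, hd, hc]
        · rw [vc5 p hp, hG_pos i hPi, if_neg (by simpa using hp)]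
    · right
      refine ⟨hG_neg i hPi, ?_⟩
      rcases hrows i r0 r1 with he | hcm
      · left
        intro p
        by_cases hp : p ∈ C
        · rw [memC] at hp
          rcases hp with rfl | rfl | rfl | rfl
          · rw [vr1]; exact (he c0).symm
          · rw [vr3]; exact (he c1).symm
          · rw [vr2]; exact he c0
          · rw [vr4]; exact he c1
        · rw [vr5 p hp]
      · have hcm' : ∀ c, F i r1 c = 1 - F i r0 c := fun c => by rw [hcm c, f2_sub_sub]
        have heq : F i r0 c1 = F i r0 c0 := by
          by_contra hne
          have hb : F i r0 c1 = 1 - F i r0 c0 := f2_ne_eq _ _ hne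
          apply hPi
          rcases f2_cases (F i r0 c0) with h0 | h1
          · left
            intro p hp
            rw [memC] at hp
            rcases hp with rfl | rfl | rfl | rfl
            · show F i r0 c0 = F i0 r0 c0; rw [h0, hv1]
            · show F i r0 c1 = F i0 r0 c1; rw [hb, h0, hv2]; decide
            · show F i r1 c0 = F i0 r1 c0; rw [hcm' c0, h0, hv3]; decide
            · show F i r1 c1 = F i0 r1 c1; rw [hcm' c1, hb, h0, hv4]; decide
          · right
            intro p hp
            rw [memC] at hp
            rcases hp with rfl | rfl | rfl | rfl
            · show F i r0 c0 ≠ F i0 r0 c0; rw [h1, hv1]; decide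
            · show F i r0 c1 ≠ F i0 r0 c1; rw [hb, h1, hv2]; decide
            · show F i r1 c0 ≠ F i0 r1 c0; rw [hcm' c0, h1, hv3]; decide
            · show F i r1 c1 ≠ F i0 r1 c1; rw [hcm' c1, hb, h1, hv4]; decide
        right
        intro p
        by_cases hp : p ∈ C
        · rw [memC] at hp
          rcases hp with rfl | rfl | rfl | rfl
          · rw [vc1]; exact heq
          · rw [vc2]; exact heq.symm
          · rw [vc3]; show F i r1 c1 = F i r1 c0
            rw [hcm' c1, hcm' c0, heq]
          · rw [vc4]; show F i r1 c0 = F i r1 c1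
            rw [hcm' c1, hcm' c0, heq]
        · rw [vc5 p hp]
  -- pointwise description of the permutations on rows/columns
  have hφc_pt : ∀ r c, r = r0 ∨ r = r1 → Phc (r, c) = (r, Equiv.swap c0 c1 c) := by
    intro r c hr
    by_cases h1 : c = c0
    · subst h1; rw [Equiv.swap_apply_left]
      rcases hr with rfl | rfl
      · exact vc1
      · exact vc3
    · by_cases h2 : c = c1
      · subst h2; rw [Equiv.swap_apply_right]
        rcases hr with rfl | rfl
        · exact vc2
        · exact vc4
      · rw [Equiv.swap_apply_of_ne_of_ne h1 h2]
        rcases hr with rfl | rfl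
        · exact quadSwap_other (pne2 h1) (pne2 h2) (pne1 hr01) (pne1 hr01)
        · exact quadSwap_other (pne1 (Ne.symm hr01)) (pne1 (Ne.symm hr01)) (pne2 h1) (pne2 h2)
  have hφc_pt' : ∀ r c, r ≠ r0 → r ≠ r1 → Phc (r, c) = (r, c) := by
    intro r c h1 h2
    exact quadSwap_other (pne1 h1) (pne1 h1) (pne1 h2) (pne1 h2)
  have hφr_pt : ∀ r c, c = c0 ∨ c = c1 → Phr (r, c) = (Equiv.swap r0 r1 r, c) := by
    intro r c hc
    by_cases h1 : r = r0
    · subst h1; rw [Equiv.swap_apply_left]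
      rcases hc with rfl | rfl
      · exact vr1
      · exact vr3
    · by_cases h2 : r = r1
      · subst h2; rw [Equiv.swap_apply_right]
        rcases hc with rfl | rfl
        · exact vr2
        · exact vr4
      · rw [Equiv.swap_apply_of_ne_of_ne h1 h2]
        rcases hc with rfl | rfl
        · exact quadSwap_other (pne1 h1) (pne1 h2) (pne2 hc01) (pne2 hc01)
        · exact quadSwap_other (pne2 (Ne.symm hc01)) (pne2 (Ne.symm hc01)) (pne1 h1) (pne1 h2)
  have hφr_pt' : ∀ r c, c ≠ c0 → c ≠ c1 → Phr (r, c) = (r, c) := by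
    intro r c h1 h2
    exact quadSwap_other (pne2 h1) (pne2 h1) (pne2 h2) (pne2 h2)
  -- frequency squares are preserved
  have hfreq : ∀ i, IsFreqSquare n (G i) := by
    intro i
    have hrowsF := (hmofs.1 i).1
    have hcolsF := (hmofs.1 i).2
    rcases key i with ⟨h1, h2⟩ | ⟨h0, _⟩
    · constructor
      · intro r
        by_cases hr : r = r0 ∨ r = r1
        · have e : ∀ a, G i r a = F i r (Equiv.swap c0 c1 a) := by
            intro a
            have := h2 (r, a)
            rw [hφc_pt r a hr] at this
            exact this
          rw [card_filter_equiv (Equiv.swap c0 c1) (fun a => G i r a = 1)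
            (fun a => F i r a = 1) (fun a => by simp only [e a])]
          exact hrowsF r
        · push_neg at hr
          have e : ∀ a, G i r a = F i r a := by
            intro a
            have := h2 (r, a)
            rw [hφc_pt' r a hr.1 hr.2] at this
            exact this
          rw [card_filter_equiv (Equiv.refl _) (fun a => G i r a = 1)
            (fun a => F i r a = 1) (fun a => by simp only [e a, Equiv.refl_apply])]
          exact hrowsF r
      · intro c
        by_cases hc : c = c0 ∨ c = c1
        · have e : ∀ a, G i a c = F i (Equiv.swap r0 r1 a) c := by
            intro a
            have := h1 (a, c)
            rw [hφr_pt a c hc] at this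
            exact this
          rw [card_filter_equiv (Equiv.swap r0 r1) (fun a => G i a c = 1)
            (fun a => F i a c = 1) (fun a => by simp only [e a])]
          exact hcolsF c
        · push_neg at hc
          have e : ∀ a, G i a c = F i a c := by
            intro a
            have := h1 (a, c)
            rw [hφr_pt' a c hc.1 hc.2] at this
            exact this
          rw [card_filter_equiv (Equiv.refl _) (fun a => G i a c = 1)
            (fun a => F i a c = 1) (fun a => by simp only [e a, Equiv.refl_apply])]
          exact hcolsF c
    · constructor
      · intro r
        rw [card_filter_equiv (Equiv.refl _) (fun a => G i r a = 1)
          (fun a => F i r a = 1) (fun a => by simp only [h0 r a, Equiv.refl_apply])]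
        exact hrowsF r
      · intro c
        rw [card_filter_equiv (Equiv.refl _) (fun a => G i a c = 1)
          (fun a => F i a c = 1) (fun a => by simp only [h0 a c, Equiv.refl_apply])]
        exact hcolsF c
  -- orthogonality is preserved
  have horth : ∀ i j, i ≠ j → OrthFS n (G i) (G j) := by
    intro i j hij
    have hF := hmofs.2 i j hij
    rcases key i with ⟨hi1, hi2⟩ | ⟨hi0', hialt⟩ <;> rcases key j with ⟨hj1, hj2⟩ | ⟨hj0, hjalt⟩
    · exact orth_transfer _ _ _ _ Phr hi1 hj1 hF
    · rcases hjalt with hr' | hc'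
      · exact orth_transfer _ _ _ _ Phr hi1 (fun p => by rw [hj0 p.1 p.2, ← hr' p]) hF
      · exact orth_transfer _ _ _ _ Phc hi2 (fun p => by rw [hj0 p.1 p.2, ← hc' p]) hF
    · rcases hialt with hr' | hc'
      · exact orth_transfer _ _ _ _ Phr (fun p => by rw [hi0' p.1 p.2, ← hr' p]) hj1 hF
      · exact orth_transfer _ _ _ _ Phc (fun p => by rw [hi0' p.1 p.2, ← hc' p]) hj2 hF
    · exact orth_transfer _ _ _ _ (Equiv.refl _) (fun p => hi0' p.1 p.2) (fun p => hj0 p.1 p.2) hF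
  refine ⟨⟨hfreq, horth⟩, ?_⟩
  -- non-isomorphism
  rintro ⟨σ, τ, π, s, hIso⟩
  have hPi0 : (∀ p ∈ C, F i0 p.1 p.2 = F i0 p.1 p.2) ∨
      (∀ p ∈ C, F i0 p.1 p.2 ≠ F i0 p.1 p.2) := Or.inl (fun p _ => rfl)
  have g1 : G i0 r0 c0 = 1 := by
    rw [hG_pos i0 hPi0, if_pos m1, hv1]; decide
  have hnm : ∀ c, ((r2, c) : Fin n × Fin n) ∉ C := by
    intro c hmem
    rcases (memC _).1 hmem with h | h | h | h
    · exact hr20 (congrArg Prod.fst h)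
    · exact hr20 (congrArg Prod.fst h)
    · exact hr21 (congrArg Prod.fst h)
    · exact hr21 (congrArg Prod.fst h)
  have g2 : ∀ c, G i0 r2 c = f c := by
    intro c
    rw [hG_pos i0 hPi0, if_neg (hnm c), K, hε2, f2_add_zero]
  obtain ⟨c2, hc2a, hc2b⟩ : ∃ c2, c2 ≠ c0 ∧ c2 ≠ c1 := by
    have hcard : ({c0, c1} : Finset (Fin n)).card ≤ 2 :=
      le_trans (card_insert_le _ _) (by simp)
    have hne : (univ \ ({c0, c1} : Finset (Fin n))).Nonempty := by
      rw [← card_pos, card_sdiff_of_subset (subset_univ _), Finset.card_fin]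
      omega
    obtain ⟨c2, hc2⟩ := hne
    rw [mem_sdiff, mem_insert, mem_singleton] at hc2
    exact ⟨c2, (not_or.1 hc2.2).1, (not_or.1 hc2.2).2⟩
  have grows : (∀ c, G i0 r0 c = G i0 r2 c) ∨ (∀ c, G i0 r0 c = 1 - G i0 r2 c) := by
    rcases hIso with h | h
    · rcases hrows (π i0) (σ r0) (σ r2) with he | hcm
      · left; intro c; rw [h i0 r0 c, h i0 r2 c, he (τ c)]
      · right; intro c; rw [h i0 r0 c, h i0 r2 c, hcm (τ c), f2_sub_add]
    · rcases rows_to_cols (F (π i0)) npos (hrows (π i0)) (τ r0) (τ r2) with he | hcm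
      · left; intro c; rw [h i0 r0 c, h i0 r2 c, he (σ c)]
      · right; intro c; rw [h i0 r0 c, h i0 r2 c, hcm (σ c), f2_sub_add]
  rcases grows with he | hcm
  · have hx := he c0
    rw [g1, g2 c0, hf0] at hx
    exact absurd hx (by decide)
  · have hnm0 : ((r0, c2) : Fin n × Fin n) ∉ C := by
      intro hmem
      rcases (memC _).1 hmem with h | h | h | h
      · exact hc2a (congrArg Prod.snd h)
      · exact hc2b (congrArg Prod.snd h)
      · exact hr01 (congrArg Prod.fst h)
      · exact hr01 (congrArg Prod.fst h)
    have h3 : G i0 r0 c2 = f c2 := by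
      rw [hG_pos i0 hPi0, if_neg hnm0, K, hε0, f2_add_zero]
    have hx := hcm c2
    rw [h3, g2 c2] at hx
    exact f2_ne_one_sub _ hx



/-- Let {F_1,…,F_k} be MOFS of order n > 2 in which, in every square, every
pair of rows is equal or complementary. Then there are at least (n/2)^4 basic
trades (sets of cells C), each of which, when switched, produces a set of
MOFS not isomorphic to the original one. -/
theorem stmt_16 (n k : ℕ) (hn : 2 < n) (hk : 0 < k)
    (F : Fin k → Fin n → Fin n → Fin 2)
    (hmofs : IsMOFS n k F)
    (hrows : ∀ (i : Fin k) (r r' : Fin n),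
      (∀ c, F i r c = F i r' c) ∨ (∀ c, F i r c = 1 - F i r' c)) :
    ∃ T : Finset (Finset (Fin n × Fin n)),
      (n / 2) ^ 4 ≤ T.card ∧
      ∀ C ∈ T,
        IsMOFS n k (switchOn n k F ⟨0, hk⟩ C) ∧
        ¬ MOFSIso n k F (switchOn n k F ⟨0, hk⟩ C) := by
  classical
  set i0 : Fin k := ⟨0, hk⟩ with hi0
  have npos : 0 < n := by omega
  set z : Fin n := ⟨0, npos⟩ with hz
  set f : Fin n → Fin 2 := fun c => F i0 z c with hf
  set ε : Fin n → Fin 2 := fun r => F i0 r z - f z with hε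
  have K : ∀ r c, F i0 r c = f c + ε r := by
    intro r c
    rcases hrows i0 r z with h | h
    · have h1 : ε r = 0 := by
        show F i0 r z - f z = 0
        rw [h z]; exact f2_sub_self _
      rw [h1, f2_add_zero, h c]
    · have h1 : ε r = 1 := by
        show F i0 r z - f z = 1
        rw [h z]; exact f2_one_sub_sub _
      rw [h1, h c]
      exact f2_one_sub_eq_add _
  have hrowcard := (hmofs.1 i0).1
  have hcolcard := (hmofs.1 i0).2
  have hcard_f1 : (univ.filter (fun c => f c = 1)).card = n / 2 := hrowcard z
  have hsplitf : (univ.filter (fun c => f c = 1)).card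
      + (univ.filter (fun c => f c = 0)).card = n := by
    have h := Finset.card_filter_add_card_filter_not
      (s := (univ : Finset (Fin n))) (fun c => f c = 1)
    rw [Finset.card_fin] at h
    have h2 : (univ.filter (fun c => ¬ f c = 1)) = (univ.filter (fun c => f c = 0)) := by
      apply Finset.filter_congr
      intro c _
      rcases f2_cases (f c) with h' | h' <;> simp [h']
    rw [h2] at h
    omega
  have hcard_f0 : (univ.filter (fun c => f c = 0)).card = n - n / 2 := by omega
  -- a column with f = 0 and one with f = 1
  have hex1 : ∃ c, f c = 1 := by
    have : (univ.filter (fun c => f c = 1)).Nonempty := by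
      rw [← Finset.card_pos, hcard_f1]; omega
    obtain ⟨c, hc⟩ := this
    exact ⟨c, (Finset.mem_filter.1 hc).2⟩
  have hex0 : ∃ c, f c = 0 := by
    have : (univ.filter (fun c => f c = 0)).Nonempty := by
      rw [← Finset.card_pos, hcard_f0]; omega
    obtain ⟨c, hc⟩ := this
    exact ⟨c, (Finset.mem_filter.1 hc).2⟩
  obtain ⟨cc1, hcc1⟩ := hex1
  obtain ⟨cc0, hcc0⟩ := hex0
  have hcard_e0 : (univ.filter (fun r => ε r = 0)).card = n / 2 := by
    rw [← hcolcard cc1]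
    refine congrArg Finset.card (Finset.filter_congr ?_)
    intro r _
    rw [K r cc1, hcc1]
    rcases f2_cases (ε r) with h' | h' <;> simp [h']
  have hcard_e1 : (univ.filter (fun r => ε r = 1)).card = n / 2 := by
    rw [← hcolcard cc0]
    refine congrArg Finset.card (Finset.filter_congr ?_)
    intro r _
    rw [K r cc0, hcc0]
    rcases f2_cases (ε r) with h' | h' <;> simp [h']
  have hsplite : (univ.filter (fun r => ε r = 0)).card
      + (univ.filter (fun r => ε r = 1)).card = n := by
    have h := Finset.card_filter_add_card_filter_not
      (s := (univ : Finset (Fin n))) (fun r => ε r = 0)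
    rw [Finset.card_fin] at h
    have h2 : (univ.filter (fun r => ¬ ε r = 0)) = (univ.filter (fun r => ε r = 1)) := by
      apply Finset.filter_congr
      intro r _
      rcases f2_cases (ε r) with h' | h' <;> simp [h']
    rw [h2] at h
    omega
  have heven : n / 2 + n / 2 = n := by omega
  have hcard_f0' : (univ.filter (fun c => f c = 0)).card = n / 2 := by omega
  refine ⟨((univ.filter (fun r => ε r = 0)) ×ˢ (univ.filter (fun r => ε r = 1)) ×ˢ
      (univ.filter (fun c => f c = 0)) ×ˢ (univ.filter (fun c => f c = 1))).image
      (fun t => {(t.1, t.2.2.1), (t.1, t.2.2.2), (t.2.1, t.2.2.1), (t.2.1, t.2.2.2)}),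
    ?_, ?_⟩
  · rw [Finset.card_image_of_injOn]
    · rw [Finset.card_product, Finset.card_product, Finset.card_product,
        hcard_e0, hcard_e1, hcard_f0', hcard_f1]
      apply le_of_eq
      ring
    · rintro ⟨a0, a1, b0, b1⟩ ht ⟨a0', a1', b0', b1'⟩ ht' hgt
      simp only [Finset.coe_product, Set.mem_prod, Finset.mem_coe, Finset.mem_filter,
        Finset.mem_univ, true_and] at ht ht'
      obtain ⟨he0, he1, hb0, hb1⟩ := ht
      obtain ⟨he0', he1', hb0', hb1'⟩ := ht'
      simp only at hgt
      have h1 : ((a0, b1) : Fin n × Fin n) ∈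
          ({(a0', b0'), (a0', b1'), (a1', b0'), (a1', b1')} : Finset (Fin n × Fin n)) := by
        rw [← hgt]; simp
      have h2 : ((a1, b0) : Fin n × Fin n) ∈
          ({(a0', b0'), (a0', b1'), (a1', b0'), (a1', b1')} : Finset (Fin n × Fin n)) := by
        rw [← hgt]; simp
      simp only [Finset.mem_insert, Finset.mem_singleton, Prod.mk.injEq] at h1 h2
      rcases h1 with ⟨h, h'⟩ | ⟨h, h'⟩ | ⟨h, h'⟩ | ⟨h, h'⟩
      · rw [h'] at hb1; rw [hb0'] at hb1; exact absurd hb1 (by decide)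
      · rcases h2 with ⟨g, g'⟩ | ⟨g, g'⟩ | ⟨g, g'⟩ | ⟨g, g'⟩
        · rw [g] at he1; rw [he0'] at he1; exact absurd he1 (by decide)
        · rw [g] at he1; rw [he0'] at he1; exact absurd he1 (by decide)
        · simp [Prod.ext_iff, h, h', g, g']
        · rw [g'] at hb0; rw [hb1'] at hb0; exact absurd hb0 (by decide)
      · rw [h] at he0; rw [he1'] at he0; exact absurd he0 (by decide)
      · rw [h] at he0; rw [he1'] at he0; exact absurd he0 (by decide)
  · intro Cs hCs
    rw [Finset.mem_image] at hCs
    obtain ⟨t, htS, rfl⟩ := hCs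
    obtain ⟨a0, a1, b0, b1⟩ := t
    simp only [Finset.mem_product, Finset.mem_filter, Finset.mem_univ, true_and] at htS
    obtain ⟨he0, he1, hb0, hb1⟩ := htS
    obtain ⟨r2, hr2mem, hr2ne⟩ := Finset.exists_mem_ne
      (s := univ.filter (fun r => ε r = 0)) (by rw [hcard_e0]; omega) a0
    rw [Finset.mem_filter] at hr2mem
    exact aux_main n k hn hk F hmofs hrows f ε K a0 a1 b0 b1 he0 he1 hb0 hb1 r2 hr2ne hr2mem.2
end
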